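/- arXiv:2505.08951 — 8 statements merged into one kernel-verified Lean document; each statement's English description precedes it below -/
import Mathlib

section
/- For all integers m ≥ 1 and n ≥ 2 there exists a partition Π of the vertex set of the Hamming graph H(n,m) into m parts with maximum degree Δ(Π) ≤ 1 and imbalance ι(Π) ≥ m−2 if m is even, and ι(Π) ≥ m−1 if m is odd. -/
open Finset

/-- The degree of vertex `x` in the subgraph of the Hamming graph `H(n,m)` induced on `S`:
the number of `y ∈ S` at Hamming distance exactly `1` from `x`. -/
def degIn {n m : ℕ} (S : Finset (Fin n → Fin m)) (x : Fin n → Fin m) : ℕ :=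
  (S.filter fun y => hammingDist x y = 1).card

/-- `V` is a partition of the vertex set of `H(n,m)` into `m` (possibly empty) parts. -/
def IsHamPartition {n m : ℕ} (V : Fin m → Finset (Fin n → Fin m)) : Prop :=
  (Pairwise fun i j => Disjoint (V i) (V j)) ∧ ∀ x, ∃ i, x ∈ V i

/-- The imbalance `ι(Π) = ∑ i, | |V i| - m^(n-1) |` of a partition of `H(n,m)`. -/
def imbalance {n m : ℕ} (V : Fin m → Finset (Fin n → Fin m)) : ℤ :=
  ∑ i, |((V i).card : ℤ) - (m : ℤ) ^ (n - 1)|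

namespace ImbAux

variable {m : ℕ}

open Fin.CommRing

/-- Sum of coordinates of a vertex of the Hamming graph. -/
def sig {d : ℕ} (x : Fin d → Fin (m + 1)) : Fin (m + 1) := ∑ i, x i

/-- Level count of a set: number of its elements with coordinate sum `c`. -/
def lvl {d : ℕ} (R : Finset (Fin d → Fin (m + 1))) (c : Fin (m + 1)) : ℕ :=
  (R.filter fun x => sig x = c).card

/-- Up-good sets: the boundary of upward unit shifts forms a matching. -/
def upGood {d : ℕ} (R : Finset (Fin d → Fin (m + 1))) : Prop :=
  (∀ y ∈ R, (univ.filter fun j => Function.update y j (y j + 1) ∉ R).card ≤ 1) ∧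
  (∀ x ∉ R, (univ.filter fun j => Function.update x j (x j - 1) ∈ R).card ≤ 1)

/-- Total cyclic variation of the level sequence. -/
def Dvar {d : ℕ} (R : Finset (Fin d → Fin (m + 1))) : ℤ :=
  ∑ c : Fin (m + 1), |(lvl R c : ℤ) - (lvl R (c - 1) : ℤ)|

lemma card_sig (d : ℕ) (c : Fin (m + 1)) :
    (univ.filter fun x : Fin (d + 1) → Fin (m + 1) => sig x = c).card = (m + 1) ^ d := by
  have : (univ.filter fun x : Fin (d + 1) → Fin (m + 1) => sig x = c).card
      = (univ : Finset (Fin d → Fin (m + 1))).card := by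
    apply Finset.card_nbij' (fun x => Fin.tail x)
      (fun t => Fin.cons (c - ∑ i, t i) t)
    · intro a _; exact mem_univ _
    · intro t _
      refine Finset.mem_filter.mpr ⟨mem_univ _, ?_⟩
      simp only [mem_coe, mem_filter, mem_univ, true_and, sig, Fin.sum_cons]
      ring
    · intro x hx
      simp only [mem_coe, mem_filter, mem_univ, true_and, sig, Fin.sum_univ_succ] at hx
      have h0 : x 0 = c - ∑ i, Fin.tail x i := by
        rw [← hx]; simp [Fin.tail]
      beta_reduce; rw [← h0, Fin.cons_self_tail]
    · intro t _; simp [Fin.tail_cons]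
  rw [this]
  simp [Fintype.card_fun]

lemma card_head (d : ℕ) (c a : Fin (m + 1)) (P : (Fin (d + 1) → Fin (m + 1)) → Prop)
    [DecidablePred P] :
    (univ.filter fun x : Fin (d + 2) → Fin (m + 1) =>
        sig x = c ∧ x 0 = a ∧ P (fun i => -(x i.succ))).card
    = (univ.filter fun y : Fin (d + 1) → Fin (m + 1) => sig y = a - c ∧ P y).card := by
  apply Finset.card_nbij' (fun x => fun i => -(x i.succ))
    (fun y => Fin.cons a (fun i => -(y i)))
  · intro x hx
    simp only [mem_coe, mem_filter, mem_univ, true_and, sig, Fin.sum_univ_succ] at hx ⊢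
    obtain ⟨hs, h0, hP⟩ := hx
    refine ⟨?_, hP⟩
    rw [Finset.sum_neg_distrib]
    rw [h0] at hs
    rw [← hs]; ring
  · intro y hy
    simp only [mem_coe, mem_filter, mem_univ, true_and, sig, Fin.sum_univ_succ, Fin.cons_zero,
      Fin.cons_succ] at hy ⊢
    obtain ⟨hs, hP⟩ := hy
    have hn : ∑ x : Fin d, -y x.succ = -∑ x : Fin d, y x.succ := Finset.sum_neg_distrib _
    exact ⟨by linear_combination -hs + hn, by simpa using hP⟩
  · intro x hx
    simp only [mem_coe, mem_filter, mem_univ, true_and] at hx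
    funext i
    refine Fin.cases ?_ ?_ i
    · simp [hx.2.1]
    · intro j; simp
  · intro y _; funext i; simp

def RR : (k : ℕ) → Finset (Fin (k + 1) → Fin (m + 1))
  | 0 => univ.filter fun x => (x 0).val % 2 = 0 ∧ (x 0).val ≠ m
  | (k + 1) => univ.filter fun x =>
      x 0 ≠ 0 ∧ ¬(x 0 = 1 ∧ (fun i => -(x i.succ)) ∈ RR k)

lemma mem_RR_succ (k : ℕ) (x : Fin (k + 2) → Fin (m + 1)) :
    x ∈ RR (k + 1) ↔ x 0 ≠ 0 ∧ ¬(x 0 = 1 ∧ (fun i => -(x i.succ)) ∈ RR k) := by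
  simp only [RR, mem_filter, mem_univ, true_and]

lemma nt_update_succ {d : ℕ} (y : Fin (d + 2) → Fin (m + 1)) (i : Fin (d + 1)) (v : Fin (m + 1)) :
    (fun i' => -(Function.update y i.succ v i'.succ))
      = Function.update (fun i' => -(y i'.succ)) i (-v) := by
  funext i'
  rcases eq_or_ne i' i with rfl | h
  · simp
  · rw [Function.update_of_ne h, Function.update_of_ne ((Fin.succ_injective _).ne h)]

lemma upGood_RR (hm : 2 ≤ m) : ∀ k, upGood (RR (m := m) k) := by
  have e1 : 1 % (m + 1) = 1 := Nat.mod_eq_of_lt (by omega)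
  have e2 : 2 % (m + 1) = 2 := Nat.mod_eq_of_lt (by omega)
  have hv1 : (1 : Fin (m + 1)).val = 1 := by rw [Fin.val_one', e1]
  have hv2 : ((1 : Fin (m + 1)) + 1).val = 2 := by rw [Fin.val_add, hv1, e2]
  have h10 : (1 : Fin (m + 1)) ≠ 0 := by
    simp only [ne_eq, Fin.ext_iff, hv1, Fin.val_zero]; omega
  have h20 : (1 : Fin (m + 1)) + 1 ≠ 0 := by
    simp only [ne_eq, Fin.ext_iff, hv2, Fin.val_zero]; omega
  have h21 : (1 : Fin (m + 1)) + 1 ≠ 1 := by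
    simp only [ne_eq, Fin.ext_iff, hv2, hv1]; omega
  intro k
  induction k with
  | zero =>
    constructor <;>
      · intro x _
        exact (card_filter_le _ _).trans (by simp)
  | succ k ih =>
    constructor
    · -- first condition
      intro y hy
      rw [mem_RR_succ] at hy
      obtain ⟨hy0, hy1⟩ := hy
      by_cases hc : y 0 = 1
      · have hnt : (fun i => -(y i.succ)) ∉ RR k := fun h => hy1 ⟨hc, h⟩
        have hsub : (univ.filter fun j => Function.update y j (y j + 1) ∉ RR (k + 1)) ⊆
            ((univ.filter fun i => Function.update (fun i' => -(y i'.succ)) i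
              ((fun i' => -(y i'.succ)) i - 1) ∈ RR k).image Fin.succ) := by
          intro j hj
          simp only [mem_filter, mem_univ, true_and] at hj
          rcases Fin.eq_zero_or_eq_succ j with rfl | ⟨i, rfl⟩
          · exfalso
            apply hj
            rw [mem_RR_succ]
            rw [Function.update_self, hc]
            exact ⟨h20, fun h => h21 h.1⟩
          · have hhead : Function.update y i.succ (y i.succ + 1) 0 = y 0 :=
              Function.update_of_ne (Fin.succ_ne_zero i).symm _ _
            have hntu : (fun i' => -(Function.update y i.succ (y i.succ + 1) i'.succ))
                = Function.update (fun i' => -(y i'.succ)) i ((fun i' => -(y i'.succ)) i - 1) := by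
              have hval : -(y i.succ + 1) = (fun i' => -(y i'.succ)) i - 1 := by simp; ring
              rw [nt_update_succ, hval]
            rw [mem_RR_succ, hhead, hntu, hc] at hj
            push_neg at hj
            have hmem := (hj h10).2
            exact mem_image_of_mem _ (by simpa using hmem)
        refine ((card_le_card hsub).trans card_image_le).trans ?_
        exact ih.2 _ hnt
      · -- y 0 ∉ {0, 1}
        have hsub : (univ.filter fun j => Function.update y j (y j + 1) ∉ RR (k + 1)) ⊆
            {(0 : Fin (k + 2))} := by
          intro j hj
          simp only [mem_filter, mem_univ, true_and] at hj
          rcases Fin.eq_zero_or_eq_succ j with rfl | ⟨i, rfl⟩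
          · exact mem_singleton_self 0
          · exfalso
            apply hj
            rw [mem_RR_succ]
            have hhead : Function.update y i.succ (y i.succ + 1) 0 = y 0 :=
              Function.update_of_ne (Fin.succ_ne_zero i).symm _ _
            rw [hhead]
            exact ⟨hy0, fun h => hc h.1⟩
        exact (card_le_card hsub).trans (by simp)
    · -- second condition
      intro x hx
      rw [mem_RR_succ] at hx
      push_neg at hx
      by_cases hx0 : x 0 = 0
      · have hsub : (univ.filter fun j => Function.update x j (x j - 1) ∈ RR (k + 1)) ⊆
            {(0 : Fin (k + 2))} := by
          intro j hj
          simp only [mem_filter, mem_univ, true_and] at hj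
          rcases Fin.eq_zero_or_eq_succ j with rfl | ⟨i, rfl⟩
          · exact mem_singleton_self 0
          · exfalso
            rw [mem_RR_succ] at hj
            have hhead : Function.update x i.succ (x i.succ - 1) 0 = x 0 :=
              Function.update_of_ne (Fin.succ_ne_zero i).symm _ _
            rw [hhead] at hj
            exact hj.1 hx0
        exact (card_le_card hsub).trans (by simp)
      · obtain ⟨hx1, hnts⟩ := hx hx0
        have hsub : (univ.filter fun j => Function.update x j (x j - 1) ∈ RR (k + 1)) ⊆
            ((univ.filter fun i => Function.update (fun i' => -(x i'.succ)) i
              ((fun i' => -(x i'.succ)) i + 1) ∉ RR k).image Fin.succ) := by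
          intro j hj
          simp only [mem_filter, mem_univ, true_and] at hj
          rcases Fin.eq_zero_or_eq_succ j with rfl | ⟨i, rfl⟩
          · exfalso
            rw [mem_RR_succ, Function.update_self, hx1] at hj
            exact hj.1 (by ring)
          · rw [mem_RR_succ] at hj
            have hhead : Function.update x i.succ (x i.succ - 1) 0 = x 0 :=
              Function.update_of_ne (Fin.succ_ne_zero i).symm _ _
            have hntu : (fun i' => -(Function.update x i.succ (x i.succ - 1) i'.succ))
                = Function.update (fun i' => -(x i'.succ)) i ((fun i' => -(x i'.succ)) i + 1) := by
              have hval : -(x i.succ - 1) = (fun i' => -(x i'.succ)) i + 1 := by simp; ring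
              rw [nt_update_succ, hval]
            rw [hhead, hntu] at hj
            have hmem : Function.update (fun i' => -(x i'.succ)) i
                ((fun i' => -(x i'.succ)) i + 1) ∉ RR k := fun h => hj.2 ⟨hx1, h⟩
            exact mem_image_of_mem _ (by simpa using hmem)
        refine ((card_le_card hsub).trans card_image_le).trans ?_
        exact ih.1 _ hnts

lemma lvl_eq {d : ℕ} (R : Finset (Fin d → Fin (m + 1))) (c : Fin (m + 1)) :
    lvl R c = (univ.filter fun x => sig x = c ∧ x ∈ R).card := by
  rw [lvl]
  congr 1
  ext x
  simp [mem_filter, and_comm]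

lemma lvl_RR_succ (hm : 1 ≤ m) (k : ℕ) (c : Fin (m + 1)) :
    lvl (RR (m := m) (k + 1)) c + ((m + 1) ^ k + lvl (RR k) (1 - c)) = (m + 1) ^ (k + 1) := by
  have h10 : (1 : Fin (m + 1)) ≠ 0 := by
    simp only [ne_eq, Fin.ext_iff, Fin.val_one', Fin.val_zero]
    rw [Nat.mod_eq_of_lt (by omega)]
    omega
  classical
  have hsplit : (univ.filter fun x : Fin (k + 2) → Fin (m + 1) =>
        sig x = c ∧ x ∈ RR (k + 1)).card
      + (univ.filter fun x : Fin (k + 2) → Fin (m + 1) =>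
        sig x = c ∧ x ∉ RR (k + 1)).card = (m + 1) ^ (k + 1) := by
    have h := Finset.card_filter_add_card_filter_not
      (s := univ.filter fun x : Fin (k + 2) → Fin (m + 1) => sig x = c)
      (p := fun x => x ∈ RR (k + 1))
    simp only [filter_filter] at h
    rw [card_sig] at h
    convert h using 3
  have hmem : ∀ x : Fin (k + 2) → Fin (m + 1),
      (x ∉ RR (k + 1)) ↔ (x 0 = 0 ∨ (x 0 = 1 ∧ (fun i => -(x i.succ)) ∈ RR k)) := by
    intro x
    rw [show (x ∈ RR (k+1)) ↔ _ from by simp only [RR, mem_filter, mem_univ, true_and]; rfl]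
    push_neg
    constructor
    · intro h
      by_cases h0 : x 0 = 0
      · exact Or.inl h0
      · exact Or.inr (h h0)
    · rintro (h0 | h1)
      · exact fun h => absurd h0 h
      · exact fun _ => h1
  have hsetsplit : (univ.filter fun x : Fin (k + 2) → Fin (m + 1) =>
        sig x = c ∧ x ∉ RR (k + 1)).card
      = (univ.filter fun x : Fin (k + 2) → Fin (m + 1) =>
          sig x = c ∧ x 0 = 0 ∧ (fun _ : Fin (k + 1) → Fin (m + 1) => True) (fun i => -(x i.succ))).card
        + (univ.filter fun x : Fin (k + 2) → Fin (m + 1) =>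
          sig x = c ∧ x 0 = 1 ∧ (fun y => y ∈ RR k) (fun i => -(x i.succ))).card := by
    rw [← card_union_of_disjoint]
    · congr 1
      ext x
      simp only [mem_filter, mem_univ, true_and, mem_union, hmem x]
      tauto
    · rw [Finset.disjoint_left]
      rintro x hx hx'
      simp only [mem_filter, mem_univ, true_and] at hx hx'
      exact h10 (hx'.2.1 ▸ hx.2.1)
  have hA := card_head (m := m) k c 0 (fun _ : Fin (k + 1) → Fin (m + 1) => True)
  have hB := card_head (m := m) k c 1 (fun y : Fin (k + 1) → Fin (m + 1) => y ∈ RR k)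
  simp only [hA, hB] at hsetsplit
  have hT : (univ.filter fun y : Fin (k + 1) → Fin (m + 1) => sig y = 0 - c ∧
      (fun _ : Fin (k + 1) → Fin (m + 1) => True) y).card = (m + 1) ^ k := by
    rw [← card_sig k (0 - c)]
    congr 1
    ext y
    simp
  rw [hT] at hsetsplit
  have hL : (univ.filter fun y : Fin (k + 1) → Fin (m + 1) => sig y = 1 - c ∧
      (fun z => z ∈ RR k) y).card = lvl (RR k) (1 - c) := by
    rw [lvl_eq]
  rw [hL] at hsetsplit
  rw [lvl_eq]
  linarith [hsplit, hsetsplit]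

lemma lvl_RR_succ_int (hm : 1 ≤ m) (k : ℕ) (c : Fin (m + 1)) :
    (lvl (RR (m := m) (k + 1)) c : ℤ)
      = ((m : ℤ) + 1) ^ (k + 1) - ((m : ℤ) + 1) ^ k - (lvl (RR k) (1 - c) : ℤ) := by
  have h := lvl_RR_succ hm k c
  have := congrArg (fun t : ℕ => (t : ℤ)) h
  push_cast at this
  linarith

lemma Dvar_RR_succ (hm : 1 ≤ m) (k : ℕ) :
    Dvar (RR (m := m) (k + 1)) = Dvar (RR (m := m) k) := by
  unfold Dvar
  have hterm : ∀ c : Fin (m + 1),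
      |(lvl (RR (m := m) (k + 1)) c : ℤ) - (lvl (RR (k + 1)) (c - 1) : ℤ)|
        = |(lvl (RR (m := m) k) (2 - c) : ℤ) - (lvl (RR k) ((2 - c) - 1) : ℤ)| := by
    intro c
    rw [lvl_RR_succ_int hm k c, lvl_RR_succ_int hm k (c - 1)]
    have h1 : (1 : Fin (m + 1)) - (c - 1) = 2 - c := by ring
    have h2 : (2 : Fin (m + 1)) - c - 1 = 1 - c := by ring
    rw [h1, h2]
    congr 1
    ring
  rw [Finset.sum_congr rfl (fun c _ => hterm c)]
  exact Fintype.sum_equiv (Equiv.subLeft (2 : Fin (m + 1)))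
    _ _ (fun c => rfl)

lemma lvl_RR_zero (c : Fin (m + 1)) :
    lvl (RR (m := m) 0) c = if (c.val % 2 = 0 ∧ c.val ≠ m) then 1 else 0 := by
  have hx0 : ∀ x : Fin 1 → Fin (m + 1), sig x = x 0 := by
    intro x
    simp [sig]
  by_cases h : (c.val % 2 = 0 ∧ c.val ≠ m)
  · rw [if_pos h, lvl, card_eq_one]
    refine ⟨fun _ => c, ?_⟩
    ext x
    simp only [RR, mem_filter, mem_univ, true_and, hx0, mem_singleton]
    constructor
    · rintro ⟨-, h2⟩
      funext i
      rw [Fin.fin_one_eq_zero i, h2]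
    · rintro rfl
      exact ⟨h, rfl⟩
  · rw [if_neg h, lvl, card_eq_zero]
    ext x
    simp only [RR, mem_filter, mem_univ, true_and, hx0, notMem_empty, iff_false]
    rintro ⟨h1, h2⟩
    exact h (h2 ▸ h1)

lemma Dvar_RR_zero_ge (hm : 1 ≤ m) : (m : ℤ) ≤ Dvar (RR (m := m) 0) := by
  have hlast : (m : ℕ) < m + 1 := by omega
  set lastc : Fin (m + 1) := ⟨m, hlast⟩ with hlastc
  have hterm : ∀ c : Fin (m + 1), c ≠ lastc →
      |(lvl (RR (m := m) 0) c : ℤ) - (lvl (RR 0) (c - 1) : ℤ)| = 1 := by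
    intro c hc
    have hcv : c.val ≠ m := fun h => hc (Fin.ext h)
    have hsub : (c - 1).val = if c = 0 then m else c.val - 1 := Fin.coe_sub_one c
    rw [lvl_RR_zero, lvl_RR_zero]
    by_cases hc0 : c = 0
    · have h1 : (c.val % 2 = 0 ∧ c.val ≠ m) := by
        subst hc0
        exact ⟨by simp, hcv⟩
      have h2 : ¬((c - 1).val % 2 = 0 ∧ (c - 1).val ≠ m) := by
        rw [hsub, if_pos hc0]
        rintro ⟨-, hh⟩
        exact hh rfl
      rw [if_pos h1, if_neg h2]
      norm_num
    · have hsub' : (c - 1).val = c.val - 1 := by rw [hsub, if_neg hc0]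
      have hcv0 : c.val ≠ 0 := fun hh => hc0 (Fin.ext (by simpa using hh))
      have hclt : c.val < m + 1 := c.isLt
      by_cases hpar : c.val % 2 = 0
      · rw [if_pos ⟨hpar, hcv⟩, if_neg (by rw [hsub']; omega)]
        norm_num
      · rw [if_neg (fun hh => hpar hh.1), if_pos (by rw [hsub']; exact ⟨by omega, by omega⟩)]
        norm_num
  have hsubset : univ.erase lastc ⊆ univ := erase_subset _ _
  have hge : ∑ c ∈ univ.erase lastc,
      |(lvl (RR (m := m) 0) c : ℤ) - (lvl (RR 0) (c - 1) : ℤ)| ≤ Dvar (RR (m := m) 0) := by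
    apply Finset.sum_le_sum_of_subset_of_nonneg hsubset
    intro c _ _
    exact abs_nonneg _
  have heq : ∑ c ∈ univ.erase lastc,
      |(lvl (RR (m := m) 0) c : ℤ) - (lvl (RR 0) (c - 1) : ℤ)| = m := by
    rw [Finset.sum_congr rfl (fun c hc => hterm c (Finset.ne_of_mem_erase hc))]
    rw [Finset.sum_const, Finset.card_erase_of_mem (mem_univ _), Finset.card_univ]
    simp
  linarith

lemma Dvar_RR_ge (hm : 1 ≤ m) (k : ℕ) : (m : ℤ) ≤ Dvar (RR (m := m) k) := by
  induction k with
  | zero => exact Dvar_RR_zero_ge hm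
  | succ k ih => rw [Dvar_RR_succ hm k]; exact ih

lemma main_construct (n : ℕ) (R : Finset (Fin (n + 1) → Fin (m + 1))) (hR : upGood R) :
    ∃ V : Fin (m + 1) → Finset (Fin (n + 1) → Fin (m + 1)), IsHamPartition V ∧
      (∀ i, ∀ x ∈ V i, degIn (V i) x ≤ 1) ∧
      imbalance V = Dvar R := by
  classical
  set col : (Fin (n + 1) → Fin (m + 1)) → Fin (m + 1) :=
    fun x => sig x + (if x ∈ R then 1 else 0) with hcol
  refine ⟨fun i => univ.filter fun x => col x = i, ⟨?_, ?_⟩, ?_, ?_⟩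
  · -- pairwise disjoint
    intro i j hij
    rw [Finset.disjoint_left]
    intro y hy hy'
    simp only [mem_filter, mem_univ, true_and] at hy hy'
    exact hij (hy ▸ hy')
  · -- cover
    intro x
    exact ⟨col x, by simp⟩
  · -- degrees
    intro i x hx
    simp only [mem_filter, mem_univ, true_and] at hx
    rw [degIn]
    -- key: analyze the conflict set
    by_cases hxR : x ∈ R
    · have hsub : ((univ.filter fun y => col y = i).filter fun y => hammingDist x y = 1) ⊆
          ((univ.filter fun j => Function.update x j (x j + 1) ∉ R).image
            fun j => Function.update x j (x j + 1)) := by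
        intro y hy
        simp only [mem_filter, mem_univ, true_and] at hy
        obtain ⟨hcoly, hdist⟩ := hy
        rw [hammingDist] at hdist
        obtain ⟨j, hj⟩ := card_eq_one.mp hdist
        have hxyj : x j ≠ y j := by
          have : j ∈ ({i | x i ≠ y i} : Finset _) := hj ▸ mem_singleton_self j
          simpa using this
        have hagree : ∀ i', i' ≠ j → x i' = y i' := by
          intro i' hi'
          by_contra hne
          have : i' ∈ ({i | x i ≠ y i} : Finset _) := by simpa using hne
          rw [hj, mem_singleton] at this
          exact hi' this
        have hyu : y = Function.update x j (y j) := by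
          funext i'
          rcases eq_or_ne i' j with rfl | h
          · simp
          · rw [Function.update_of_ne h]
            exact (hagree i' h).symm
        have hsig : sig y + x j = sig x + y j := by
          have h1 : sig y = y j + ∑ i' ∈ univ.erase j, y i' :=
            (Finset.add_sum_erase univ y (mem_univ j)).symm
          have h2 : sig x = x j + ∑ i' ∈ univ.erase j, x i' :=
            (Finset.add_sum_erase univ x (mem_univ j)).symm
          have h3 : ∑ i' ∈ univ.erase j, y i' = ∑ i' ∈ univ.erase j, x i' := by
            apply Finset.sum_congr rfl
            intro i' hi'
            exact (hagree i' (Finset.ne_of_mem_erase hi')).symm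
          rw [h1, h2, h3]
          ring
        have hc : sig y + (if y ∈ R then 1 else 0) = sig x + (if x ∈ R then 1 else 0) := by
          have h0 : col y = col x := by rw [hcoly, ← hx]
          rw [hcol] at h0
          exact h0
        rw [if_pos hxR] at hc
        by_cases hyR : y ∈ R
        · exfalso
          rw [if_pos hyR] at hc
          exact hxyj (show x j = y j by linear_combination hsig - hc)
        · rw [if_neg hyR] at hc
          have hyj : y j = x j + 1 := by linear_combination hc - hsig
          have hyu' : y = Function.update x j (x j + 1) := by rw [hyu, hyj]
          rw [hyu']
          refine mem_image_of_mem _ ?_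
          simp only [mem_filter, mem_univ, true_and]
          rw [← hyu']
          exact hyR
      calc ((univ.filter fun y => col y = i).filter fun y => hammingDist x y = 1).card
          ≤ _ := card_le_card hsub
        _ ≤ _ := card_image_le
        _ ≤ 1 := hR.1 x hxR
    · have hsub : ((univ.filter fun y => col y = i).filter fun y => hammingDist x y = 1) ⊆
          ((univ.filter fun j => Function.update x j (x j - 1) ∈ R).image
            fun j => Function.update x j (x j - 1)) := by
        intro y hy
        simp only [mem_filter, mem_univ, true_and] at hy
        obtain ⟨hcoly, hdist⟩ := hy
        rw [hammingDist] at hdist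
        obtain ⟨j, hj⟩ := card_eq_one.mp hdist
        have hxyj : x j ≠ y j := by
          have : j ∈ ({i | x i ≠ y i} : Finset _) := hj ▸ mem_singleton_self j
          simpa using this
        have hagree : ∀ i', i' ≠ j → x i' = y i' := by
          intro i' hi'
          by_contra hne
          have : i' ∈ ({i | x i ≠ y i} : Finset _) := by simpa using hne
          rw [hj, mem_singleton] at this
          exact hi' this
        have hyu : y = Function.update x j (y j) := by
          funext i'
          rcases eq_or_ne i' j with rfl | h
          · simp
          · rw [Function.update_of_ne h]
            exact (hagree i' h).symm
        have hsig : sig y + x j = sig x + y j := by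
          have h1 : sig y = y j + ∑ i' ∈ univ.erase j, y i' :=
            (Finset.add_sum_erase univ y (mem_univ j)).symm
          have h2 : sig x = x j + ∑ i' ∈ univ.erase j, x i' :=
            (Finset.add_sum_erase univ x (mem_univ j)).symm
          have h3 : ∑ i' ∈ univ.erase j, y i' = ∑ i' ∈ univ.erase j, x i' := by
            apply Finset.sum_congr rfl
            intro i' hi'
            exact (hagree i' (Finset.ne_of_mem_erase hi')).symm
          rw [h1, h2, h3]
          ring
        have hc : sig y + (if y ∈ R then 1 else 0) = sig x + (if x ∈ R then 1 else 0) := by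
          have h0 : col y = col x := by rw [hcoly, ← hx]
          rw [hcol] at h0
          exact h0
        rw [if_neg hxR] at hc
        by_cases hyR : y ∈ R
        · rw [if_pos hyR] at hc
          have hyj : y j = x j - 1 := by linear_combination hc - hsig
          have hyu' : y = Function.update x j (x j - 1) := by rw [hyu, hyj]
          rw [hyu']
          refine mem_image_of_mem _ ?_
          simp only [mem_filter, mem_univ, true_and]
          rw [← hyu']
          exact hyR
        · exfalso
          rw [if_neg hyR] at hc
          exact hxyj (show x j = y j by linear_combination hsig - hc)
      calc ((univ.filter fun y => col y = i).filter fun y => hammingDist x y = 1).card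
          ≤ _ := card_le_card hsub
        _ ≤ _ := card_image_le
        _ ≤ 1 := hR.2 x hxR
  · -- imbalance
    have hsize : ∀ c : Fin (m + 1),
        ((univ.filter fun x => col x = c).card : ℤ)
          = (m + 1) ^ n - lvl R c + lvl R (c - 1) := by
      intro c
      have hsplitc : (univ.filter fun x => col x = c)
          = (univ.filter fun x => sig x = c ∧ x ∉ R)
            ∪ (univ.filter fun x => sig x = c - 1 ∧ x ∈ R) := by
        ext x
        simp only [mem_filter, mem_univ, true_and, mem_union, hcol]
        by_cases hxR : x ∈ R
        · rw [if_pos hxR]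
          simp only [hxR, not_true_eq_false, and_false, and_true, false_or]
          constructor
          · intro h
            linear_combination h
          · intro h
            linear_combination h
        · rw [if_neg hxR]
          simp only [hxR, not_false_eq_true, and_true, and_false, or_false, add_zero]
      have hdisj : Disjoint (univ.filter fun x => sig x = c ∧ x ∉ R)
          (univ.filter fun x => sig x = c - 1 ∧ x ∈ R) := by
        rw [Finset.disjoint_left]
        intro a ha ha'
        simp only [mem_filter, mem_univ, true_and] at ha ha'
        exact ha.2 ha'.2
      have hcompl : (univ.filter fun x => sig x = c ∧ x ∉ R).card + lvl R c
          = (m + 1) ^ n := by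
        rw [lvl_eq, ← card_sig n c]
        rw [add_comm]
        have := Finset.card_filter_add_card_filter_not
          (s := univ.filter fun x : Fin (n + 1) → Fin (m + 1) => sig x = c)
          (p := fun x => x ∈ R)
        simp only [filter_filter] at this
        convert this using 3
      have hlvl2 : (univ.filter fun x => sig x = c - 1 ∧ x ∈ R).card = lvl R (c - 1) :=
        (lvl_eq R (c - 1)).symm
      rw [hsplitc, card_union_of_disjoint hdisj, hlvl2]
      push_cast
      have : ((univ.filter fun x => sig x = c ∧ x ∉ R).card : ℤ) = (m + 1) ^ n - lvl R c := by
        have := congrArg (fun t : ℕ => (t : ℤ)) hcompl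
        push_cast at this
        linarith
      rw [this]
    rw [imbalance]
    have hexp : ((m : ℕ) + 1 : ℤ) ^ (n + 1 - 1) = ((m : ℤ) + 1) ^ n := by norm_num
    rw [Dvar]
    apply Finset.sum_congr rfl
    intro c _
    rw [hsize c]
    push_cast
    have h9 : ((m : ℤ) + 1) ^ n - ↑(lvl R c) + ↑(lvl R (c - 1)) - ((m : ℤ) + 1) ^ n
        = (lvl R (c - 1) : ℤ) - (lvl R c : ℤ) := by
      ring
    rw [h9]
    exact abs_sub_comm _ _

end ImbAux

/-- For all integers `m ≥ 1` and `n ≥ 2` there exists a partition `Π` of `H(n,m)` into `m`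
parts with maximum degree `Δ(Π) ≤ 1` and imbalance `ι(Π) ≥ m-2` if `m` is even and
`ι(Π) ≥ m-1` if `m` is odd. -/
theorem imbalanced_partitions_degree_one (m n : ℕ) (hm : 1 ≤ m) (hn : 2 ≤ n) :
    ∃ V : Fin m → Finset (Fin n → Fin m), IsHamPartition V ∧
      (∀ i, ∀ x ∈ V i, degIn (V i) x ≤ 1) ∧
      (if Even m then (m : ℤ) - 2 else (m : ℤ) - 1) ≤ imbalance V := by
  obtain ⟨m', rfl⟩ : ∃ k, m = k + 1 := ⟨m - 1, by omega⟩
  obtain ⟨n', rfl⟩ : ∃ k, n = k + 1 := ⟨n - 1, by omega⟩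
  by_cases hm2 : 2 ≤ m'
  · obtain ⟨V, hpart, hdeg, himb⟩ :=
      ImbAux.main_construct (m := m') n' (ImbAux.RR n') (ImbAux.upGood_RR hm2 n')
    refine ⟨V, hpart, hdeg, ?_⟩
    rw [himb]
    have hD := ImbAux.Dvar_RR_ge (m := m') (by omega) n'
    have hbound : (if Even (m' + 1) then ((m' + 1 : ℕ) : ℤ) - 2 else ((m' + 1 : ℕ) : ℤ) - 1)
        ≤ (m' : ℤ) := by
      split_ifs <;> push_cast <;> omega
    exact hbound.trans hD
  · have hupEmpty : ImbAux.upGood (m := m') (d := n' + 1) ∅ :=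
      ⟨fun y hy => absurd hy (notMem_empty y), fun x _ => by simp⟩
    obtain ⟨V, hpart, hdeg, himb⟩ := ImbAux.main_construct n' ∅ hupEmpty
    refine ⟨V, hpart, hdeg, ?_⟩
    rw [himb]
    have hzero : ImbAux.Dvar (m := m') (∅ : Finset (Fin (n' + 1) → Fin (m' + 1))) = 0 := by
      unfold ImbAux.Dvar ImbAux.lvl
      simp
    rw [hzero]
    interval_cases m' <;> norm_num
end

section
/- Let m ≥ 2 and n ≥ d ≥ 1 be integers, let 1 ≤ d' ≤ d and set n' = ⌈n / ⌊d/d'⌋⌉. If the Hamming graph H(n',m) admits a partition Π' of its vertex set into m parts with maximum degree Δ(Π') ≤ d' and imbalance ι(Π') ≥ i', then H(n,m) admits a partition Π of its vertex set into m parts with maximum degree Δ(Π) ≤ d and imbalance ι(Π) ≥ m^{n−n'}·i'. -/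
open Finset

section Aux
variable {m n n' : ℕ} [NeZero m]
open Fin.CommRing

def phiMap (b : Fin n → Fin n') (x : Fin n → Fin m) : Fin n' → Fin m :=
  fun j => ∑ t ∈ univ.filter (fun t => b t = j), x t

lemma phiMap_eq_of_eq_off {b : Fin n → Fin n'} {x y : Fin n → Fin m} {t : Fin n}
    (h : ∀ s, s ≠ t → y s = x s) (j : Fin n') :
    phiMap b y j = phiMap b x j + (if b t = j then y t - x t else 0) := by
  have hsub : phiMap b y j - phiMap b x j
      = ∑ s ∈ univ.filter (fun s => b s = j), (y s - x s) := (Finset.sum_sub_distrib y x).symm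
  by_cases hbt : b t = j
  · rw [if_pos hbt]
    refine sub_eq_iff_eq_add'.mp (hsub.trans ?_)
    refine Finset.sum_eq_single t (fun s _ hst => by rw [h s hst]; ring) ?_
    intro habs; exact absurd (by simp [hbt]) habs
  · rw [if_neg hbt, add_zero]
    refine sub_eq_zero.mp (hsub.trans ?_)
    refine Finset.sum_eq_zero fun s hs => ?_
    have hbs : b s = j := (mem_filter.mp hs).2
    have hst : s ≠ t := fun e => hbt (e ▸ hbs)
    rw [h s hst]; ring

omit [NeZero m] in
lemma hdist_one {x y : Fin n → Fin m} (h : hammingDist x y = 1) :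
    ∃ t : Fin n, y t ≠ x t ∧ (∀ s, s ≠ t → y s = x s) ∧
      (univ.filter fun s => x s ≠ y s) = {t} := by
  have h' : (univ.filter fun i => x i ≠ y i).card = 1 := h
  obtain ⟨t, ht⟩ := Finset.card_eq_one.mp h'
  refine ⟨t, ?_, ?_, ht⟩
  · have : t ∈ univ.filter fun i => x i ≠ y i := ht ▸ mem_singleton_self t
    exact (Ne.symm (mem_filter.mp this).2)
  · intro s hst
    by_contra hne
    have : s ∈ univ.filter fun i => x i ≠ y i := mem_filter.mpr ⟨mem_univ s, fun e => hne e.symm⟩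
    rw [ht, mem_singleton] at this
    exact hst this

lemma phiMap_dist_one {b : Fin n → Fin n'} {x y : Fin n → Fin m} {t : Fin n}
    (hne : y t ≠ x t) (hoff : ∀ s, s ≠ t → y s = x s) :
    (univ.filter fun j => phiMap b x j ≠ phiMap b y j) = {b t} := by
  ext j
  simp only [mem_filter, mem_univ, true_and, mem_singleton]
  have hd := phiMap_eq_of_eq_off (b := b) hoff j
  constructor
  · intro hnej
    by_contra hj
    rw [if_neg (fun e => hj e.symm), add_zero] at hd
    exact hnej hd.symm
  · intro hj
    subst hj
    rw [if_pos rfl] at hd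
    intro he
    rw [← he] at hd
    have : y t - x t = 0 := by linear_combination hd.symm
    exact hne (sub_eq_zero.mp this)

lemma phiMap_hamming {b : Fin n → Fin n'} {x y : Fin n → Fin m}
    (h : hammingDist x y = 1) : hammingDist (phiMap b x) (phiMap b y) = 1 := by
  obtain ⟨t, hne, hoff, -⟩ := hdist_one h
  have : (univ.filter fun j => phiMap b x j ≠ phiMap b y j) = {b t} :=
    phiMap_dist_one hne hoff
  show (univ.filter fun j => phiMap b x j ≠ phiMap b y j).card = 1
  rw [this, card_singleton]

lemma fiber_bound {b : Fin n → Fin n'} {k : ℕ}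
    (hfib : ∀ j, (univ.filter fun t => b t = j).card ≤ k)
    (x : Fin n → Fin m) (z : Fin n' → Fin m) (N : Finset (Fin n → Fin m))
    (hN : ∀ y ∈ N, hammingDist x y = 1) :
    (N.filter fun y => phiMap b y = z).card ≤ k := by
  classical
  rcases (N.filter fun y => phiMap b y = z).eq_empty_or_nonempty with he | ⟨y₀, hy₀⟩
  · rw [he, card_empty]; exact Nat.zero_le k
  · have hy₀N : y₀ ∈ N := (mem_filter.mp hy₀).1
    have hz₀ : phiMap b y₀ = z := (mem_filter.mp hy₀).2
    obtain ⟨t₀, h₀ne, h₀off, -⟩ := hdist_one (hN y₀ hy₀N)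
    set F : (Fin n → Fin m) → Fin n := fun y =>
      if h : (univ.filter fun s => x s ≠ y s).Nonempty
      then (univ.filter fun s => x s ≠ y s).min' h else t₀ with hF
    have hFspec : ∀ y, hammingDist x y = 1 →
        y (F y) ≠ x (F y) ∧ ∀ s, s ≠ F y → y s = x s := by
      intro y hy
      obtain ⟨t, h1, h2, h3⟩ := hdist_one hy
      have hne : (univ.filter fun s => x s ≠ y s).Nonempty :=
        ⟨t, h3 ▸ mem_singleton_self t⟩
      have hFt : F y = t := by
        rw [hF]
        simp only [dif_pos hne]
        simp only [h3]
        exact Finset.min'_singleton t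
      rw [hFt]
      exact ⟨h1, h2⟩
    -- each y in the fiber has its difference coordinate in the block of t₀
    refine le_trans (Finset.card_le_card_of_injOn F ?_ ?_) (hfib (b t₀))
    · intro y hy
      have hyN : y ∈ N := (mem_filter.mp hy).1
      have hyz : phiMap b y = z := (mem_filter.mp hy).2
      obtain ⟨hFne, hFoff⟩ := hFspec y (hN y hyN)
      refine mem_filter.mpr ⟨mem_univ _, ?_⟩
      by_contra hbne
      have e1 := phiMap_eq_of_eq_off (b := b) hFoff (b t₀)
      rw [if_neg hbne, add_zero] at e1
      have e2 := phiMap_eq_of_eq_off (b := b) h₀off (b t₀)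
      rw [if_pos rfl] at e2
      rw [hyz] at e1
      rw [hz₀] at e2
      have : y₀ t₀ - x t₀ = 0 := by linear_combination e1 - e2
      exact h₀ne (sub_eq_zero.mp this)
    · intro y hy y' hy' hFe
      have hy := Finset.mem_coe.mp hy
      have hy' := Finset.mem_coe.mp hy'
      have hyN : y ∈ N := (mem_filter.mp hy).1
      have hyz : phiMap b y = z := (mem_filter.mp hy).2
      have hyN' : y' ∈ N := (mem_filter.mp hy').1
      have hyz' : phiMap b y' = z := (mem_filter.mp hy').2
      obtain ⟨hne1, hoff1⟩ := hFspec y (hN y hyN)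
      obtain ⟨hne2, hoff2⟩ := hFspec y' (hN y' hyN')
      rw [hFe] at hne1 hoff1
      have e1 := phiMap_eq_of_eq_off (b := b) hoff1 (b (F y'))
      rw [if_pos rfl, hyz] at e1
      have e2 := phiMap_eq_of_eq_off (b := b) hoff2 (b (F y'))
      rw [if_pos rfl, hyz'] at e2
      have hyt : y (F y') = y' (F y') := by linear_combination e2 - e1
      funext s
      by_cases hs : s = F y'
      · rw [hs, hyt]
      · rw [hoff1 s hs, hoff2 s hs]
lemma card_forced (P : Fin n → Prop) [DecidablePred P] (w : Fin n → Fin m) :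
    (univ.filter fun y : Fin n → Fin m => ∀ t, P t → y t = w t).card
      = m ^ (Fintype.card {t // ¬ P t}) := by
  rw [← Fintype.card_subtype]
  have e : {y : Fin n → Fin m // ∀ t, P t → y t = w t} ≃ ({t // ¬ P t} → Fin m) :=
    { toFun := fun y u => y.1 u.1
      invFun := fun g => ⟨fun t => if h : P t then w t else g ⟨t, h⟩, fun t ht => dif_pos ht⟩
      left_inv := fun y => Subtype.ext (funext fun t => by
        by_cases h : P t
        · simp [h, y.2 t h]
        · simp [h])
      right_inv := fun g => funext fun u => by simp [u.2] }
  rw [Fintype.card_congr e, Fintype.card_fun, Fintype.card_fin]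

/-- sum over a block splits off the representative -/
lemma phiMap_split (b : Fin n → Fin n') (rep : Fin n' → Fin n) (hbr : ∀ j, b (rep j) = j)
    (w : Fin n → Fin m) (j : Fin n') :
    phiMap b w j = w (rep j) + ∑ s ∈ (univ.filter fun s => b s = j).erase (rep j), w s := by
  have hmem : rep j ∈ univ.filter fun s => b s = j := mem_filter.mpr ⟨mem_univ _, hbr j⟩
  exact (Finset.add_sum_erase _ w hmem).symm

lemma card_fiber (b : Fin n → Fin n') (rep : Fin n' → Fin n) (hbr : ∀ j, b (rep j) = j)
    (z : Fin n' → Fin m) :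
    (univ.filter fun x : Fin n → Fin m => phiMap b x = z).card = m ^ (n - n') := by
  classical
  have hrepinj : Function.Injective rep := fun j j' h => by
    have := congrArg b h; rwa [hbr, hbr] at this
  -- the forward and backward maps
  set e : (Fin n → Fin m) → (Fin n → Fin m) :=
    fun x t => if t = rep (b t) then phiMap b x (b t) else x t with he
  set e' : (Fin n → Fin m) → (Fin n → Fin m) :=
    fun y t => if t = rep (b t) then
        y t - ∑ s ∈ (univ.filter fun s => b s = b t).erase t, y s
      else y t with he'
  -- key computation: phiMap b (e' y) j = y (rep j)
  have key : ∀ (y : Fin n → Fin m) (j : Fin n'), phiMap b (e' y) j = y (rep j) := by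
    intro y j
    rw [phiMap_split b rep hbr]
    have h1 : e' y (rep j) = y (rep j) - ∑ s ∈ (univ.filter fun s => b s = j).erase (rep j), y s := by
      rw [he']
      simp [hbr j]
    have h2 : ∀ s ∈ (univ.filter fun s => b s = j).erase (rep j), e' y s = y s := by
      intro s hs
      have hbs : b s = j := (mem_filter.mp (mem_of_mem_erase hs)).2
      have hsne : s ≠ rep (b s) := by rw [hbs]; exact ne_of_mem_erase hs
      rw [he']; simp only [if_neg hsne]
    rw [h1, Finset.sum_congr rfl h2]
    ring
  -- e maps fiber to B and e' maps B to fiber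
  have heB : ∀ x : Fin n → Fin m, ∀ j, e x (rep j) = phiMap b x j := by
    intro x j
    rw [he]
    simp [hbr j]
  have hinv1 : ∀ x : Fin n → Fin m, e' (e x) = x := by
    intro x
    funext t
    by_cases ht : t = rep (b t)
    · rw [he']
      simp only [if_pos ht]
      have h2 : ∀ s ∈ (univ.filter fun s => b s = b t).erase t, e x s = x s := by
        intro s hs
        have hbs : b s = b t := (mem_filter.mp (mem_of_mem_erase hs)).2
        have hsne : s ≠ rep (b s) := by
          rw [hbs]; intro e1; exact (ne_of_mem_erase hs) (e1.trans ht.symm)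
        rw [he]; simp only [if_neg hsne]
      have h1 : e x t = phiMap b x (b t) := by rw [he]; simp only [if_pos ht]
      have hsplit := phiMap_split b rep hbr x (b t)
      rw [← ht] at hsplit
      rw [h1, Finset.sum_congr rfl h2, hsplit]
      exact add_sub_cancel_right _ _
    · rw [he', he]; simp only [if_neg ht]
  have hinv2 : ∀ y : Fin n → Fin m, e (e' y) = y := by
    intro y
    funext t
    by_cases ht : t = rep (b t)
    · rw [he]
      simp only [if_pos ht]
      rw [key y (b t), ← ht]
    · rw [he, he']; simp only [if_neg ht]
  -- the target set
  have hcard : (univ.filter fun x : Fin n → Fin m => phiMap b x = z).card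
      = (univ.filter fun y : Fin n → Fin m => ∀ j, y (rep j) = z j).card := by
    apply Finset.card_bij' (fun x _ => e x) (fun y _ => e' y)
    · intro x hx
      have hz : phiMap b x = z := (mem_filter.mp hx).2
      refine mem_filter.mpr ⟨mem_univ _, fun j => ?_⟩
      rw [heB, hz]
    · intro y hy
      have hz : ∀ j, y (rep j) = z j := (mem_filter.mp hy).2
      refine mem_filter.mpr ⟨mem_univ _, funext fun j => ?_⟩
      rw [key, hz]
    · intro x _; exact hinv1 x
    · intro y _; exact hinv2 y
  rw [hcard]
  have hset : (univ.filter fun y : Fin n → Fin m => ∀ j, y (rep j) = z j)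
      = (univ.filter fun y : Fin n → Fin m => ∀ t, (t = rep (b t)) → y t = z (b t)) := by
    ext y
    simp only [mem_filter, mem_univ, true_and]
    constructor
    · intro h t ht
      conv_lhs => rw [ht]
      exact h (b t)
    · intro h j
      have : rep j = rep (b (rep j)) := by rw [hbr]
      rw [h (rep j) this, hbr]
  rw [hset, card_forced]
  congr 1
  -- Fintype.card {t // ¬ t = rep (b t)} = n - n'
  have h1 : Fintype.card {t : Fin n // ¬ t = rep (b t)}
      = (univ.filter fun t : Fin n => ¬ t = rep (b t)).card := Fintype.card_subtype _
  have h2 : (univ.filter fun t : Fin n => t = rep (b t)) = univ.image rep := by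
    ext t
    simp only [mem_filter, mem_univ, true_and, mem_image]
    constructor
    · intro h; exact ⟨b t, h.symm⟩
    · rintro ⟨j, rfl⟩
      rw [hbr]
  have h3 : (univ.filter fun t : Fin n => t = rep (b t)).card = n' := by
    rw [h2, Finset.card_image_of_injective _ hrepinj, card_univ, Fintype.card_fin]
  rw [Fintype.card_subtype_compl, Fintype.card_fin, Fintype.card_subtype, h3]

end Aux

theorem lift_core {m n n' : ℕ} [NeZero m] (k d' : ℕ) (hn'1 : 1 ≤ n') (hn'n : n' ≤ n)
    (b : Fin n → Fin n') (rep : Fin n' → Fin n)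
    (hbr : ∀ j, b (rep j) = j)
    (hfib : ∀ j : Fin n', (univ.filter fun t => b t = j).card ≤ k)
    (V' : Fin m → Finset (Fin n' → Fin m))
    (hpart' : IsHamPartition V')
    (hdeg' : ∀ i, ∀ x ∈ V' i, degIn (V' i) x ≤ d') :
    ∃ V : Fin m → Finset (Fin n → Fin m), IsHamPartition V ∧
      (∀ i, ∀ x ∈ V i, degIn (V i) x ≤ k * d') ∧
      imbalance V = (m:ℤ) ^ (n - n') * imbalance V' := by
  classical
  refine ⟨fun i => univ.filter fun x => phiMap b x ∈ V' i, ⟨?_, ?_⟩, ?_, ?_⟩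
  · intro i j hij
    rw [Finset.disjoint_left]
    intro x hxi hxj
    exact (Finset.disjoint_left.mp (hpart'.1 hij)) (mem_filter.mp hxi).2 (mem_filter.mp hxj).2
  · intro x
    obtain ⟨i, hi⟩ := hpart'.2 (phiMap b x)
    exact ⟨i, mem_filter.mpr ⟨mem_univ _, hi⟩⟩
  · intro i x hx
    have hφx : phiMap b x ∈ V' i := (mem_filter.mp hx).2
    show ((univ.filter fun x' : Fin n → Fin m => phiMap b x' ∈ V' i).filter
      fun y => hammingDist x y = 1).card ≤ k * d'
    set N := (univ.filter fun x' : Fin n → Fin m => phiMap b x' ∈ V' i).filter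
      (fun y => hammingDist x y = 1) with hNdef
    have hNd : ∀ y ∈ N, hammingDist x y = 1 := fun y hy => (mem_filter.mp hy).2
    have himg : N.image (phiMap b) ⊆ (V' i).filter fun w => hammingDist (phiMap b x) w = 1 := by
      intro z hz
      obtain ⟨y, hyN, rfl⟩ := mem_image.mp hz
      have hy1 := (mem_filter.mp (mem_filter.mp hyN).1).2
      exact mem_filter.mpr ⟨hy1, phiMap_hamming (hNd y hyN)⟩
    have hb1 : N.card ≤ k * (N.image (phiMap b)).card :=
      Finset.card_le_mul_card_image N k (fun z _ => fiber_bound hfib x z N hNd)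
    calc N.card ≤ k * (N.image (phiMap b)).card := hb1
      _ ≤ k * d' := Nat.mul_le_mul_left k
          (le_trans (Finset.card_le_card himg) (hdeg' i _ hφx))
  · have hcard : ∀ i, ((univ.filter fun x : Fin n → Fin m => phiMap b x ∈ V' i).card : ℤ)
        = (m:ℤ) ^ (n - n') * (V' i).card := by
      intro i
      have h1 : (univ.filter fun x : Fin n → Fin m => phiMap b x ∈ V' i).card
          = ∑ z ∈ V' i, ((univ.filter fun x : Fin n → Fin m => phiMap b x ∈ V' i).filter
              (fun x => phiMap b x = z)).card :=
        Finset.card_eq_sum_card_fiberwise (fun x hx => (mem_filter.mp hx).2)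
      have h2 : ∀ z ∈ V' i, ((univ.filter fun x : Fin n → Fin m => phiMap b x ∈ V' i).filter
          (fun x => phiMap b x = z)) = univ.filter (fun x => phiMap b x = z) := by
        intro z hz
        ext x
        simp only [mem_filter, mem_univ, true_and]
        exact ⟨fun h => h.2, fun h => ⟨by rw [h]; exact hz, h⟩⟩
      rw [h1, Finset.sum_congr rfl (fun z hz => by rw [h2 z hz, card_fiber b rep hbr z])]
      rw [Finset.sum_const, smul_eq_mul]
      push_cast
      ring
    unfold imbalance
    rw [Finset.mul_sum]
    refine Finset.sum_congr rfl fun i _ => ?_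
    rw [hcard i]
    have hpow : (m:ℤ) ^ (n-1) = (m:ℤ)^(n-n') * (m:ℤ)^(n'-1) := by
      rw [← pow_add]; congr 1; omega
    rw [hpow, ← mul_sub, abs_mul, abs_of_nonneg (by positivity : (0:ℤ) ≤ (m:ℤ)^(n-n'))]


/-- Lifting lemma: let `m ≥ 2`, `n ≥ d ≥ 1`, `1 ≤ d' ≤ d` and
`n' = ⌈n / ⌊d/d'⌋⌉` (here `(n + d/d' - 1) / (d/d')` in natural-number arithmetic).
If `H(n',m)` admits a partition `Π'` into `m` parts with `Δ(Π') ≤ d'` and `ι(Π') ≥ i'`,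
then `H(n,m)` admits a partition `Π` into `m` parts with `Δ(Π) ≤ d` and
`ι(Π) ≥ m^(n-n') · i'`. -/
theorem lifting_partitions (m n d d' : ℕ) (hm : 2 ≤ m) (hd : 1 ≤ d) (hdn : d ≤ n)
    (hd'1 : 1 ≤ d') (hd'd : d' ≤ d)
    (n' : ℕ) (hn' : n' = (n + d / d' - 1) / (d / d'))
    (i' : ℤ)
    (V' : Fin m → Finset (Fin n' → Fin m))
    (hpart' : IsHamPartition V')
    (hdeg' : ∀ i, ∀ x ∈ V' i, degIn (V' i) x ≤ d')
    (himb' : i' ≤ imbalance V') :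
    ∃ V : Fin m → Finset (Fin n → Fin m), IsHamPartition V ∧
      (∀ i, ∀ x ∈ V i, degIn (V i) x ≤ d) ∧
      (m : ℤ) ^ (n - n') * i' ≤ imbalance V := by
  haveI : NeZero m := ⟨by omega⟩
  set k := d / d' with hk
  have hkpos : 0 < k := (Nat.one_le_div_iff (by omega)).mpr hd'd
  have hkd : k * d' ≤ d := Nat.div_mul_le_self d d'
  have hn1 : 1 ≤ n := le_trans hd hdn
  -- division facts
  have hdm : k * n' + (n + k - 1) % k = n + k - 1 := by
    rw [hn']; exact Nat.div_add_mod (n + k - 1) k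
  have hmod : (n + k - 1) % k < k := Nat.mod_lt _ hkpos
  have hnkn' : n ≤ k * n' := by omega
  have hn'1 : 1 ≤ n' := by
    rcases Nat.eq_zero_or_pos n' with h0 | h
    · exfalso; rw [h0, mul_zero] at hnkn'; omega
    · exact h
  have hn'n : n' ≤ n := by
    by_contra hcon
    push_neg at hcon
    have h7 : k * (n + 1) ≤ k * n' := Nat.mul_le_mul_left k hcon
    have h5 : n ≤ k * n := Nat.le_mul_of_pos_left n hkpos
    have h6 : k * (n + 1) = k * n + k := by ring
    omega
  -- the block structure
  set b : Fin n → Fin n' := fun t => ⟨t.1 / k, by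
    have h1 : t.1 < k * n' := lt_of_lt_of_le t.2 hnkn'
    exact (Nat.div_lt_iff_lt_mul hkpos).mpr (by rw [mul_comm]; exact h1)⟩ with hbdef
  set rep : Fin n' → Fin n := fun j => ⟨j.1 * k, by
    have h8 : (j.1 + 1) * k ≤ n' * k := Nat.mul_le_mul_right k j.2
    have h9 : (j.1 + 1) * k = j.1 * k + k := by ring
    have h10 : n' * k = k * n' := mul_comm _ _
    omega⟩ with hrepdef
  have hbr : ∀ j, b (rep j) = j := by
    intro j
    apply Fin.ext
    show j.1 * k / k = j.1
    exact Nat.mul_div_cancel j.1 hkpos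
  have hfib : ∀ j : Fin n', (univ.filter fun t => b t = j).card ≤ k := by
    intro j
    have : (univ.filter fun t => b t = j).card ≤ (univ : Finset (Fin k)).card := by
      apply Finset.card_le_card_of_injOn (fun t => ⟨t.1 % k, Nat.mod_lt _ hkpos⟩)
      · intro t _; exact mem_univ _
      · intro t ht t' ht' he
        have ht := Finset.mem_coe.mp ht
        have ht' := Finset.mem_coe.mp ht'
        have hdiv : t.1 / k = t'.1 / k := by
          have e1 : b t = j := (mem_filter.mp ht).2
          have e2 : b t' = j := (mem_filter.mp ht').2
          have := e1.trans e2.symm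
          exact congrArg Fin.val this
        have hmod' : t.1 % k = t'.1 % k := congrArg Fin.val he
        have e1 := Nat.div_add_mod t.1 k
        have e2 := Nat.div_add_mod t'.1 k
        rw [hdiv, hmod'] at e1
        exact Fin.ext (by omega)
    rwa [card_univ, Fintype.card_fin] at this
  obtain ⟨V, hp, hdeg, himbeq⟩ := lift_core k d' hn'1 hn'n b rep hbr hfib V' hpart' hdeg'
  refine ⟨V, hp, fun i x hx => le_trans (hdeg i x hx) hkd, ?_⟩
  rw [himbeq]
  exact mul_le_mul_of_nonneg_left himb' (by positivity)
end

section
/- Let m ≥ 3 and let d, n be integers with 1 ≤ d < n. Then the Hamming graph H(n,m) has an induced subgraph G on exactly m^{n−1} + m^{⌊(d−1)n/d⌋} vertices whose maximum degree satisfies Δ(G) ≤ d. -/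
open Finset

namespace LSSD

variable {m : ℕ}

lemma fact_one_ne_zero (hm : 3 ≤ m) : (1 : ZMod m) ≠ 0 := by
  haveI : NeZero m := ⟨by omega⟩
  intro h
  have : m ∣ 1 := by
    have := (CharP.cast_eq_zero_iff (ZMod m) m 1).mp (by simpa using h)
    simpa using this
  have := Nat.le_of_dvd one_pos this
  omega

lemma fact_two_ne_zero (hm : 3 ≤ m) : (2 : ZMod m) ≠ 0 := by
  haveI : NeZero m := ⟨by omega⟩
  intro h
  have h2 : m ∣ 2 := by
    have := (CharP.cast_eq_zero_iff (ZMod m) m 2).mp (by push_cast; simpa using h)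
    simpa using this
  have := Nat.le_of_dvd (by omega) h2
  omega

lemma fact_two_ne_one (hm : 3 ≤ m) : (2 : ZMod m) ≠ 1 := by
  intro h
  exact fact_one_ne_zero hm (by linear_combination h)

lemma fact_neg_one_ne_zero (hm : 3 ≤ m) : (-1 : ZMod m) ≠ 0 := by
  intro h
  exact fact_one_ne_zero hm (by linear_combination -h)

lemma fact_neg_one_ne_one (hm : 3 ≤ m) : (-1 : ZMod m) ≠ 1 := by
  intro h
  exact fact_two_ne_zero hm (by linear_combination -h)

section DistChar

variable {ι α : Type*} [Fintype ι] [DecidableEq α]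

lemma exists_of_dist_one {x y : ι → α} (h : hammingDist x y = 1) :
    ∃ i, x i ≠ y i ∧ ∀ j, j ≠ i → x j = y j := by
  rw [hammingDist, card_eq_one] at h
  obtain ⟨i, hi⟩ := h
  refine ⟨i, ?_, fun j hj => ?_⟩
  · have : i ∈ ({i} : Finset ι) := mem_singleton_self i
    rw [← hi] at this
    exact (mem_filter.mp this).2
  · by_contra hne
    have : j ∈ ({i} : Finset ι) := by
      rw [← hi]; exact mem_filter.mpr ⟨mem_univ _, hne⟩
    exact hj (mem_singleton.mp this)

lemma dist_one_of {x y : ι → α} (i : ι) (h1 : x i ≠ y i) (h2 : ∀ j, j ≠ i → x j = y j) :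
    hammingDist x y = 1 := by
  rw [hammingDist, card_eq_one]
  refine ⟨i, ?_⟩
  ext j
  simp only [mem_filter, mem_univ, true_and, mem_singleton]
  constructor
  · intro hj; by_contra hne; exact hj (h2 j hne)
  · rintro rfl; exact h1

end DistChar


variable {m : ℕ}

def gv (v : ZMod m) : ZMod m := if v = 1 then 0 else 1

def sigma {B : ℕ} (x : Fin (B+1) → ZMod m) : ZMod m := ∑ i, x i

def uvec (B : ℕ) : Fin (B+1) → ZMod m := Pi.single (Fin.last B) 1

def mainP {B : ℕ} (x : Fin (B+1) → ZMod m) : Prop :=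
  ∃ j, (∀ i, i < j → x i = 0) ∧ x j ≠ 0 ∧ sigma x = gv (x j)

def inT {B : ℕ} (x : Fin (B+1) → ZMod m) : Prop := x = 0 ∨ x = uvec B ∨ mainP x

lemma uvec_apply {B : ℕ} (j : Fin (B+1)) :
    uvec (m := m) B j = if j = Fin.last B then 1 else 0 := Pi.single_apply _ _ _

lemma uvec_last {B : ℕ} : uvec (m := m) B (Fin.last B) = 1 := by simp [uvec_apply]

lemma sigma_uvec {B : ℕ} : sigma (uvec (m := m) B) = 1 := by
  unfold sigma uvec
  exact Fintype.sum_pi_single' _ _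

lemma lt_last_of_ne {B : ℕ} {i : Fin (B+1)} (h : i ≠ Fin.last B) : i < Fin.last B :=
  lt_of_le_of_ne (Fin.le_last i) h

lemma sigma_update {B : ℕ} (x : Fin (B+1) → ZMod m) (i : Fin (B+1)) (w : ZMod m) :
    sigma (Function.update x i w) = sigma x + (w - x i) := by
  unfold sigma
  rw [Finset.sum_update_of_mem (mem_univ i), ← Finset.erase_eq]
  have h2 : x i + ∑ k ∈ univ.erase i, x k = ∑ k, x k := Finset.add_sum_erase _ _ (mem_univ i)
  linear_combination h2

lemma sigma_single_support {B : ℕ} {x : Fin (B+1) → ZMod m} {i : Fin (B+1)}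
    (h : ∀ k, k ≠ i → x k = 0) : sigma x = x i :=
  Finset.sum_eq_single i (fun b _ hb => h b hb) (fun hi => absurd (mem_univ i) hi)

lemma no_fix (hm : 3 ≤ m) {v : ZMod m} (hv : v ≠ 0) (h : v = gv v) : False := by
  unfold gv at h
  split_ifs at h with h1
  · exact hv h
  · exact h1 h

lemma eq_update_of_ptwise {ι α : Type*} [DecidableEq ι] {s t : ι → α} {i : ι}
    (heq : ∀ j, j ≠ i → s j = t j) : t = Function.update s i (t i) := by
  funext k
  by_cases hk : k = i
  · subst hk; rw [Function.update_self]
  · rw [Function.update_of_ne hk]; exact (heq k hk).symm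

lemma nbr_zero (hm : 3 ≤ m) {B : ℕ} {t : Fin (B+1) → ZMod m} (ht : inT t)
    (hd : hammingDist (0 : Fin (B+1) → ZMod m) t = 1) : t = uvec B := by
  obtain ⟨i, hne, heq⟩ := exists_of_dist_one hd
  rcases ht with h0 | hu | ⟨j, hlow, hnz, hσ⟩
  · exfalso; rw [h0] at hne; exact hne rfl
  · exact hu
  · exfalso
    have hji : j = i := by
      by_contra hji
      exact hnz (heq j hji).symm
    have hsup : ∀ k, k ≠ j → t k = 0 := by
      intro k hk; rw [hji] at hk; exact (heq k hk).symm
    exact no_fix hm hnz ((sigma_single_support hsup) ▸ hσ)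

lemma nbr_uvec (hm : 3 ≤ m) {B : ℕ} {t : Fin (B+1) → ZMod m} (ht : inT t)
    (hd : hammingDist (uvec B) t = 1) : t = 0 := by
  obtain ⟨i, hne, heq⟩ := exists_of_dist_one hd
  rcases ht with h0 | hu | ⟨j, hlow, hnz, hσ⟩
  · exact h0
  · exfalso; rw [hu] at hne; exact hne rfl
  · exfalso
    by_cases hji : j = i
    · subst hji
      have htu : t = Function.update (uvec B) j (t j) := eq_update_of_ptwise heq
      have hst : sigma t = 1 + (t j - uvec B j) := by
        conv_lhs => rw [htu]
        rw [sigma_update, sigma_uvec]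
      by_cases hjl : j = Fin.last B
      · rw [uvec_apply, if_pos hjl] at hst
        have hst2 : sigma t = t j := by rw [hst]; ring
        rw [hst2] at hσ
        exact no_fix hm hnz hσ
      · rw [uvec_apply, if_neg hjl, hσ] at hst
        unfold gv at hst
        split_ifs at hst with h1
        · exact fact_two_ne_zero hm (by linear_combination -hst - h1)
        · exact hnz (by linear_combination -hst)
    · have hjlast : j = Fin.last B := by
        by_contra hjl
        apply hnz
        rw [← heq j hji, uvec_apply, if_neg hjl]
      have hilt : i < j := by
        rw [hjlast]
        exact lt_last_of_ne (fun h => hji (hjlast.trans h.symm))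
      apply hne
      rw [uvec_apply, if_neg (fun h => hji (hjlast.trans h.symm)), hlow i hilt]

lemma nbr_main (hm : 3 ≤ m) {B : ℕ} {s t : Fin (B+1) → ZMod m} {j : Fin (B+1)}
    (hlow : ∀ i, i < j → s i = 0) (hnz : s j ≠ 0) (hσ : sigma s = gv (s j))
    (ht : inT t) (hd : hammingDist s t = 1) :
    t = Function.update s j (if s j = 1 then 2 else 1) := by
  obtain ⟨i, hne, heq⟩ := exists_of_dist_one hd
  have hts : t = Function.update s i (t i) := eq_update_of_ptwise heq
  have hσt : sigma t = sigma s + (t i - s i) := by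
    conv_lhs => rw [hts]
    rw [sigma_update]
  rcases ht with h0 | hu | ⟨j', hlow', hnz', hσ'⟩
  · exfalso
    have hji : j = i := by
      by_contra hji
      apply hnz; rw [heq j hji, h0]; rfl
    have hsup : ∀ k, k ≠ j → s k = 0 := by
      intro k hk
      rw [hji] at hk
      rw [heq k hk, h0]; rfl
    exact no_fix hm hnz ((sigma_single_support hsup) ▸ hσ)
  · exfalso
    by_cases hji : j = i
    · rw [← hji, hu] at hσt
      rw [sigma_uvec, hσ] at hσt
      by_cases hjl : j = Fin.last B
      · rw [uvec_apply, if_pos hjl] at hσt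
        exact no_fix hm hnz (by linear_combination hσt)
      · rw [uvec_apply, if_neg hjl] at hσt
        unfold gv at hσt
        split_ifs at hσt with h1
        · exact fact_neg_one_ne_one hm (by linear_combination -hσt + h1)
        · exact hnz (by linear_combination hσt)
    · have hjlast : j = Fin.last B := by
        by_contra hjl
        apply hnz
        rw [heq j hji, hu, uvec_apply, if_neg hjl]
      have hilt : i < j := by
        rw [hjlast]
        exact lt_last_of_ne (fun h => hji (hjlast.trans h.symm))
      apply hne
      rw [hlow i hilt, hu, uvec_apply,
        if_neg (fun h => hji (hjlast.trans h.symm))]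
  · by_cases hji : j = i <;> by_cases hj'i : j' = i
    · -- case D : j = i = j'
      have hE : gv (t j) = gv (s j) + (t j - s j) := by
        rw [← hji] at hσt
        rw [hσ', hσ] at hσt
        rw [hj'i, ← hji] at hσt
        exact hσt
      have hne' : s j ≠ t j := by rw [hji]; exact hne
      have hts' : t = Function.update s j (t j) := by rw [hji]; exact hts
      suffices hval : t j = (if s j = 1 then 2 else 1) by rw [hts', hval]
      unfold gv at hE
      by_cases h2 : s j = 1
      · rw [if_pos h2]
        by_cases h1 : t j = 1
        · exact absurd (h2.trans h1.symm) hne'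
        · rw [if_neg h1, if_pos h2] at hE
          linear_combination -hE + h2
      · rw [if_neg h2]
        by_cases h1 : t j = 1
        · exact h1
        · rw [if_neg h1, if_neg h2] at hE
          exact absurd (by linear_combination hE) hne'
    · -- case B : j = i, j' ≠ i
      exfalso
      have e2 : s j' = t j' := heq j' hj'i
      have hjne : j ≠ j' := fun h => hj'i (h ▸ hji)
      have hjj' : j < j' := by
        rcases lt_trichotomy j j' with h | h | h
        · exact h
        · exact absurd h hjne
        · exact absurd (e2.symm.trans (hlow j' h)) hnz'
      have htj : t j = 0 := hlow' j hjj'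
      rw [← hji] at hσt
      rw [hσ, hσ', htj] at hσt
      unfold gv at hσt
      split_ifs at hσt with h1 h2 h2
      · exact hnz (by linear_combination hσt)
      · exact h2 (by linear_combination hσt)
      · exact fact_neg_one_ne_one hm (by linear_combination -hσt + h2)
      · exact hnz (by linear_combination hσt)
    · -- case C : j ≠ i, j' = i
      exfalso
      have e1 : s j = t j := heq j hji
      have hij : j' < j := by
        rcases lt_trichotomy j j' with h | h | h
        · exact absurd (e1.trans (hlow' j h)) hnz
        · exact absurd (h.trans hj'i) hji
        · exact h
      have hsi : s j' = 0 := hlow j' hij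
      rw [← hj'i] at hσt
      rw [hσ, hσ', hsi] at hσt
      unfold gv at hσt
      split_ifs at hσt with h1 h2 h2
      · exact hnz' (by linear_combination -hσt)
      · exact fact_two_ne_zero hm (by linear_combination -hσt - h1)
      · exact h1 (by linear_combination -hσt)
      · exact hnz' (by linear_combination -hσt)
    · -- case A : j ≠ i, j' ≠ i
      exfalso
      have e1 : s j = t j := heq j hji
      have e2 : s j' = t j' := heq j' hj'i
      have hjj' : j = j' := by
        rcases lt_trichotomy j j' with h | h | h
        · exact absurd (e1.trans (hlow' j h)) hnz
        · exact h
        · exact absurd (e2.symm.trans (hlow j' h)) hnz'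
      have hgv : gv (t j') = gv (s j) := by rw [← hjj', ← e1]
      rw [hσ', hgv, ← hσ] at hσt
      exact hne (by linear_combination hσt)

lemma uniq (hm : 3 ≤ m) {B : ℕ} {s t₁ t₂ : Fin (B+1) → ZMod m}
    (hs : inT s) (h1 : inT t₁) (h2 : inT t₂)
    (hd1 : hammingDist s t₁ = 1) (hd2 : hammingDist s t₂ = 1) : t₁ = t₂ := by
  rcases hs with rfl | rfl | ⟨j, hlow, hnz, hσ⟩
  · rw [nbr_zero hm h1 hd1, nbr_zero hm h2 hd2]
  · rw [nbr_uvec hm h1 hd1, nbr_uvec hm h2 hd2]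
  · rw [nbr_main hm hlow hnz hσ h1 hd1, nbr_main hm hlow hnz hσ h2 hd2]


variable {m : ℕ}

section BlockFib
variable {ι γ : Type*} [Fintype ι] [Fintype γ] [DecidableEq ι] [DecidableEq γ]

def bsum (φ : ι → γ) (x : ι → ZMod m) : γ → ZMod m :=
  fun l => ∑ i ∈ univ.filter (fun i => φ i = l), x i

lemma bsum_add (φ : ι → γ) (x y : ι → ZMod m) :
    bsum φ (x + y) = bsum φ x + bsum φ y := by
  funext l
  unfold bsum
  simp only [Pi.add_apply]
  exact Finset.sum_add_distrib

def zsec (φ : ι → γ) (ρ : γ → ι) (τ : γ → ZMod m) : ι → ZMod m :=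
  fun i => if i = ρ (φ i) then τ (φ i) else 0

lemma zsec_zero (φ : ι → γ) (ρ : γ → ι) : zsec (m := m) φ ρ 0 = 0 := by
  funext i
  unfold zsec
  split <;> rfl

lemma zsec_add (φ : ι → γ) (ρ : γ → ι) (a b : γ → ZMod m) :
    zsec φ ρ a + zsec φ ρ b = zsec φ ρ (a + b) := by
  funext i
  simp only [Pi.add_apply, zsec]
  split <;> simp

lemma bsum_zsec (φ : ι → γ) (ρ : γ → ι) (hρ : ∀ l, φ (ρ l) = l) (τ : γ → ZMod m) :
    bsum φ (zsec φ ρ τ) = τ := by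
  funext l
  unfold bsum zsec
  have hstep : ∑ i ∈ univ.filter (fun i => φ i = l), (if i = ρ (φ i) then τ (φ i) else 0)
      = (if ρ l = ρ (φ (ρ l)) then τ (φ (ρ l)) else 0) :=
    Finset.sum_eq_single_of_mem (ρ l) (mem_filter.mpr ⟨mem_univ _, hρ l⟩)
      (fun b hb hbne => by
        rw [(mem_filter.mp hb).2]
        exact if_neg hbne)
  rw [hstep, hρ l, if_pos rfl]

lemma fiber_card_eq [NeZero m] (φ : ι → γ) (ρ : γ → ι) (hρ : ∀ l, φ (ρ l) = l) (t t' : γ → ZMod m) :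
    (univ.filter fun x : ι → ZMod m => bsum φ x = t).card =
    (univ.filter fun x : ι → ZMod m => bsum φ x = t').card := by
  have hmem : ∀ (a b : γ → ZMod m) (x : ι → ZMod m), bsum φ x = a →
      bsum φ (x + zsec φ ρ (b - a)) = b := by
    intro a b x hx
    rw [bsum_add, bsum_zsec φ ρ hρ, hx]
    abel
  have hinv : ∀ (a b : γ → ZMod m) (x : ι → ZMod m),
      x + zsec φ ρ (b - a) + zsec φ ρ (a - b) = x := by
    intro a b x
    rw [add_assoc, zsec_add]
    have : (b - a) + (a - b) = 0 := by abel
    rw [this, zsec_zero, add_zero]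
  apply Finset.card_bij' (fun x _ => x + zsec φ ρ (t' - t)) (fun x _ => x + zsec φ ρ (t - t'))
  · intro a ha
    exact mem_filter.mpr ⟨mem_univ _, hmem t t' a (mem_filter.mp ha).2⟩
  · intro a ha
    exact mem_filter.mpr ⟨mem_univ _, hmem t' t a (mem_filter.mp ha).2⟩
  · intro a _
    exact hinv t t' a
  · intro a _
    exact hinv t' t a

lemma blockfib [NeZero m] (φ : ι → γ) (ρ : γ → ι) (hρ : ∀ l, φ (ρ l) = l) (t : γ → ZMod m) :
    (univ.filter fun x : ι → ZMod m => bsum φ x = t).card * m ^ (Fintype.card γ)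
      = m ^ (Fintype.card ι) := by
  have h1 : (univ : Finset (ι → ZMod m)).card =
      ∑ τ ∈ (univ : Finset (γ → ZMod m)), (univ.filter fun x => bsum φ x = τ).card :=
    Finset.card_eq_sum_card_fiberwise (fun x _ => mem_univ _)
  rw [Finset.sum_congr rfl (fun τ _ => fiber_card_eq φ ρ hρ τ t), Finset.sum_const,
    smul_eq_mul, Finset.card_univ, Finset.card_univ, Fintype.card_fun, Fintype.card_fun,
    ZMod.card] at h1
  rw [mul_comm] at h1
  exact h1.symm

end BlockFib



section PJV
variable {m : ℕ} [NeZero m] {B : ℕ}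

lemma pjv_card {j : Fin (B+1)} (hj : j.val < B) (v : ZMod m) :
    (univ.filter (fun x : Fin (B+1) → ZMod m =>
      (∀ i, i < j → x i = 0) ∧ x j = v ∧ sigma x = gv v)).card = m ^ (B - 1 - j.val) := by
  set jv := j.val with hjv
  clear_value jv
  have hjB : jv < B := by omega
  -- block structure
  set φ : Fin (B+1) → Fin (jv+2) := fun k => ⟨min k.val (jv+1), by omega⟩ with hφ
  set ρ : Fin (jv+2) → Fin (B+1) := fun l => ⟨l.val, by omega⟩ with hρdef
  have hρ : ∀ l, φ (ρ l) = l := by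
    intro l
    have := l.isLt
    apply Fin.ext
    simp only [hφ, hρdef]
    omega
  set tj : Fin (jv+2) → ZMod m :=
    Pi.single (⟨jv, by omega⟩ : Fin (jv+2)) v
      + Pi.single (⟨jv+1, by omega⟩ : Fin (jv+2)) (gv v - v) with htj
  -- singleton fibers
  have hsingle : ∀ (x : Fin (B+1) → ZMod m) (l : Fin (jv+2)), l.val ≤ jv →
      bsum φ x l = x ⟨l.val, by omega⟩ := by
    intro x l hl
    have hfib : univ.filter (fun k => φ k = l) = {(⟨l.val, by omega⟩ : Fin (B+1))} := by
      ext k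
      have hk := k.isLt
      have hlt := l.isLt
      simp only [mem_filter, mem_univ, true_and, mem_singleton, Fin.ext_iff, hφ]
      omega
    rw [bsum, hfib, Finset.sum_singleton]
  -- total sum
  have htotal : ∀ x : Fin (B+1) → ZMod m, ∑ l, bsum φ x l = sigma x := by
    intro x
    unfold bsum sigma
    exact Finset.sum_fiberwise_of_maps_to (fun i _ => mem_univ (φ i)) x
  -- values of tj
  have htj_low : ∀ l : Fin (jv+2), l.val < jv → tj l = 0 := by
    intro l hl
    rw [htj]
    simp only [Pi.add_apply]
    rw [Pi.single_apply, Pi.single_apply, if_neg (Fin.ne_of_val_ne (show l.val ≠ jv by omega)),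
      if_neg (Fin.ne_of_val_ne (show l.val ≠ jv + 1 by omega))]
    ring
  have htj_mid : tj ⟨jv, by omega⟩ = v := by
    rw [htj]
    simp only [Pi.add_apply]
    rw [Pi.single_eq_same, Pi.single_apply,
      if_neg (Fin.ne_of_val_ne (show jv ≠ jv + 1 by omega))]
    ring
  have htj_hi : tj ⟨jv+1, by omega⟩ = gv v - v := by
    rw [htj]
    simp only [Pi.add_apply]
    rw [Pi.single_eq_same, Pi.single_apply,
      if_neg (Fin.ne_of_val_ne (show jv + 1 ≠ jv by omega))]
    ring
  have htj_sum : ∑ l, tj l = gv v := by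
    rw [htj]
    simp only [Pi.add_apply]
    rw [Finset.sum_add_distrib, Fintype.sum_pi_single', Fintype.sum_pi_single']
    ring
  -- the set equality
  have hsets : (univ.filter (fun x : Fin (B+1) → ZMod m => bsum φ x = tj))
      = (univ.filter (fun x : Fin (B+1) → ZMod m =>
          (∀ i, i < j → x i = 0) ∧ x j = v ∧ sigma x = gv v)) := by
    ext x
    simp only [mem_filter, mem_univ, true_and]
    constructor
    · intro hbs
      refine ⟨?_, ?_, ?_⟩
      · intro i hi
        have hilt : i.val < jv := by rw [hjv]; exact hi
        have h1 : bsum φ x ⟨i.val, by omega⟩ = x ⟨i.val, by omega⟩ :=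
          hsingle x ⟨i.val, by omega⟩ (show i.val ≤ jv by omega)
        have h2 : x (⟨i.val, by omega⟩ : Fin (B+1)) = x i := congrArg x (Fin.ext rfl)
        rw [hbs] at h1
        rw [← h2, ← h1]
        exact htj_low _ (show i.val < jv by omega)
      · have h1 : bsum φ x ⟨jv, by omega⟩ = x ⟨jv, by omega⟩ :=
          hsingle x ⟨jv, by omega⟩ (show jv ≤ jv by omega)
        have h2 : x (⟨jv, by omega⟩ : Fin (B+1)) = x j := congrArg x (Fin.ext (show jv = j.val by omega))
        rw [hbs] at h1
        rw [← h2, ← h1, htj_mid]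
      · rw [← htotal x, hbs, htj_sum]
    · rintro ⟨h1, h2, h3⟩
      funext l
      by_cases hl : l.val ≤ jv
      · rw [hsingle x l hl]
        by_cases hlv : l.val < jv
        · rw [htj_low l hlv]
          exact h1 _ (Fin.lt_def.mpr (show l.val < j.val by omega))
        · have hlval : l.val = jv := by omega
          have hlj : (⟨l.val, by omega⟩ : Fin (B+1)) = j := Fin.ext (show l.val = j.val by omega)
          have hl2 : l = ⟨jv, by omega⟩ := Fin.ext (show l.val = jv by omega)
          rw [hlj, h2, hl2, htj_mid]
      · have hlval : l.val = jv + 1 := by have := l.isLt; omega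
        have hl2 : l = ⟨jv+1, by omega⟩ := Fin.ext (show l.val = jv + 1 by omega)
        have hadd : bsum φ x l + ∑ l' ∈ univ.erase l, bsum φ x l' = sigma x := by
          rw [← htotal x]
          exact Finset.add_sum_erase _ _ (mem_univ l)
        have herase : ∑ l' ∈ univ.erase l, bsum φ x l'
            = ∑ l' ∈ univ.erase l, (if l' = ⟨jv, by omega⟩ then v else 0) := by
          apply Finset.sum_congr rfl
          intro l' hl'
          have hl'ne : l' ≠ l := (Finset.mem_erase.mp hl').1
          have hl'le : l'.val ≤ jv := by
            have := l'.isLt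
            simp only [ne_eq, Fin.ext_iff] at hl'ne
            omega
          rw [hsingle x l' hl'le]
          by_cases hl'v : l'.val = jv
          · rw [if_pos (Fin.ext (show l'.val = jv by omega))]
            have : (⟨l'.val, by omega⟩ : Fin (B+1)) = j := Fin.ext (show l'.val = j.val by omega)
            rw [this, h2]
          · rw [if_neg (Fin.ne_of_val_ne (show l'.val ≠ jv by omega))]
            exact h1 _ (Fin.lt_def.mpr (show l'.val < j.val by omega))
        have hsum0 : ∑ l' ∈ univ.erase l, (if l' = ⟨jv, by omega⟩ then v else 0) = v := by
          rw [Finset.sum_ite_eq' (univ.erase l) (⟨jv, by omega⟩ : Fin (jv+2)) (fun _ => v)]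
          rw [if_pos (Finset.mem_erase.mpr
            ⟨Fin.ne_of_val_ne (show jv ≠ l.val by omega), mem_univ _⟩)]
        rw [herase, hsum0, h3] at hadd
        rw [hl2] at hadd ⊢
        rw [htj_hi]
        linear_combination hadd
  have hcount := blockfib φ ρ hρ tj
  rw [Fintype.card_fin, Fintype.card_fin] at hcount
  rw [← hsets]
  have hexp : (B - 1 - jv) + (jv + 2) = B + 1 := by omega
  have hpow : m ^ (B+1) = m ^ (B - 1 - jv) * m ^ (jv + 2) := by
    rw [← pow_add, hexp]
  rw [hpow] at hcount
  exact Nat.eq_of_mul_eq_mul_right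
    (Nat.pow_pos (Nat.pos_of_ne_zero (NeZero.ne m))) hcount
end PJV


section TCard
variable {m : ℕ} [NeZero m] {B : ℕ}

instance instDecMainP : DecidablePred (mainP (m := m) (B := B)) := fun x => by
  unfold mainP; infer_instance

instance instDecInT : DecidablePred (inT (m := m) (B := B)) := fun x => by
  unfold inT; infer_instance

def mainAtF (m : ℕ) [NeZero m] {B : ℕ} (j : Fin (B+1)) : Finset (Fin (B+1) → ZMod m) :=
  univ.filter (fun x => (∀ i, i < j → x i = 0) ∧ x j ≠ 0 ∧ sigma x = gv (x j))

lemma mainAtF_last_empty (hm : 3 ≤ m) : mainAtF m (Fin.last B) = ∅ := by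
  rw [Finset.eq_empty_iff_forall_notMem]
  intro x hx
  obtain ⟨-, hlow, hnz, hσ⟩ := mem_filter.mp hx
  have hsup : ∀ k, k ≠ Fin.last B → x k = 0 := fun k hk => hlow k (lt_last_of_ne hk)
  rw [sigma_single_support hsup] at hσ
  exact no_fix hm hnz hσ

lemma mainAtF_card (hm : 3 ≤ m) (j : Fin (B+1)) :
    (mainAtF m j).card = if j.val < B then (m-1) * m^(B-1-j.val) else 0 := by
  by_cases hj : j.val < B
  · rw [if_pos hj]
    have hmaps : ∀ x ∈ mainAtF m j, x j ∈ (univ.erase (0 : ZMod m)) := fun x hx =>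
      mem_erase.mpr ⟨(mem_filter.mp hx).2.2.1, mem_univ _⟩
    rw [Finset.card_eq_sum_card_fiberwise hmaps]
    have hterm : ∀ v ∈ univ.erase (0:ZMod m),
        ((mainAtF m j).filter (fun x => x j = v)).card = m^(B-1-j.val) := by
      intro v hv
      have hv0 : v ≠ 0 := (mem_erase.mp hv).1
      have hset : (mainAtF m j).filter (fun x => x j = v) =
          univ.filter (fun x : Fin (B+1) → ZMod m =>
            (∀ i, i < j → x i = 0) ∧ x j = v ∧ sigma x = gv v) := by
        ext x
        simp only [mainAtF, filter_filter, mem_filter, mem_univ, true_and]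
        constructor
        · rintro ⟨⟨h1, _, h3⟩, h4⟩
          exact ⟨h1, h4, by rw [← h4]; exact h3⟩
        · rintro ⟨h1, h2, h3⟩
          exact ⟨⟨h1, by rw [h2]; exact hv0, by rw [h2]; exact h3⟩, h2⟩
      rw [hset, pjv_card hj v]
    rw [Finset.sum_congr rfl hterm, Finset.sum_const, smul_eq_mul,
      Finset.card_erase_of_mem (mem_univ _), Finset.card_univ, ZMod.card]
  · rw [if_neg hj]
    have hjl : j = Fin.last B := Fin.ext (show j.val = B by have := j.isLt; omega)
    rw [hjl, mainAtF_last_empty hm, card_empty]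

lemma geo (hm1 : 1 ≤ m) : ∀ K, ∑ k ∈ Finset.range K, (m-1) * m^k = m^K - 1 := by
  intro K
  induction K with
  | zero => simp
  | succ K ih =>
    rw [Finset.sum_range_succ, ih]
    have h3 : (m-1) * m^K = m^(K+1) - m^K := by
      rw [Nat.sub_mul, one_mul, ← pow_succ']
    have h1 : 1 ≤ m^K := Nat.one_le_pow _ _ (by omega)
    have h2 : m^K ≤ m^(K+1) := Nat.pow_le_pow_right (by omega) (by omega)
    rw [h3]
    omega

lemma mainAll_card (hm : 3 ≤ m) :
    (univ.filter (mainP (m := m) (B := B))).card = m ^ B - 1 := by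
  have hbi : univ.filter (mainP (m := m) (B := B)) = univ.biUnion (fun j => mainAtF m j) := by
    ext x
    constructor
    · intro hx
      obtain ⟨j, hj⟩ := (mem_filter.mp hx).2
      refine mem_biUnion.mpr ⟨j, mem_univ j, ?_⟩
      unfold mainAtF
      exact mem_filter.mpr ⟨mem_univ x, hj⟩
    · intro hx
      obtain ⟨j, -, hj⟩ := mem_biUnion.mp hx
      unfold mainAtF at hj
      exact mem_filter.mpr ⟨mem_univ x, ⟨j, (mem_filter.mp hj).2⟩⟩
  have hdisj : ∀ j ∈ (univ : Finset (Fin (B+1))), ∀ j' ∈ univ, j ≠ j' →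
      Disjoint (mainAtF m j) (mainAtF m j') := by
    intro j _ j' _ hne
    rw [Finset.disjoint_left]
    intro x hx hx'
    obtain ⟨-, hlow, hnz, -⟩ := mem_filter.mp hx
    obtain ⟨-, hlow', hnz', -⟩ := mem_filter.mp hx'
    rcases lt_trichotomy j j' with h | h | h
    · exact hnz (hlow' j h)
    · exact hne h
    · exact hnz' (hlow j' h)
  rw [hbi, Finset.card_biUnion hdisj]
  rw [Finset.sum_congr rfl (fun j _ => mainAtF_card hm j)]
  rw [Fin.sum_univ_eq_sum_range (fun k => if k < B then (m-1) * m^(B-1-k) else 0) (B+1)]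
  rw [Finset.sum_range_succ, if_neg (by omega), add_zero]
  rw [Finset.sum_congr rfl (fun k hk => if_pos (Finset.mem_range.mp hk))]
  rw [Finset.sum_range_reflect (fun k => (m-1) * m^k) B]
  exact geo (by omega) B

lemma Tcard (hm : 3 ≤ m) :
    (univ.filter (inT (m := m) (B := B))).card = m ^ B + 1 := by
  have h0u : (0 : Fin (B+1) → ZMod m) ≠ uvec B := fun h =>
    fact_one_ne_zero hm (by rw [← uvec_last]; exact (congrFun h (Fin.last B)).symm)
  have h0m : ¬ mainP (0 : Fin (B+1) → ZMod m) := by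
    rintro ⟨j, -, hnz, -⟩; exact hnz rfl
  have hum : ¬ mainP (uvec (m := m) B) := by
    rintro ⟨j, hlow, hnz, hσ⟩
    have hjl : j = Fin.last B := by
      by_contra hjl
      exact hnz (by rw [uvec_apply, if_neg hjl])
    rw [sigma_uvec, hjl, uvec_last] at hσ
    unfold gv at hσ
    rw [if_pos rfl] at hσ
    exact fact_one_ne_zero hm hσ
  have hT : univ.filter (inT (m := m) (B := B)) =
      insert 0 (insert (uvec B) (univ.filter (mainP (m := m) (B := B)))) := by
    ext x
    simp only [mem_filter, mem_univ, true_and, mem_insert, inT]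
  have hnm1 : (uvec (m := m) B) ∉ univ.filter (mainP (m := m) (B := B)) := by
    simp only [mem_filter, mem_univ, true_and]
    exact hum
  have hnm0 : (0 : Fin (B+1) → ZMod m) ∉
      insert (uvec B) (univ.filter (mainP (m := m) (B := B))) := by
    simp only [mem_insert, mem_filter, mem_univ, true_and]
    rintro (h | h)
    · exact h0u h
    · exact h0m h
  rw [hT, card_insert_of_notMem hnm0, card_insert_of_notMem hnm1, mainAll_card hm]
  have h1 : 1 ≤ m^B := Nat.one_le_pow _ _ (by omega)
  omega

end TCard


section BsumUpdate
variable {m : ℕ} {ι γ : Type*} [Fintype ι] [DecidableEq ι] [DecidableEq γ]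

lemma bsum_update (φ : ι → γ) (x : ι → ZMod m) (i : ι) (w : ZMod m) :
    bsum φ (Function.update x i w)
      = Function.update (bsum φ x) (φ i) (bsum φ x (φ i) + (w - x i)) := by
  funext l
  by_cases hl : l = φ i
  · subst hl
    rw [Function.update_self]
    have hmemi : i ∈ univ.filter (fun k => φ k = φ i) :=
      mem_filter.mpr ⟨mem_univ i, rfl⟩
    show ∑ k ∈ univ.filter (fun k => φ k = φ i), Function.update x i w k = _
    rw [Finset.sum_update_of_mem hmemi, ← Finset.erase_eq]
    have h2 : x i + ∑ k ∈ (univ.filter (fun k => φ k = φ i)).erase i, x k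
        = ∑ k ∈ univ.filter (fun k => φ k = φ i), x k :=
      Finset.add_sum_erase _ _ hmemi
    show _ = ∑ k ∈ univ.filter (fun k => φ k = φ i), x k + (w - x i)
    linear_combination h2
  · rw [Function.update_of_ne hl]
    show ∑ k ∈ univ.filter (fun k => φ k = l), Function.update x i w k
        = ∑ k ∈ univ.filter (fun k => φ k = l), x k
    apply Finset.sum_congr rfl
    intro k hk
    have hki : k ≠ i := by
      intro h
      exact hl (by rw [← (mem_filter.mp hk).2, h])
    rw [Function.update_of_ne hki]

end BsumUpdate

lemma NL (d n : ℕ) (hd : 1 ≤ d) (hdn : d < n) :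
    n - ((n-1)/d + 1) = (d-1) * n / d := by
  obtain ⟨d', rfl⟩ : ∃ d', d = d' + 1 := ⟨d - 1, by omega⟩
  set N := n - 1 with hN
  set q := N / (d'+1) with hq
  set r := N % (d'+1) with hr
  have hqr : N = (d'+1)*q + r := (Nat.div_add_mod N (d'+1)).symm
  have hrlt : r < d'+1 := Nat.mod_lt _ (by omega)
  have hrd : r ≤ d' := by omega
  have hn : n = (d'+1)*q + r + 1 := by omega
  have hrep : d' * n = (d'+1) * (d'*q + r) + (d' - r) := by
    rw [hn]
    zify [hrd]
    ring
  have hdiv : d' * n / (d'+1) = d'*q + r := by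
    rw [hrep, Nat.mul_add_div (by omega), Nat.div_eq_of_lt (by omega), add_zero]
  have hgoal : (d' + 1 - 1) = d' := by omega
  rw [hgoal, hdiv]
  have hq2 : (d'+1)*q = d'*q + q := by ring
  have hqr2 : N = d'*q + q + r := by rw [hqr, hq2]
  omega

theorem main_zmod (m d n : ℕ) (hm : 3 ≤ m) (hd : 1 ≤ d) (hdn : d < n) :
    ∃ S : Finset (Fin n → ZMod m),
      S.card = m ^ (n - 1) + m ^ ((d - 1) * n / d) ∧
      ∀ x ∈ S, (S.filter fun y => hammingDist x y = 1).card ≤ d := by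
  haveI : NeZero m := ⟨by omega⟩
  set B : ℕ := (n-1)/d with hB
  have hBn : B + 1 ≤ n := by
    have h1 : (n-1)/d ≤ n-1 := Nat.div_le_self _ _
    omega
  have hblt : ∀ i : Fin n, i.val / d < B + 1 := by
    intro i
    have h1 : i.val ≤ n - 1 := by have := i.isLt; omega
    have h2 : i.val / d ≤ (n-1)/d := Nat.div_le_div_right h1
    omega
  set φ : Fin n → Fin (B+1) := fun i => ⟨i.val / d, hblt i⟩ with hφ
  have hρlt : ∀ l : Fin (B+1), l.val * d < n := by
    intro l
    have h1 : l.val ≤ B := by have := l.isLt; omega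
    have h2 : l.val * d ≤ B * d := Nat.mul_le_mul h1 le_rfl
    have h3 : B * d ≤ n - 1 := by rw [hB]; exact Nat.div_mul_le_self _ _
    omega
  set ρ : Fin (B+1) → Fin n := fun l => ⟨l.val * d, hρlt l⟩ with hρdef
  have hρ : ∀ l, φ (ρ l) = l := by
    intro l
    apply Fin.ext
    show (l.val * d) / d = l.val
    exact Nat.mul_div_cancel _ (by omega)
  have hfib : ∀ l : Fin (B+1), (univ.filter (fun i : Fin n => φ i = l)).card ≤ d := by
    intro l
    have hle : (univ.filter (fun i : Fin n => φ i = l)).card ≤ (Finset.range d).card := by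
      apply Finset.card_le_card_of_injOn (fun i => i.val % d)
      · intro i _
        simp only [Finset.mem_coe, Finset.mem_range]
        exact Nat.mod_lt _ (by omega)
      · intro i hi i' hi' hmod
        simp only [Finset.mem_coe, mem_filter, mem_univ, true_and] at hi hi'
        have e1 : i.val / d = l.val := congrArg Fin.val hi
        have e2 : i'.val / d = l.val := congrArg Fin.val hi'
        have hmod' : i.val % d = i'.val % d := hmod
        apply Fin.ext
        rw [← Nat.div_add_mod i.val d, ← Nat.div_add_mod i'.val d, e1, e2, hmod']
    rw [Finset.card_range] at hle
    exact hle
  set S := univ.filter (fun x : Fin n → ZMod m => inT (bsum φ x)) with hS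
  set T := univ.filter (inT (m := m) (B := B)) with hT
  -- cardinality
  have hmaps : ∀ x ∈ S, bsum φ x ∈ T := fun x hx =>
    mem_filter.mpr ⟨mem_univ _, (mem_filter.mp hx).2⟩
  have hcardS : S.card = ∑ t ∈ T, (S.filter (fun x => bsum φ x = t)).card :=
    Finset.card_eq_sum_card_fiberwise hmaps
  have hfibers : ∀ t ∈ T, (S.filter (fun x => bsum φ x = t)).card = m ^ (n - (B+1)) := by
    intro t ht
    have hSf : S.filter (fun x => bsum φ x = t)
        = univ.filter (fun x : Fin n → ZMod m => bsum φ x = t) := by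
      ext x
      simp only [hS, filter_filter, mem_filter, mem_univ, true_and]
      constructor
      · rintro ⟨-, h⟩; exact h
      · intro h
        exact ⟨by rw [h]; exact (mem_filter.mp ht).2, h⟩
    rw [hSf]
    have hbf := blockfib φ ρ hρ t
    rw [Fintype.card_fin, Fintype.card_fin] at hbf
    have hpow : m ^ n = m ^ (n - (B+1)) * m ^ (B+1) := by
      have hexp : (n - (B+1)) + (B+1) = n := by omega
      rw [← pow_add, hexp]
    rw [hpow] at hbf
    exact Nat.eq_of_mul_eq_mul_right
      (Nat.pow_pos (by omega)) hbf
  rw [Finset.sum_congr rfl hfibers, Finset.sum_const, smul_eq_mul] at hcardS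
  have hTc : T.card = m ^ B + 1 := Tcard hm
  rw [hTc] at hcardS
  have hcard : S.card = m ^ (n-1) + m ^ ((d-1)*n/d) := by
    rw [hcardS, add_mul, one_mul, ← pow_add]
    have hNL : n - (B+1) = (d-1)*n/d := by rw [hB]; exact NL d n hd hdn
    have hexp : B + (n - (B+1)) = n - 1 := by omega
    rw [hexp, hNL]
  -- degree bound
  have hdeg : ∀ x ∈ S, (S.filter (fun y => hammingDist x y = 1)).card ≤ d := by
    intro x hx
    have hxT : inT (bsum φ x) := (mem_filter.mp hx).2
    have hdupd : ∀ (i : Fin n) (w : ZMod m), w ≠ x i →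
        hammingDist (bsum φ x) (bsum φ (Function.update x i w)) = 1 := by
      intro i w hw
      rw [bsum_update]
      apply dist_one_of (φ i)
      · rw [Function.update_self]
        intro hcontra
        exact hw (by linear_combination -hcontra)
      · intro l hl
        rw [Function.update_of_ne hl]
    rcases Finset.eq_empty_or_nonempty (S.filter (fun y => hammingDist x y = 1)) with
      he | ⟨y₀, hy₀⟩
    · rw [he, card_empty]; omega
    · obtain ⟨hy₀S, hy₀d⟩ := mem_filter.mp hy₀
      obtain ⟨i₀, hne₀, heq₀⟩ := exists_of_dist_one hy₀d
      have hy₀upd : y₀ = Function.update x i₀ (y₀ i₀) := eq_update_of_ptwise heq₀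
      have hy₀T : inT (bsum φ y₀) := (mem_filter.mp hy₀S).2
      set l₀ : Fin (B+1) := φ i₀ with hl₀
      set δ₀ : ZMod m := y₀ i₀ - x i₀ with hδ₀
      have hdist₀ : hammingDist (bsum φ x) (bsum φ y₀) = 1 := by
        conv_lhs => rw [hy₀upd]
        exact hdupd i₀ (y₀ i₀) (fun h => hne₀ h.symm)
      have hsub : S.filter (fun y => hammingDist x y = 1) ⊆
          (univ.filter (fun i : Fin n => φ i = l₀)).image
            (fun i => Function.update x i (x i + δ₀)) := by
        intro y hy
        obtain ⟨hyS, hyd⟩ := mem_filter.mp hy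
        obtain ⟨i, hnei, heqi⟩ := exists_of_dist_one hyd
        have hyupd : y = Function.update x i (y i) := eq_update_of_ptwise heqi
        have hyT : inT (bsum φ y) := (mem_filter.mp hyS).2
        have hdisti : hammingDist (bsum φ x) (bsum φ y) = 1 := by
          conv_lhs => rw [hyupd]
          exact hdupd i (y i) (fun h => hnei h.symm)
        have huni : bsum φ y = bsum φ y₀ := uniq hm hxT hyT hy₀T hdisti hdist₀
        rw [hyupd, bsum_update] at huni
        rw [hy₀upd, bsum_update] at huni
        by_cases hll : φ i = l₀
        · have hii : φ i = φ i₀ := hll.trans hl₀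
          have hval := congrFun huni (φ i)
          rw [Function.update_self, hii, Function.update_self] at hval
          have hyi : x i + δ₀ = y i := by
            rw [hδ₀]
            linear_combination -hval
          apply Finset.mem_image.mpr
          refine ⟨i, mem_filter.mpr ⟨mem_univ _, hll⟩, ?_⟩
          rw [hyi]
          exact hyupd.symm
        · exfalso
          have hval := congrFun huni (φ i)
          rw [Function.update_self, Function.update_of_ne hll] at hval
          exact hnei (by linear_combination -hval)
      calc (S.filter (fun y => hammingDist x y = 1)).card
          ≤ ((univ.filter (fun i : Fin n => φ i = l₀)).image
              (fun i => Function.update x i (x i + δ₀))).card := Finset.card_le_card hsub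
        _ ≤ (univ.filter (fun i : Fin n => φ i = l₀)).card := Finset.card_image_le
        _ ≤ d := hfib l₀
  exact ⟨S, hcard, hdeg⟩


end LSSD


/-- Let `m ≥ 3` and `1 ≤ d < n`. Then `H(n,m)` has an induced subgraph on exactly
`m^(n-1) + m^(⌊(d-1)n/d⌋)` vertices with maximum degree at most `d`. -/
theorem large_subgraph_small_degree (m d n : ℕ) (hm : 3 ≤ m) (hd : 1 ≤ d) (hdn : d < n) :
    ∃ S : Finset (Fin n → Fin m),
      S.card = m ^ (n - 1) + m ^ ((d - 1) * n / d) ∧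
      ∀ x ∈ S, degIn S x ≤ d := by
  haveI : NeZero m := ⟨by omega⟩
  obtain ⟨S₀, hcard, hdeg⟩ := LSSD.main_zmod m d n hm hd hdn
  set e : ZMod m ≃ Fin m := Fintype.equivFinOfCardEq (ZMod.card m) with he
  set F : (Fin n → ZMod m) → (Fin n → Fin m) := fun x => e ∘ x with hF
  have hFinj : Function.Injective F := by
    intro a b h
    funext i
    exact e.injective (congrFun h i)
  have hFdist : ∀ x y : Fin n → ZMod m, hammingDist (F x) (F y) = hammingDist x y := by
    intro x y
    unfold hammingDist
    congr 1
    apply Finset.filter_congr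
    intro i _
    simp only [hF, Function.comp_apply, ne_eq]
    rw [EmbeddingLike.apply_eq_iff_eq]
  refine ⟨S₀.image F, ?_, ?_⟩
  · rw [Finset.card_image_of_injective _ hFinj]
    exact hcard
  · intro x' hx'
    obtain ⟨x, hxS, rfl⟩ := Finset.mem_image.mp hx'
    unfold degIn
    have himg : (S₀.image F).filter (fun y => hammingDist (F x) y = 1)
        = (S₀.filter (fun y => hammingDist x y = 1)).image F := by
      ext y'
      simp only [mem_filter, Finset.mem_image]
      constructor
      · rintro ⟨⟨y, hyS, rfl⟩, hdist⟩
        exact ⟨y, ⟨hyS, by rw [← hFdist x y]; exact hdist⟩, rfl⟩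
      · rintro ⟨y, ⟨hyS, hdist⟩, rfl⟩
        exact ⟨⟨y, hyS, rfl⟩, by rw [hFdist]; exact hdist⟩
    rw [himg, Finset.card_image_of_injective _ hFinj]
    exact hdeg x hxS
end

section
/- Let m ≥ 3 and let d, n be integers with n ≤ d ≤ (m−1)n. Then the Hamming graph H(n,m) has an induced subgraph G on exactly ⌈(d+1)/n⌉·m^{n−1} vertices whose maximum degree satisfies Δ(G) ≤ d. -/
open Finset

lemma card_filter_val_lt (m k : ℕ) (hk : k ≤ m) :
    ((univ : Finset (Fin m)).filter fun c => c.val < k).card = k := by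
  have : ((univ : Finset (Fin m)).filter fun c => c.val < k) =
      (univ : Finset (Fin k)).map ⟨Fin.castLE hk, Fin.castLE_injective hk⟩ := by
    ext c
    simp only [mem_filter, mem_univ, true_and, mem_map, Function.Embedding.coeFn_mk]
    constructor
    · intro h; exact ⟨⟨c.val, h⟩, by ext; simp⟩
    · rintro ⟨i, rfl⟩; exact i.isLt
  rw [this, card_map, card_univ, Fintype.card_fin]

lemma card_filter_shift (m k : ℕ) [NeZero m] (s : Fin m) (p : Fin m → Prop)
    [DecidablePred p] :
    ((univ : Finset (Fin m)).filter fun a => p (a + s)).card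
      = ((univ : Finset (Fin m)).filter p).card := by
  have : ((univ : Finset (Fin m)).filter fun a => p (a + s)) =
      ((univ : Finset (Fin m)).filter p).image (fun c => c - s) := by
    ext a
    simp only [mem_filter, mem_univ, true_and, mem_image]
    constructor
    · intro h; exact ⟨a + s, h, by simp⟩
    · rintro ⟨c, hc, rfl⟩; simpa using hc
  rw [this, card_image_of_injective _ (sub_left_injective)]

lemma card_filter_ne_lt (m k : ℕ) (hk : k ≤ m) (s : Fin m) (hs : s.val < k) :
    ((univ : Finset (Fin m)).filter fun c => c ≠ s ∧ c.val < k).card = k - 1 := by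
  have : ((univ : Finset (Fin m)).filter fun c => c ≠ s ∧ c.val < k) =
      ((univ : Finset (Fin m)).filter fun c => c.val < k).erase s := by
    ext c
    simp only [mem_filter, mem_univ, true_and, mem_erase]
  rw [this, card_erase_of_mem (by simp [hs]), card_filter_val_lt m k hk]

/-- Let `m ≥ 3` and `n ≤ d ≤ (m-1)n`. Then `H(n,m)` has an induced subgraph on exactly
`⌈(d+1)/n⌉ · m^(n-1)` vertices (note `⌈(d+1)/n⌉ = (d+n)/n` in natural-number division)
with maximum degree at most `d`. -/
theorem large_subgraph_small_degree' (m d n : ℕ) (hm : 3 ≤ m) (hnd : n ≤ d)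
    (hdmn : d ≤ (m - 1) * n) (hn : 1 ≤ n) :
    ∃ S : Finset (Fin n → Fin m),
      S.card = ((d + n) / n) * m ^ (n - 1) ∧
      ∀ x ∈ S, degIn S x ≤ d := by
  haveI : NeZero m := ⟨by omega⟩
  obtain ⟨n', rfl⟩ : ∃ n', n = n' + 1 := ⟨n - 1, by omega⟩
  set n := n' + 1 with hn'
  have hn0 : 0 < n := by omega
  set k : ℕ := d / n + 1 with hkdef
  have hkm : k ≤ m := by
    have h1 : d / n ≤ (m - 1) * n / n := Nat.div_le_div_right hdmn
    rw [Nat.mul_div_cancel _ hn0] at h1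
    omega
  have hdk : (d + n) / n = k := by
    rw [hkdef, Nat.add_div_right _ hn0]
  refine ⟨univ.filter fun x => (∑ i, x i : Fin m).val < k, ?_, ?_⟩
  · -- cardinality
    rw [card_eq_sum_card_fiberwise (f := fun x => Fin.tail x)
      (t := (univ : Finset (Fin n' → Fin m))) (fun x _ => mem_univ _)]
    have hfib : ∀ v : Fin n' → Fin m,
        (((univ : Finset (Fin n → Fin m)).filter fun x => (∑ i, x i : Fin m).val < k).filter
          fun x => Fin.tail x = v).card = k := by
      intro v
      rw [Finset.card_nbij' (i := fun x => x 0)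
        (j := fun a => Fin.cons a v)
        (t := (univ : Finset (Fin m)).filter fun a => ((a + ∑ j, v j : Fin m)).val < k)]
      · exact card_filter_shift m k (∑ j, v j) (fun c => c.val < k) ▸
          card_filter_val_lt m k hkm
      · intro x hx
        simp only [mem_coe, mem_filter, mem_univ, true_and] at hx ⊢
        obtain ⟨hxs, hxt⟩ := hx
        have : (∑ i, x i : Fin m) = x 0 + ∑ j, v j := by
          rw [Fin.sum_univ_succ]
          congr 1
          exact Finset.sum_congr rfl fun j _ => by rw [← hxt]; rfl
        rwa [this] at hxs
      · intro a ha
        simp only [mem_coe, mem_filter, mem_univ, true_and] at ha ⊢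
        constructor
        · rw [Fin.sum_univ_succ]
          simpa using ha
        · funext j; simp [Fin.tail]
      · intro x hx
        simp only [mem_coe, mem_filter, mem_univ, true_and] at hx
        conv_rhs => rw [← Fin.cons_self_tail x]
        rw [hx.2]
      · intro a ha
        simp
    rw [Finset.sum_congr rfl fun v _ => hfib v]
    simp [hdk, mul_comm]
    simp [hn', mul_comm]
  · -- degree bound
    intro x hx
    simp only [mem_filter, mem_univ, true_and] at hx
    set s : Fin m := ∑ i, x i with hsdef
    unfold degIn
    have hsub : ((univ.filter fun x => (∑ i, x i : Fin m).val < k).filter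
        fun y => hammingDist x y = 1) ⊆
        univ.biUnion fun i : Fin n =>
          ((univ : Finset (Fin m)).filter fun b =>
            b ≠ x i ∧ ((∑ j, Function.update x i b j : Fin m)).val < k).image
            (Function.update x i) := by
      intro y hy
      simp only [mem_filter, mem_univ, true_and] at hy
      obtain ⟨hyS, hyd⟩ := hy
      unfold hammingDist at hyd
      rw [Finset.card_eq_one] at hyd
      obtain ⟨i, hi⟩ := hyd
      have hyi : x i ≠ y i := by
        have : i ∈ ({i} : Finset (Fin n)) := mem_singleton_self i
        rw [← hi] at this
        simpa using this
      have hyu : y = Function.update x i (y i) := by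
        funext j
        by_cases hj : j = i
        · subst hj; simp
        · rw [Function.update_of_ne hj]
          by_contra hne
          have : j ∈ ({i} : Finset (Fin n)) := by
            rw [← hi]; simp [Ne.symm hne]
          simp [hj] at this
      simp only [mem_biUnion, mem_univ, true_and, mem_image, mem_filter]
      exact ⟨i, y i, ⟨Ne.symm hyi, by rw [← hyu]; exact hyS⟩, hyu.symm⟩
    calc ((univ.filter fun x => (∑ i, x i : Fin m).val < k).filter
        fun y => hammingDist x y = 1).card
        ≤ (univ.biUnion fun i : Fin n =>
          ((univ : Finset (Fin m)).filter fun b =>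
            b ≠ x i ∧ ((∑ j, Function.update x i b j : Fin m)).val < k).image
            (Function.update x i)).card := card_le_card hsub
      _ ≤ ∑ i : Fin n, (((univ : Finset (Fin m)).filter fun b =>
            b ≠ x i ∧ ((∑ j, Function.update x i b j : Fin m)).val < k).image
            (Function.update x i)).card := card_biUnion_le
      _ ≤ ∑ i : Fin n, (k - 1) := by
          apply Finset.sum_le_sum
          intro i _
          refine le_trans Finset.card_image_le ?_
          have hsum : ∀ b : Fin m, (∑ j, Function.update x i b j : Fin m) = b + (s - x i) := by
            intro b
            rw [Finset.sum_update_of_mem (mem_univ i)]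
            congr 1
            rw [Finset.sum_sdiff_eq_sub (Finset.singleton_subset_iff.mpr (mem_univ i)),
              Finset.sum_singleton]
          have hpred : ((univ : Finset (Fin m)).filter fun b =>
              b ≠ x i ∧ ((∑ j, Function.update x i b j : Fin m)).val < k) =
              ((univ : Finset (Fin m)).filter fun b =>
                (b + (s - x i) ≠ s ∧ (b + (s - x i)).val < k)) := by
            apply Finset.filter_congr
            intro b _
            rw [hsum b]
            constructor
            · rintro ⟨h1, h2⟩
              exact ⟨fun h => h1 (by rw [eq_sub_of_add_eq h, sub_sub_cancel]), h2⟩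
            · rintro ⟨h1, h2⟩
              exact ⟨fun h => h1 (by rw [h]; simp), h2⟩
          rw [hpred, card_filter_shift m k (s - x i) (fun c => c ≠ s ∧ c.val < k),
            card_filter_ne_lt m k hkm s hx]
      _ = n * (k - 1) := by simp [mul_comm]
      _ ≤ d := by
          have : k - 1 = d / n := by omega
          rw [this, mul_comm]
          exact Nat.div_mul_le_self d n
end

section
/- Let m ≥ 2 and n ≥ 1 be integers and let ε > 0 be a real number. Then every induced subgraph G of the Hamming graph H(n,m) on more than (1/m + ε)·m^n vertices has maximum degree Δ(G) ≥ 2εn / ((m−1)(1/m + ε)). -/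
open Finset

section Aux

variable {n m : ℕ}

private lemma two_mul_le_aux : ∀ t : ℕ, 2 * t ≤ t * (t - 1) + 2 := by
  intro t
  rcases t with _ | r
  · simp
  rcases r with _ | q
  · simp
  have h : 2 * (q + 1) ≤ (q + 2) * (q + 1) :=
    mul_le_mul_left (show 2 ≤ q + 2 by omega) (q + 1)
  calc 2 * (q + 2) = 2 * (q + 1) + 2 := by ring
    _ ≤ (q + 2) * (q + 1) + 2 := Nat.add_le_add_right h 2
    _ = (q + 2) * (q + 2 - 1) + 2 := by norm_num

private lemma hammingDist_eq_one_iff (x y : Fin n → Fin m) :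
    hammingDist x y = 1 ↔ ∃ i, x i ≠ y i ∧ ∀ j, j ≠ i → x j = y j := by
  show (Finset.univ.filter fun i => x i ≠ y i).card = 1 ↔ _
  rw [Finset.card_eq_one]
  constructor
  · rintro ⟨i, hi⟩
    refine ⟨i, ?_, ?_⟩
    · have : i ∈ ({i} : Finset (Fin n)) := Finset.mem_singleton_self i
      rw [← hi] at this
      simpa using this
    · intro j hj
      by_contra hne
      have : j ∈ ({i} : Finset (Fin n)) := by
        rw [← hi]; simpa using hne
      exact hj (Finset.mem_singleton.mp this)
  · rintro ⟨i, hi, hj⟩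
    refine ⟨i, ?_⟩
    ext j
    simp only [Finset.mem_filter, Finset.mem_univ, true_and, Finset.mem_singleton]
    constructor
    · intro h; by_contra hne; exact h (hj j hne)
    · rintro rfl; exact hi

private lemma degIn_eq_sum (S : Finset (Fin n → Fin m)) (x : Fin n → Fin m) :
    degIn S x = ∑ i : Fin n,
      (S.filter fun y => x i ≠ y i ∧ ∀ j, j ≠ i → x j = y j).card := by
  unfold degIn
  rw [← Finset.card_biUnion]
  · congr 1
    ext y
    simp only [Finset.mem_filter, Finset.mem_biUnion, Finset.mem_univ, true_and]
    rw [hammingDist_eq_one_iff]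
    tauto
  · intro i _ i' _ hne
    simp only [Finset.disjoint_left, Finset.mem_filter]
    rintro y ⟨_, hyi, hag⟩ ⟨_, hyi', hag'⟩
    exact hyi (hag' i hne)

private lemma card_line_reps [NeZero m] (i : Fin n) :
    (Finset.univ.filter fun f : Fin n → Fin m => f i = 0).card = m ^ (n - 1) := by
  rw [← Fintype.card_subtype]
  have e : {f : Fin n → Fin m // f i = 0} ≃ ({j : Fin n // j ≠ i} → Fin m) :=
    { toFun := fun f j => f.1 j.1
      invFun := fun g => ⟨fun j => if h : j = i then 0 else g ⟨j, h⟩, by simp⟩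
      left_inv := by
        rintro ⟨f, hf⟩
        ext j
        by_cases h : j = i
        · subst h; simp [hf]
        · simp [h]
      right_inv := by
        intro g
        funext j
        simp [j.2] }
  rw [Fintype.card_congr e, Fintype.card_fun, Fintype.card_fin]
  congr 1
  calc Fintype.card {j : Fin n // j ≠ i}
      = Fintype.card (Fin n) - Fintype.card {j : Fin n // j = i} :=
        Fintype.card_subtype_compl _
    _ = n - 1 := by rw [Fintype.card_subtype_eq]; simp

private lemma direction_bound [NeZero m] (S : Finset (Fin n → Fin m)) (i : Fin n) :
    2 * S.card ≤ (∑ x ∈ S,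
      (S.filter fun y => x i ≠ y i ∧ ∀ j, j ≠ i → x j = y j).card) + 2 * m ^ (n - 1) := by
  classical
  set π : (Fin n → Fin m) → (Fin n → Fin m) := fun x => Function.update x i 0 with hπ
  set L : Finset (Fin n → Fin m) := Finset.univ.filter (fun f => f i = 0) with hL
  have hmaps : ∀ x ∈ S, π x ∈ L := fun x _ => by simp [π, L]
  set k : (Fin n → Fin m) → ℕ := fun ℓ => (S.filter fun x => π x = ℓ).card with hk
  have hcard : S.card = ∑ ℓ ∈ L, k ℓ := Finset.card_eq_sum_card_fiberwise hmaps
  have hsum : ∑ x ∈ S,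
      (S.filter fun y => x i ≠ y i ∧ ∀ j, j ≠ i → x j = y j).card
      = ∑ ℓ ∈ L, k ℓ * (k ℓ - 1) := by
    rw [← Finset.sum_fiberwise_of_maps_to hmaps]
    refine Finset.sum_congr rfl fun ℓ hℓ => ?_
    have key : ∀ x ∈ S.filter (fun x => π x = ℓ),
        (S.filter fun y => x i ≠ y i ∧ ∀ j, j ≠ i → x j = y j).card = k ℓ - 1 := by
      intro x hx
      obtain ⟨hxS, hxℓ⟩ := Finset.mem_filter.mp hx
      have hset : (S.filter fun y => x i ≠ y i ∧ ∀ j, j ≠ i → x j = y j)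
          = (S.filter fun y => π y = ℓ).erase x := by
        ext y
        simp only [Finset.mem_filter, Finset.mem_erase]
        constructor
        · rintro ⟨hyS, hne, hag⟩
          refine ⟨?_, hyS, ?_⟩
          · rintro rfl; exact hne rfl
          · rw [← hxℓ]
            funext j
            by_cases h : j = i
            · subst h
              show Function.update y j 0 j = Function.update x j 0 j
              rw [Function.update_self, Function.update_self]
            · show Function.update y i 0 j = Function.update x i 0 j
              rw [Function.update_of_ne h, Function.update_of_ne h]
              exact (hag j h).symm
        · rintro ⟨hyx, hyS, hyℓ⟩
          have hag : ∀ j, j ≠ i → x j = y j := by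
            intro j hj
            have h2 : Function.update y i 0 j = Function.update x i 0 j :=
              congrFun (hyℓ.trans hxℓ.symm) j
            rw [Function.update_of_ne hj, Function.update_of_ne hj] at h2
            exact h2.symm
          refine ⟨hyS, ?_, hag⟩
          intro hxy
          apply hyx
          funext j
          by_cases h : j = i
          · subst h; exact hxy.symm
          · exact (hag j h).symm
      have hmem : x ∈ S.filter (fun y => π y = ℓ) := Finset.mem_filter.mpr ⟨hxS, hxℓ⟩
      rw [hset, Finset.card_erase_of_mem hmem]
    rw [Finset.sum_congr rfl key, Finset.sum_const, smul_eq_mul]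
  have hLcard : L.card = m ^ (n - 1) := card_line_reps i
  have hpt := two_mul_le_aux
  calc 2 * S.card = ∑ ℓ ∈ L, 2 * k ℓ := by rw [hcard, Finset.mul_sum]
    _ ≤ ∑ ℓ ∈ L, (k ℓ * (k ℓ - 1) + 2) := Finset.sum_le_sum fun ℓ _ => hpt (k ℓ)
    _ = (∑ ℓ ∈ L, k ℓ * (k ℓ - 1)) + 2 * L.card := by
        rw [Finset.sum_add_distrib, Finset.sum_const, smul_eq_mul, mul_comm]
    _ = _ := by rw [← hsum, hLcard]

end Aux

/-- Let `m ≥ 2`, `n ≥ 1` and `ε > 0`. Every induced subgraph of `H(n,m)` on more than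
`(1/m + ε)·m^n` vertices has maximum degree at least `2εn / ((m-1)(1/m + ε))`. -/
theorem maxDegree_of_large_subgraph (m n : ℕ) (hm : 2 ≤ m) (hn : 1 ≤ n)
    (ε : ℝ) (hε : 0 < ε)
    (S : Finset (Fin n → Fin m))
    (hcard : (1 / m + ε) * (m : ℝ) ^ n < S.card) :
    ∃ x ∈ S, 2 * ε * n / (((m : ℝ) - 1) * (1 / m + ε)) ≤ (degIn S x : ℝ) := by
  haveI : NeZero m := ⟨by omega⟩
  have hm2 : (2 : ℝ) ≤ (m : ℝ) := by exact_mod_cast hm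
  have hmpos : (0 : ℝ) < m := by linarith
  have hn1 : (1 : ℝ) ≤ (n : ℝ) := by exact_mod_cast hn
  -- total degree bound in ℕ
  have hnat : 2 * n * S.card ≤ (∑ x ∈ S, degIn S x) + 2 * n * m ^ (n - 1) := by
    have h1 : ∑ x ∈ S, degIn S x = ∑ i : Fin n, ∑ x ∈ S,
        (S.filter fun y => x i ≠ y i ∧ ∀ j, j ≠ i → x j = y j).card := by
      exact (Finset.sum_congr rfl fun x _ => degIn_eq_sum S x).trans Finset.sum_comm
    have h2 : ∑ i : Fin n, 2 * S.card ≤ ∑ i : Fin n, ((∑ x ∈ S,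
        (S.filter fun y => x i ≠ y i ∧ ∀ j, j ≠ i → x j = y j).card) + 2 * m ^ (n - 1)) :=
      Finset.sum_le_sum fun i _ => direction_bound S i
    simp only [Finset.sum_add_distrib, Finset.sum_const, Finset.card_univ,
      Fintype.card_fin, smul_eq_mul] at h2
    rw [h1]
    linarith [h2]
  -- real setup
  set s : ℝ := (S.card : ℝ) with hs
  set D : ℝ := ((∑ x ∈ S, degIn S x : ℕ) : ℝ) with hD
  set P : ℝ := (m : ℝ) ^ (n - 1) with hP
  have hPpos : 0 < P := by positivity
  have hmn : (m : ℝ) ^ n = (m : ℝ) * P := by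
    rw [hP, ← pow_succ']
    congr 1
    omega
  have hεm : (0 : ℝ) < 1 / m + ε := by positivity
  have hspos : (0 : ℝ) < s := lt_trans (by positivity) hcard
  have hDge : 2 * n * s - 2 * n * P ≤ D := by
    have := hnat
    have hcast : (2 * n * S.card : ℝ) ≤ D + 2 * n * P := by
      rw [hD, hP]
      exact_mod_cast this
    push_cast at hcast ⊢
    linarith
  have hs0 : s ≠ 0 := ne_of_gt hspos
  have hSne : S.Nonempty := Finset.card_pos.mp (Nat.cast_pos.mp (hs ▸ hspos))
  -- pick a vertex of at least average degree
  have havg : ∃ x ∈ S, D / s ≤ (degIn S x : ℝ) := by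
    apply Finset.exists_le_of_sum_le hSne
    have : ∑ x ∈ S, (degIn S x : ℝ) = D := by
      rw [hD]; push_cast; rfl
    rw [this, Finset.sum_const, nsmul_eq_mul, ← hs]
    have : s * (D / s) = D := by field_simp
    linarith
  obtain ⟨x, hxS, hx⟩ := havg
  refine ⟨x, hxS, le_trans ?_ hx⟩
  -- final algebra: target ≤ D / s
  set c : ℝ := ((m : ℝ) - 1) * (1 / m + ε) with hcdef
  have hc : (0 : ℝ) < c := by
    rw [hcdef]; apply mul_pos _ hεm; linarith
  have hce : (0 : ℝ) < c - ε := by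
    have h1 : 1 * (1 / (m : ℝ) + ε) ≤ c := by
      rw [hcdef]
      exact mul_le_mul_of_nonneg_right (by linarith) hεm.le
    have h2 : (0 : ℝ) < 1 / (m : ℝ) := by positivity
    linarith
  rw [div_le_div_iff₀ hc hspos]
  have hsl : (1 / m + ε) * ((m : ℝ) * P) < s := by rw [← hmn]; exact hcard
  have hunit : (0:ℝ) ≤ 1 + ε * m := by positivity
  have key1 : c ≤ (c - ε) * (1 + ε * (m : ℝ)) := by
    have e : (c - ε) * (1 + ε * (m : ℝ)) - c = ε * ((m : ℝ) - 2) * (1 + ε * m) := by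
      rw [hcdef]; field_simp; ring
    have hprod : (0:ℝ) ≤ ε * ((m : ℝ) - 2) * (1 + ε * m) :=
      mul_nonneg (mul_nonneg hε.le (by linarith)) hunit
    linarith
  have key2 : c * P ≤ (c - ε) * s := by
    have step2 : (c - ε) * ((1 / (m:ℝ) + ε) * ((m : ℝ) * P)) ≤ (c - ε) * s :=
      mul_le_mul_of_nonneg_left hsl.le hce.le
    have e2 : (c - ε) * ((1 / (m:ℝ) + ε) * ((m : ℝ) * P)) = ((c - ε) * (1 + ε * m)) * P := by
      field_simp
    have e3 : c * P ≤ ((c - ε) * (1 + ε * (m:ℝ))) * P :=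
      mul_le_mul_of_nonneg_right key1 hPpos.le
    rw [e2] at step2
    linarith
  have key3 : 2 * ε * (n : ℝ) * s ≤ c * (2 * n * s - 2 * n * P) := by
    nlinarith [mul_nonneg (show (0:ℝ) ≤ 2 * (n : ℝ) by positivity)
      (sub_nonneg.mpr key2)]
  have step1 : c * (2 * n * s - 2 * n * P) ≤ c * D :=
    mul_le_mul_of_nonneg_left hDge hc.le
  linarith
end

section
/- Let m ≥ 3 and n ≥ 1 be integers. Then every induced subgraph G of the Hamming graph H(n,m) on more than (1/2)·m^n vertices has maximum degree Δ(G) ≥ √((m−1)n/2). -/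
open Finset

namespace MajorityAux

variable {n m : ℕ}

/-- Representative of the line through `x` in direction `i`. -/
def lineRep [NeZero m] (i : Fin n) (x : Fin n → Fin m) : Fin n → Fin m :=
  Function.update x i 0

lemma lineRep_apply_self [NeZero m] (i : Fin n) (x : Fin n → Fin m) :
    lineRep i x i = 0 := by simp [lineRep]

lemma lineRep_eq_iff [NeZero m] {i : Fin n} {x y : Fin n → Fin m} :
    lineRep i x = lineRep i y ↔ ∀ j, j ≠ i → x j = y j := by
  constructor
  · intro h j hj
    have := congrFun h j
    simpa [lineRep, Function.update_of_ne hj] using this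
  · intro h
    funext j
    by_cases hj : j = i
    · subst hj; simp [lineRep]
    · simp [lineRep, Function.update_of_ne hj, h j hj]

lemma hamming_one_iff [NeZero m] {x y : Fin n → Fin m} :
    hammingDist x y = 1 ↔ ∃ i, y ≠ x ∧ lineRep i y = lineRep i x := by
  unfold hammingDist
  rw [Finset.card_eq_one]
  constructor
  · rintro ⟨i, hi⟩
    have hxi : x i ≠ y i := by
      have h := hi ▸ Finset.mem_singleton_self i
      simpa using h
    refine ⟨i, fun h => hxi (by rw [h]), ?_⟩
    rw [lineRep_eq_iff]
    intro j hj
    by_contra hne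
    have hjmem : j ∈ Finset.filter (fun k => x k ≠ y k) Finset.univ := by
      simp only [Finset.mem_filter, Finset.mem_univ, true_and]
      exact fun h => hne h.symm
    rw [hi, Finset.mem_singleton] at hjmem
    exact hj hjmem
  · rintro ⟨i, hne, hline⟩
    rw [lineRep_eq_iff] at hline
    refine ⟨i, ?_⟩
    have hxi : x i ≠ y i := by
      intro h
      apply hne
      funext j
      by_cases hj : j = i
      · subst hj; exact h.symm
      · exact hline j hj
    ext j
    simp only [Finset.mem_filter, Finset.mem_univ, true_and, Finset.mem_singleton]
    constructor
    · intro hj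
      by_contra hji
      exact hj ((hline j hji).symm)
    · intro hj
      subst hj
      exact hxi

lemma degIn_eq_sum [NeZero m] (S : Finset (Fin n → Fin m)) (x : Fin n → Fin m) :
    degIn S x = ∑ i : Fin n, (S.filter fun y => y ≠ x ∧ lineRep i y = lineRep i x).card := by
  classical
  rw [degIn, ← Finset.card_biUnion]
  · congr 1
    ext y
    simp only [Finset.mem_biUnion, Finset.mem_filter, Finset.mem_univ, true_and]
    constructor
    · rintro ⟨hyS, h1⟩
      obtain ⟨i, hne, hline⟩ := hamming_one_iff.mp h1
      exact ⟨i, hyS, hne, hline⟩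
    · rintro ⟨i, hyS, hne, hline⟩
      exact ⟨hyS, hamming_one_iff.mpr ⟨i, hne, hline⟩⟩
  · intro i _ j _ hij
    rw [Function.onFun, Finset.disjoint_left]
    rintro y hy hy'
    simp only [Finset.mem_filter] at hy hy'
    obtain ⟨-, hne, h1⟩ := hy
    obtain ⟨-, -, h2⟩ := hy'
    rw [lineRep_eq_iff] at h1 h2
    apply hne
    funext k
    by_cases hk : k = i
    · exact h2 k (by rw [hk]; exact hij)
    · exact h1 k hk

lemma card_image_lineRep_le [NeZero m] (S : Finset (Fin n → Fin m)) (i : Fin n) :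
    (S.image (lineRep i)).card ≤ m ^ (n - 1) := by
  classical
  have hinj : Set.InjOn (fun (b : Fin n → Fin m) (j : {j : Fin n // j ≠ i}) => b j.1)
      ↑(S.image (lineRep i)) := by
    intro b1 hb1 b2 hb2 h
    obtain ⟨x1, -, rfl⟩ := Finset.mem_image.mp (Finset.mem_coe.mp hb1)
    obtain ⟨x2, -, rfl⟩ := Finset.mem_image.mp (Finset.mem_coe.mp hb2)
    funext j
    by_cases hj : j = i
    · subst hj; rw [lineRep_apply_self, lineRep_apply_self]
    · exact congrFun h ⟨j, hj⟩
  calc (S.image (lineRep i)).card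
      ≤ (Finset.univ : Finset ({j : Fin n // j ≠ i} → Fin m)).card :=
        Finset.card_le_card_of_injOn _ (fun _ _ => Finset.mem_univ _) hinj
    _ = m ^ (n - 1) := by
        rw [Finset.card_univ, Fintype.card_fun]
        have hcard : Fintype.card {j : Fin n // j ≠ i} = n - 1 := by
          simp [Fintype.card_subtype_compl]
        rw [hcard, Fintype.card_fin]

lemma per_coord [NeZero m] (S : Finset (Fin n → Fin m)) (i : Fin n) :
    S.card ^ 2 ≤ m ^ (n - 1) *
      ((∑ x ∈ S, (S.filter fun y => y ≠ x ∧ lineRep i y = lineRep i x).card) + S.card) := by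
  classical
  set T := S.image (lineRep i) with hT
  set s : (Fin n → Fin m) → ℕ := fun b => (S.filter fun x => lineRep i x = b).card with hs
  have hmem : ∀ x ∈ S, lineRep i x ∈ T := fun x hx => Finset.mem_image_of_mem _ hx
  have h1 : S.card = ∑ b ∈ T, s b := Finset.card_eq_sum_card_fiberwise hmem
  have h2 : (∑ x ∈ S, (S.filter fun y => y ≠ x ∧ lineRep i y = lineRep i x).card) + S.card
      = ∑ b ∈ T, s b * s b := by
    have hsum : ∑ x ∈ S, ((S.filter fun y => y ≠ x ∧ lineRep i y = lineRep i x).card + 1)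
        = ∑ b ∈ T, ∑ x ∈ S.filter (fun x => lineRep i x = b),
            ((S.filter fun y => y ≠ x ∧ lineRep i y = lineRep i x).card + 1) :=
      (Finset.sum_fiberwise_of_maps_to hmem _).symm
    have hinner : ∀ b ∈ T, ∀ x ∈ S.filter (fun x => lineRep i x = b),
        (S.filter fun y => y ≠ x ∧ lineRep i y = lineRep i x).card + 1 = s b := by
      intro b hb x hx
      obtain ⟨hxS, hxb⟩ := Finset.mem_filter.mp hx
      have hset : (S.filter fun y => y ≠ x ∧ lineRep i y = lineRep i x)
          = (S.filter fun y => lineRep i y = b).erase x := by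
        ext y
        simp only [Finset.mem_filter, Finset.mem_erase, hxb]
        tauto
      have hxmem : x ∈ S.filter fun y => lineRep i y = b := Finset.mem_filter.mpr ⟨hxS, hxb⟩
      rw [hset, Finset.card_erase_of_mem hxmem]
      have hsb : s b = (S.filter fun y => lineRep i y = b).card := rfl
      have hpos : 1 ≤ (S.filter fun y => lineRep i y = b).card :=
        Finset.card_pos.mpr ⟨x, hxmem⟩
      omega
    calc (∑ x ∈ S, (S.filter fun y => y ≠ x ∧ lineRep i y = lineRep i x).card) + S.card
        = ∑ x ∈ S, ((S.filter fun y => y ≠ x ∧ lineRep i y = lineRep i x).card + 1) := by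
          rw [Finset.sum_add_distrib, Finset.sum_const, smul_eq_mul, mul_one]
      _ = ∑ b ∈ T, ∑ x ∈ S.filter (fun x => lineRep i x = b),
            ((S.filter fun y => y ≠ x ∧ lineRep i y = lineRep i x).card + 1) := hsum
      _ = ∑ b ∈ T, ∑ _x ∈ S.filter (fun x => lineRep i x = b), s b :=
          Finset.sum_congr rfl fun b hb => Finset.sum_congr rfl (hinner b hb)
      _ = ∑ b ∈ T, s b * s b := by
          refine Finset.sum_congr rfl fun b hb => ?_
          rw [Finset.sum_const, smul_eq_mul]
  have h3 : (∑ b ∈ T, s b) ^ 2 ≤ T.card * ∑ b ∈ T, s b * s b := by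
    have := sq_sum_le_card_mul_sum_sq (s := T) (f := fun b => (s b : ℝ))
    have h' : ((∑ b ∈ T, s b : ℕ) : ℝ) ^ 2 ≤ (T.card : ℝ) * ((∑ b ∈ T, s b * s b : ℕ) : ℝ) := by
      push_cast
      simpa [sq] using this
    exact_mod_cast h'
  have h4 : T.card ≤ m ^ (n - 1) := card_image_lineRep_le S i
  calc S.card ^ 2 = (∑ b ∈ T, s b) ^ 2 := by rw [h1]
    _ ≤ T.card * ∑ b ∈ T, s b * s b := h3
    _ ≤ m ^ (n - 1) * ∑ b ∈ T, s b * s b := Nat.mul_le_mul_right _ h4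
    _ = m ^ (n - 1) * ((∑ x ∈ S, (S.filter fun y => y ≠ x ∧ lineRep i y = lineRep i x).card)
        + S.card) := by rw [h2]

end MajorityAux

open MajorityAux in
/-- Let `m ≥ 3` and `n ≥ 1`. Every induced subgraph of `H(n,m)` on more than `(1/2)·m^n`
vertices has maximum degree at least `√((m-1)n/2)`. -/
theorem maxDegree_of_majority_subgraph (m n : ℕ) (hm : 3 ≤ m) (hn : 1 ≤ n)
    (S : Finset (Fin n → Fin m))
    (hcard : (1 / 2 : ℝ) * (m : ℝ) ^ n < S.card) :
    ∃ x ∈ S, Real.sqrt (((m : ℝ) - 1) * n / 2) ≤ (degIn S x : ℝ) := by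
  classical
  haveI : NeZero m := ⟨by omega⟩
  have hc0 : 0 < S.card := by
    rcases Nat.eq_zero_or_pos S.card with h | h
    · exfalso
      rw [h] at hcard
      have : (0:ℝ) < (m:ℝ) ^ n := by positivity
      push_cast at hcard
      nlinarith
    · exact h
  obtain ⟨x₀, hx₀S, hmax⟩ := S.exists_max_image (degIn S) (Finset.card_pos.mp hc0)
  refine ⟨x₀, hx₀S, ?_⟩
  set D := degIn S x₀ with hD
  -- counting inequality in ℕ
  have hcount : n * S.card ^ 2 ≤ m ^ (n - 1) * (S.card * D + n * S.card) := by
    have hswap : ∑ x ∈ S, degIn S x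
        = ∑ i : Fin n, ∑ x ∈ S, (S.filter fun y => y ≠ x ∧ lineRep i y = lineRep i x).card := by
      rw [← Finset.sum_comm]
      exact Finset.sum_congr rfl fun x _ => degIn_eq_sum S x
    have hN : ∑ x ∈ S, degIn S x ≤ S.card * D :=
      calc ∑ x ∈ S, degIn S x ≤ ∑ _x ∈ S, D := Finset.sum_le_sum fun x hx => hmax x hx
        _ = S.card * D := by rw [Finset.sum_const, smul_eq_mul]
    calc n * S.card ^ 2 = ∑ _i : Fin n, S.card ^ 2 := by
          rw [Finset.sum_const, Finset.card_univ, Fintype.card_fin, smul_eq_mul]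
      _ ≤ ∑ i : Fin n, m ^ (n - 1) *
            ((∑ x ∈ S, (S.filter fun y => y ≠ x ∧ lineRep i y = lineRep i x).card) + S.card) :=
          Finset.sum_le_sum fun i _ => per_coord S i
      _ = m ^ (n - 1) * ((∑ x ∈ S, degIn S x) + n * S.card) := by
          rw [← Finset.mul_sum, Finset.sum_add_distrib, Finset.sum_const, Finset.card_univ,
            Fintype.card_fin, smul_eq_mul, hswap]
      _ ≤ m ^ (n - 1) * (S.card * D + n * S.card) := by
          exact Nat.mul_le_mul_left _ (Nat.add_le_add_right hN _)
  -- pass to ℝ and derive n*m < 2*D + 2*n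
  have key : n * m < 2 * D + 2 * n := by
    have hc : (0:ℝ) < (S.card : ℝ) := by exact_mod_cast hc0
    have hM : (0:ℝ) < ((m:ℝ)) ^ (n - 1) := by positivity
    have h1 : (n:ℝ) * (S.card:ℝ) ^ 2 ≤ ((m:ℝ)) ^ (n-1) * ((S.card:ℝ) * D + n * S.card) := by
      exact_mod_cast hcount
    have h2 : (m:ℝ) ^ n < 2 * S.card := by linarith
    have h3 : ((m:ℝ)) ^ (n-1) * m = (m:ℝ) ^ n := by
      rw [← pow_succ]
      congr 1
      omega
    have hreal : (n:ℝ) * m < 2 * D + 2 * n := by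
      have hn1 : (1:ℝ) ≤ n := by exact_mod_cast hn
      have hMc : (0:ℝ) < ((m:ℝ)) ^ (n-1) * S.card := mul_pos hM hc
      have step : (n:ℝ) * m * (((m:ℝ)) ^ (n-1) * S.card)
          < (2 * D + 2 * n) * (((m:ℝ)) ^ (n-1) * S.card) := by
        have l1 : (n:ℝ) * m * (((m:ℝ)) ^ (n-1) * S.card) = (n * S.card) * ((m:ℝ) ^ n) := by
          rw [← h3]; ring
        have l2 : (n:ℝ) * S.card > 0 := by positivity
        calc (n:ℝ) * m * (((m:ℝ)) ^ (n-1) * S.card) = (n * S.card) * ((m:ℝ) ^ n) := l1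
          _ < (n * S.card) * (2 * S.card) := by exact mul_lt_mul_of_pos_left h2 l2
          _ = 2 * ((n:ℝ) * (S.card:ℝ) ^ 2) := by ring
          _ ≤ 2 * (((m:ℝ)) ^ (n-1) * ((S.card:ℝ) * D + n * S.card)) := by linarith
          _ = (2 * D + 2 * n) * (((m:ℝ)) ^ (n-1) * S.card) := by ring
      exact lt_of_mul_lt_mul_right step (le_of_lt hMc)
    exact_mod_cast hreal
  -- conclude
  have hsq : ((m:ℝ) - 1) * n / 2 ≤ (D:ℝ) ^ 2 := by
    have h4 : (n:ℝ) * m + 1 ≤ 2 * D + 2 * n := by exact_mod_cast key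
    have hm3 : (3:ℝ) ≤ m := by exact_mod_cast hm
    have hn1 : (1:ℝ) ≤ n := by exact_mod_cast hn
    nlinarith [sq_nonneg ((D:ℝ) - 1),
      mul_nonneg (by linarith : (0:ℝ) ≤ (n:ℝ)) (by linarith : (0:ℝ) ≤ (m:ℝ) - 3)]
  calc Real.sqrt (((m:ℝ) - 1) * n / 2) ≤ Real.sqrt ((D:ℝ) ^ 2) := Real.sqrt_le_sqrt hsq
    _ = D := Real.sqrt_sq (Nat.cast_nonneg D)
end

section
/- Let A ⊂ ℝ be a finite set with |A| = m ≥ 2 and let s ≥ 1 and n ≥ s² be integers. Then there exists a function F : A^n → {0,1} with deg(F) = (m−1)s² and s(F) = (m−1)s; in particular s(F) = √( (m−1)·deg(F) ), so the lower bound s(f) ≥ √(deg(f)/(m−1)) is tight up to a factor of m−1. -/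
open Finset MvPolynomial

/-- The degree of a function `f` defined on `(Asets 1) × ⋯ × (Asets n) ⊆ ℝⁿ`: the minimum
total degree of a polynomial `p ∈ ℝ[x₁,…,xₙ]` with `p(a) = f(a)` for all `a` in the domain. -/
noncomputable def fdeg {n : ℕ} (Asets : Fin n → Finset ℝ) (f : (Fin n → ℝ) → ℝ) : ℕ :=
  sInf {k | ∃ p : MvPolynomial (Fin n) ℝ, p.totalDegree = k ∧
    ∀ x : Fin n → ℝ, (∀ i, x i ∈ Asets i) → MvPolynomial.eval x p = f x}

open scoped Classical in
/-- The local sensitivity of `f : Aⁿ → ℝ` at `x`: the number of points `y ∈ Aⁿ` differing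
from `x` in exactly one coordinate and satisfying `f y ≠ f x`. -/
noncomputable def locSens {n : ℕ} (A : Finset ℝ) (f : (Fin n → ℝ) → ℝ) (x : Fin n → ℝ) : ℕ :=
  ((Fintype.piFinset fun _ : Fin n => A).filter
    fun y => hammingDist x y = 1 ∧ f y ≠ f x).card

/-- The sensitivity of `f : Aⁿ → ℝ`: the maximum local sensitivity over all `x ∈ Aⁿ`. -/
noncomputable def sens {n : ℕ} (A : Finset ℝ) (f : (Fin n → ℝ) → ℝ) : ℕ :=
  (Fintype.piFinset fun _ : Fin n => A).sup (locSens A f)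

open scoped Polynomial

noncomputable def wt (A : Finset ℝ) (t : ℝ) : ℝ := ∏ u ∈ A.erase t, (t - u)⁻¹

lemma wt_ne_zero {A : Finset ℝ} {t : ℝ} : wt A t ≠ 0 := by
  refine prod_ne_zero_iff.2 fun u hu => ?_
  have : t ≠ u := fun h => (mem_erase.1 hu).1 h.symm
  exact inv_ne_zero (sub_ne_zero_of_ne this)

lemma coeff_interp (A : Finset ℝ) (q : ℝ[X]) (hq : q.degree < A.card) :
    q.coeff (A.card - 1) = ∑ t ∈ A, q.eval t * wt A t := by
  have hinj : Set.InjOn (id : ℝ → ℝ) A := Function.injective_id.injOn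
  have h := Lagrange.eq_interpolate (v := id) hinj hq
  conv_lhs => rw [h]
  rw [Lagrange.interpolate_apply, Polynomial.finset_sum_coeff]
  refine sum_congr rfl fun t ht => ?_
  have hb : (Lagrange.basis A id t).natDegree = A.card - 1 :=
    Lagrange.natDegree_basis hinj ht
  rw [Polynomial.coeff_C_mul, ← hb, Polynomial.coeff_natDegree]
  congr 1
  rw [Lagrange.basis, Polynomial.leadingCoeff_prod]
  refine prod_congr rfl fun u hu => ?_
  have htu : (t : ℝ) ≠ u := fun h => (mem_erase.1 hu).1 h.symm
  rw [Lagrange.basisDivisor, Polynomial.leadingCoeff_mul, Polynomial.leadingCoeff_C,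
    (Polynomial.monic_X_sub_C (id u : ℝ)).leadingCoeff, mul_one]
  rfl

lemma sum_wt_pow {A : Finset ℝ} {d : ℕ} (hd : d < A.card - 1) :
    ∑ t ∈ A, wt A t * t ^ d = 0 := by
  have h := coeff_interp A (Polynomial.X ^ d) ?_
  · simp only [Polynomial.eval_pow, Polynomial.eval_X] at h
    rw [Polynomial.coeff_X_pow, if_neg (by omega)] at h
    rw [show ∑ t ∈ A, wt A t * t ^ d = ∑ t ∈ A, t ^ d * wt A t from
      sum_congr rfl fun t ht => mul_comm _ _, ← h]
  · rw [Polynomial.degree_X_pow]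
    exact_mod_cast by omega

lemma sum_wt_one {A : Finset ℝ} (hA : 2 ≤ A.card) : ∑ t ∈ A, wt A t = 0 := by
  have := sum_wt_pow (A := A) (d := 0) (by omega)
  simpa using this

lemma sum_wt_ind {A : Finset ℝ} {a₀ : ℝ} (ha : a₀ ∈ A) :
    ∑ t ∈ A, wt A t * (if t = a₀ then (1:ℝ) else 0) = wt A a₀ := by
  rw [sum_eq_single a₀ (fun t _ ht => by simp [ht]) (fun h => absurd ha h)]
  simp

lemma sum_ind {A : Finset ℝ} {a₀ : ℝ} (ha : a₀ ∈ A) :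
    ∑ t ∈ A, (if t = a₀ then (1:ℝ) else 0) = 1 := by
  rw [sum_eq_single a₀ (fun t _ ht => by simp [ht]) (fun h => absurd ha h)]
  simp

/-- index of the `r`-th coordinate of block `j` -/
def idx (n s : ℕ) (hn : 0 < n) (j r : ℕ) : Fin n := ⟨(j * s + r) % n, Nat.mod_lt _ hn⟩

lemma jsr_lt {s j r : ℕ} (hj : j < s) (hr : r < s) : j * s + r < s ^ 2 := by
  have h1 : (j + 1) * s ≤ s * s := Nat.mul_le_mul_right _ hj
  have h2 : s ^ 2 = s * s := sq s
  nlinarith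

lemma idx_val {n s j r : ℕ} (hn : 0 < n) (hsn : s ^ 2 ≤ n) (hj : j < s) (hr : r < s) :
    (idx n s hn j r).val = j * s + r :=
  Nat.mod_eq_of_lt (lt_of_lt_of_le (jsr_lt hj hr) hsn)

lemma idx_inj {n s j r j' r' : ℕ} (hn : 0 < n) (hsn : s ^ 2 ≤ n) (hj : j < s) (hr : r < s)
    (hj' : j' < s) (hr' : r' < s) (h : idx n s hn j r = idx n s hn j' r') : j = j' ∧ r = r' := by
  have hs0 : 0 < s := by omega
  have h1 := idx_val hn hsn hj hr
  have h2 := idx_val hn hsn hj' hr'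
  rw [h, h2] at h1
  have h3 : s * j' + r' = s * j + r := by rw [mul_comm j' s, mul_comm j s] at h1; exact h1
  have e1 : (s * j + r) / s = j := by rw [Nat.mul_add_div hs0, Nat.div_eq_of_lt hr, add_zero]
  have e2 : (s * j' + r') / s = j' := by rw [Nat.mul_add_div hs0, Nat.div_eq_of_lt hr', add_zero]
  have hjj : j = j' := by rw [← e1, ← e2, h3]
  subst hjj
  exact ⟨rfl, (Nat.add_left_cancel h3).symm⟩

lemma card_filter_val_lt_s10 {n K : ℕ} (hK : K ≤ n) :
    (Finset.filter (fun i : Fin n => i.val < K) univ).card = K := by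
  have h : ∀ m ∈ range K, m < n := fun m hm => lt_of_lt_of_le (mem_range.1 hm) hK
  have he : Finset.filter (fun i : Fin n => i.val < K) univ = (range K).attachFin h := by
    ext a; simp [Finset.mem_attachFin]
  rw [he, Finset.card_attachFin, card_range]

open MvPolynomial in
noncomputable def QP (A : Finset ℝ) (a₀ : ℝ) {n : ℕ} (i : Fin n) : MvPolynomial (Fin n) ℝ :=
  ∏ u ∈ A.erase a₀, (MvPolynomial.C ((a₀ - u)⁻¹) * (MvPolynomial.X i - MvPolynomial.C u))

open MvPolynomial in
lemma eval_QP {A : Finset ℝ} {a₀ : ℝ} {n : ℕ} {i : Fin n} {x : Fin n → ℝ}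
    (hx : x i ∈ A) : MvPolynomial.eval x (QP A a₀ i) = if x i = a₀ then 1 else 0 := by
  rw [QP, map_prod]
  by_cases h : x i = a₀
  · rw [if_pos h]
    refine prod_eq_one fun u hu => ?_
    have : a₀ ≠ u := fun hh => (mem_erase.1 hu).1 hh.symm
    simp [h, inv_mul_cancel₀ (sub_ne_zero_of_ne this)]
  · rw [if_neg h]
    refine prod_eq_zero (mem_erase.2 ⟨h, hx⟩) ?_
    simp

open MvPolynomial in
lemma totalDegree_QP {A : Finset ℝ} {a₀ : ℝ} (ha : a₀ ∈ A) {n : ℕ} {i : Fin n} :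
    (QP A a₀ i).totalDegree ≤ A.card - 1 := by
  refine le_trans (totalDegree_finset_prod _ _) ?_
  rw [← Finset.card_erase_of_mem ha, card_eq_sum_ones (A.erase a₀)]
  refine Finset.sum_le_sum fun u hu => ?_
  refine le_trans (totalDegree_mul _ _) ?_
  rw [totalDegree_C, zero_add]
  refine le_trans (totalDegree_sub _ _) ?_
  simp [totalDegree_X, totalDegree_C]

open scoped Classical in
/-- The OR-of-ANDs function: 1 if some block of `s` consecutive coordinates is all `a₀`. -/
noncomputable def FF (n s : ℕ) (hn : 0 < n) (a₀ : ℝ) (x : Fin n → ℝ) : ℝ :=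
  if ∃ j < s, ∀ r < s, x (idx n s hn j r) = a₀ then 1 else 0

open scoped Classical in
lemma FF_eq (n s : ℕ) (hn : 0 < n) (a₀ : ℝ) (x : Fin n → ℝ) :
    FF n s hn a₀ x =
      1 - ∏ j ∈ range s, (1 - ∏ r ∈ range s, (if x (idx n s hn j r) = a₀ then (1:ℝ) else 0)) := by
  rw [FF]
  by_cases h : ∃ j < s, ∀ r < s, x (idx n s hn j r) = a₀
  · rw [if_pos h]
    obtain ⟨j, hj, hfull⟩ := h
    rw [prod_eq_zero (mem_range.2 hj)]
    · ring
    · rw [prod_eq_one fun r hr => if_pos (hfull r (mem_range.1 hr))]; ring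
  · rw [if_neg h]
    push_neg at h
    rw [prod_eq_one fun j hj => ?_]
    · ring
    · obtain ⟨r, hr, hbad⟩ := h j (mem_range.1 hj)
      rw [prod_eq_zero (mem_range.2 hr) (if_neg hbad : (if x (idx n s hn j r) = a₀ then (1:ℝ) else 0) = 0)]; ring

open MvPolynomial in
noncomputable def PP (A : Finset ℝ) (a₀ : ℝ) (n s : ℕ) (hn : 0 < n) : MvPolynomial (Fin n) ℝ :=
  1 - ∏ j ∈ range s, (1 - ∏ r ∈ range s, QP A a₀ (idx n s hn j r))

open MvPolynomial in
lemma eval_PP {A : Finset ℝ} {a₀ : ℝ} {n s : ℕ} (hn : 0 < n) {x : Fin n → ℝ}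
    (hx : ∀ i, x i ∈ A) : MvPolynomial.eval x (PP A a₀ n s hn) = FF n s hn a₀ x := by
  classical
  rw [PP, FF_eq n s hn a₀ x]
  rw [map_sub, map_one, map_prod]
  congr 1
  refine prod_congr rfl fun j hj => ?_
  rw [map_sub, map_one, map_prod]
  congr 1
  exact prod_congr rfl fun r hr => eval_QP (hx _)

open MvPolynomial in
lemma totalDegree_PP {A : Finset ℝ} {a₀ : ℝ} (ha : a₀ ∈ A) {n s : ℕ} (hn : 0 < n) :
    (PP A a₀ n s hn).totalDegree ≤ (A.card - 1) * s ^ 2 := by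
  rw [PP]
  refine le_trans (totalDegree_sub _ _) ?_
  rw [totalDegree_one]
  refine max_le (Nat.zero_le _) ?_
  refine le_trans (totalDegree_finset_prod _ _) ?_
  have hb : ∀ j ∈ range s,
      (1 - ∏ r ∈ range s, QP A a₀ (idx n s hn j r)).totalDegree ≤ (A.card - 1) * s := by
    intro j hj
    refine le_trans (totalDegree_sub _ _) ?_
    rw [totalDegree_one]
    refine max_le (Nat.zero_le _) ?_
    refine le_trans (totalDegree_finset_prod _ _) ?_
    refine le_trans (Finset.sum_le_sum fun r hr => totalDegree_QP ha) ?_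
    rw [sum_const, card_range, smul_eq_mul, mul_comm]
  refine le_trans (Finset.sum_le_sum hb) ?_
  rw [sum_const, card_range, smul_eq_mul]
  rw [sq]; ring_nf; exact le_refl _

open scoped Classical in
lemma Zval {A : Finset ℝ} {a₀ : ℝ} (ha : a₀ ∈ A) (hm : 2 ≤ A.card)
    {n s : ℕ} (hs : 1 ≤ s) (hsn : s ^ 2 ≤ n) (hn : 0 < n) (S : Finset ℕ) (hS : S ⊆ range s) :
    ∑ x ∈ Fintype.piFinset (fun _ : Fin n => A),
      (∏ i : Fin n, (if i.val < s ^ 2 then wt A (x i) else if x i = a₀ then (1:ℝ) else 0)) *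
        ∏ j ∈ S, ∏ r ∈ range s, (if x (idx n s hn j r) = a₀ then (1:ℝ) else 0)
    = if S = range s then wt A a₀ ^ s ^ 2 else 0 := by
  classical
  set TS : Finset (Fin n) := (S ×ˢ range s).image (fun p => idx n s hn p.1 p.2) with hTS
  have hmemS : ∀ p ∈ S ×ˢ range s, p.1 < s ∧ p.2 < s := by
    intro p hp
    obtain ⟨h1, h2⟩ := Finset.mem_product.1 hp
    exact ⟨mem_range.1 (hS h1), mem_range.1 h2⟩
  have hinj : ∀ p ∈ S ×ˢ range s, ∀ q ∈ S ×ˢ range s,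
      idx n s hn p.1 p.2 = idx n s hn q.1 q.2 → p = q := by
    intro p hp q hq h
    obtain ⟨h1, h2⟩ := hmemS p hp
    obtain ⟨h3, h4⟩ := hmemS q hq
    obtain ⟨e1, e2⟩ := idx_inj hn hsn h1 h2 h3 h4 h
    exact Prod.ext e1 e2
  have hstep : ∀ x : Fin n → ℝ,
      (∏ i : Fin n, (if i.val < s ^ 2 then wt A (x i) else if x i = a₀ then (1:ℝ) else 0)) *
        ∏ j ∈ S, ∏ r ∈ range s, (if x (idx n s hn j r) = a₀ then (1:ℝ) else 0)
      = ∏ i : Fin n, ((if i.val < s ^ 2 then wt A (x i) else if x i = a₀ then (1:ℝ) else 0) *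
          (if i ∈ TS then (if x i = a₀ then (1:ℝ) else 0) else 1)) := by
    intro x
    rw [show (∏ j ∈ S, ∏ r ∈ range s, (if x (idx n s hn j r) = a₀ then (1:ℝ) else 0))
        = ∏ i ∈ TS, (if x i = a₀ then (1:ℝ) else 0) by
      rw [hTS, Finset.prod_image hinj, Finset.prod_product]]
    rw [prod_mul_distrib, Finset.prod_ite_mem, univ_inter]
  rw [sum_congr rfl (fun x _ => hstep x),
    Finset.sum_prod_piFinset A (fun (i : Fin n) (t : ℝ) =>
      (if i.val < s ^ 2 then wt A t else if t = a₀ then (1:ℝ) else 0) *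
        (if i ∈ TS then (if t = a₀ then (1:ℝ) else 0) else 1))]
  by_cases hSe : S = range s
  · subst hSe
    have hTSeq : TS = Finset.filter (fun i : Fin n => i.val < s ^ 2) univ := by
      ext i
      simp only [hTS, Finset.mem_image, Finset.mem_product, mem_range, mem_filter, mem_univ,
        true_and]
      constructor
      · rintro ⟨p, ⟨hp1, hp2⟩, rfl⟩
        rw [idx_val hn hsn hp1 hp2]; exact jsr_lt hp1 hp2
      · intro hi
        have hs0 : 0 < s := hs
        have hdiv : i.val / s < s := by
          rw [Nat.div_lt_iff_lt_mul hs0]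
          calc i.val < s ^ 2 := hi
          _ = s * s := sq s
        refine ⟨(i.val / s, i.val % s), ⟨hdiv, Nat.mod_lt _ hs0⟩, ?_⟩
        apply Fin.ext
        rw [idx_val hn hsn hdiv (Nat.mod_lt _ hs0)]
        rw [mul_comm]
        exact Nat.div_add_mod _ _
    have hfac : ∀ i : Fin n,
        (∑ t ∈ A, (if i.val < s ^ 2 then wt A t else if t = a₀ then (1:ℝ) else 0) *
          (if i ∈ TS then (if t = a₀ then (1:ℝ) else 0) else 1))
        = if i ∈ TS then wt A a₀ else 1 := by
      intro i
      by_cases hi : i ∈ TS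
      · have hilt : i.val < s ^ 2 := by
          rw [hTSeq] at hi; exact (mem_filter.1 hi).2
        rw [if_pos hi, sum_congr rfl fun t _ => by rw [if_pos hilt, if_pos hi]]
        exact sum_wt_ind ha
      · have hige : ¬ (i.val < s ^ 2) := by
          intro hlt
          exact hi (by rw [hTSeq]; exact mem_filter.2 ⟨mem_univ _, hlt⟩)
        rw [if_neg hi, sum_congr rfl fun t _ => by rw [if_neg hige, if_neg hi, mul_one]]
        exact sum_ind ha
    rw [if_pos rfl, prod_congr rfl fun i _ => hfac i, Finset.prod_ite_mem, univ_inter,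
      prod_const, hTSeq, card_filter_val_lt_s10 hsn]
  · rw [if_neg hSe]
    have : ¬ range s ⊆ S := fun h => hSe (subset_antisymm hS h)
    obtain ⟨j, hj, hjS⟩ := Finset.not_subset.1 this
    have hjlt : j < s := mem_range.1 hj
    set i₀ : Fin n := idx n s hn j 0 with hi₀
    have hi₀lt : i₀.val < s ^ 2 := by
      rw [hi₀, idx_val hn hsn hjlt hs]
      exact jsr_lt hjlt hs
    have hi₀TS : i₀ ∉ TS := by
      rw [hTS]
      intro hmem
      obtain ⟨p, hp, heq⟩ := Finset.mem_image.1 hmem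
      obtain ⟨h1, h2⟩ := hmemS p hp
      obtain ⟨e1, _⟩ := idx_inj hn hsn h1 h2 hjlt hs heq
      exact hjS (e1 ▸ (Finset.mem_product.1 hp).1)
    refine prod_eq_zero (mem_univ i₀) ?_
    rw [sum_congr rfl fun t _ => by rw [if_pos hi₀lt, if_neg hi₀TS, mul_one]]
    exact sum_wt_one hm

open MvPolynomial in
open scoped Classical in
lemma deg_lower {A : Finset ℝ} {a₀ : ℝ} (ha : a₀ ∈ A) (hm : 2 ≤ A.card)
    {n s : ℕ} (hs : 1 ≤ s) (hsn : s ^ 2 ≤ n) (hn : 0 < n)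
    (p : MvPolynomial (Fin n) ℝ)
    (hrep : ∀ x : Fin n → ℝ, (∀ i, x i ∈ A) → MvPolynomial.eval x p = FF n s hn a₀ x) :
    (A.card - 1) * s ^ 2 ≤ p.totalDegree := by
  by_contra hlt
  push_neg at hlt
  have hs2 : (0:ℕ) < s ^ 2 := by positivity
  -- the weight function
  set W : Fin n → ℝ → ℝ :=
    fun i t => if i.val < s ^ 2 then wt A t else if t = a₀ then (1:ℝ) else 0 with hWdef
  -- L(p) = 0
  have hLp : ∑ x ∈ Fintype.piFinset (fun _ : Fin n => A),
      (∏ i : Fin n, W i (x i)) * MvPolynomial.eval x p = 0 := by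
    have hexp : ∀ x ∈ Fintype.piFinset (fun _ : Fin n => A),
        (∏ i : Fin n, W i (x i)) * MvPolynomial.eval x p
        = ∑ d ∈ p.support, p.coeff d * ∏ i : Fin n, (W i (x i) * x i ^ d i) := by
      intro x _
      rw [eval_eq', Finset.mul_sum]
      refine sum_congr rfl fun d _ => ?_
      rw [prod_mul_distrib]; ring
    rw [sum_congr rfl hexp, sum_comm]
    refine sum_eq_zero fun d hd => ?_
    rw [← mul_sum,
      Finset.sum_prod_piFinset A (fun (i : Fin n) (t : ℝ) => W i t * t ^ d i)]
    -- pigeonhole: some relevant coordinate has small exponent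
    have hpig : ∃ i : Fin n, i.val < s ^ 2 ∧ d i < A.card - 1 := by
      by_contra hno
      push_neg at hno
      have h1 : (A.card - 1) * s ^ 2 ≤
          ∑ i ∈ Finset.filter (fun i : Fin n => i.val < s ^ 2) univ, d i := by
        calc (A.card - 1) * s ^ 2
            = ∑ _i ∈ Finset.filter (fun i : Fin n => i.val < s ^ 2) univ, (A.card - 1) := by
              rw [sum_const, card_filter_val_lt_s10 hsn, smul_eq_mul, mul_comm]
          _ ≤ _ := Finset.sum_le_sum fun i hi => hno i (mem_filter.1 hi).2
      have h2 : ∑ i ∈ Finset.filter (fun i : Fin n => i.val < s ^ 2) univ, d i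
          ≤ ∑ i : Fin n, d i :=
        Finset.sum_le_sum_of_subset (filter_subset _ _)
      have h3 : ∑ i : Fin n, d i ≤ p.totalDegree := by
        have := MvPolynomial.le_totalDegree hd
        rwa [Finsupp.sum_fintype _ _ (fun _ => rfl)] at this
      omega
    obtain ⟨i₀, hi₀, hdi₀⟩ := hpig
    rw [prod_eq_zero (mem_univ i₀)]
    · exact mul_zero _
    · rw [show (∑ t ∈ A, W i₀ t * t ^ d i₀) = ∑ t ∈ A, wt A t * t ^ d i₀ from
        sum_congr rfl fun t _ => by simp only [hWdef, if_pos hi₀]]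
      exact sum_wt_pow hdi₀
  -- L(F) ≠ 0
  have hLF : ∑ x ∈ Fintype.piFinset (fun _ : Fin n => A),
      (∏ i : Fin n, W i (x i)) * FF n s hn a₀ x
      = -((-1) ^ s * wt A a₀ ^ s ^ 2) := by
    have hsplit : ∀ x ∈ Fintype.piFinset (fun _ : Fin n => A),
        (∏ i : Fin n, W i (x i)) * FF n s hn a₀ x
        = (∏ i : Fin n, W i (x i)) -
          (∏ i : Fin n, W i (x i)) *
            ∏ j ∈ range s, (1 - ∏ r ∈ range s, (if x (idx n s hn j r) = a₀ then (1:ℝ) else 0)) := by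
      intro x _
      rw [FF_eq n s hn a₀ x]; ring
    rw [sum_congr rfl hsplit, sum_sub_distrib]
    have hT1 : ∑ x ∈ Fintype.piFinset (fun _ : Fin n => A), ∏ i : Fin n, W i (x i) = 0 := by
      rw [Finset.sum_prod_piFinset A W]
      refine prod_eq_zero (mem_univ (⟨0, hn⟩ : Fin n)) ?_
      rw [show (∑ t ∈ A, W (⟨0, hn⟩ : Fin n) t) = ∑ t ∈ A, wt A t from
        sum_congr rfl fun t _ => by simp only [hWdef]; rw [if_pos (show (0:ℕ) < s ^ 2 from hs2)]]
      exact sum_wt_one hm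
    rw [hT1, zero_sub]
    congr 1
    -- expand the product over blocks
    have hG : ∀ x : Fin n → ℝ,
        (∏ j ∈ range s, (1 - ∏ r ∈ range s, (if x (idx n s hn j r) = a₀ then (1:ℝ) else 0)))
        = ∑ t ∈ (range s).powerset,
            (-1) ^ (range s \ t).card *
              ∏ j ∈ range s \ t, ∏ r ∈ range s, (if x (idx n s hn j r) = a₀ then (1:ℝ) else 0) := by
      intro x
      rw [show (∏ j ∈ range s, (1 - ∏ r ∈ range s, (if x (idx n s hn j r) = a₀ then (1:ℝ) else 0)))
          = ∏ j ∈ range s, ((1:ℝ) + -(∏ r ∈ range s, (if x (idx n s hn j r) = a₀ then (1:ℝ) else 0)))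
          from prod_congr rfl fun j _ => by ring]
      rw [Finset.prod_add]
      refine sum_congr rfl fun t _ => ?_
      rw [prod_const_one, one_mul]
      rw [show (∏ j ∈ range s \ t, -(∏ r ∈ range s, (if x (idx n s hn j r) = a₀ then (1:ℝ) else 0)))
          = ∏ j ∈ range s \ t, ((-1) * ∏ r ∈ range s, (if x (idx n s hn j r) = a₀ then (1:ℝ) else 0))
          from prod_congr rfl fun j _ => by ring]
      rw [prod_mul_distrib, prod_const]
    have hswap : ∑ x ∈ Fintype.piFinset (fun _ : Fin n => A),
        (∏ i : Fin n, W i (x i)) *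
          ∏ j ∈ range s, (1 - ∏ r ∈ range s, (if x (idx n s hn j r) = a₀ then (1:ℝ) else 0))
        = ∑ t ∈ (range s).powerset, (-1) ^ (range s \ t).card *
            ∑ x ∈ Fintype.piFinset (fun _ : Fin n => A),
              (∏ i : Fin n, W i (x i)) *
                ∏ j ∈ range s \ t, ∏ r ∈ range s, (if x (idx n s hn j r) = a₀ then (1:ℝ) else 0) := by
      have hpoint : ∀ x ∈ Fintype.piFinset (fun _ : Fin n => A),
          (∏ i : Fin n, W i (x i)) *
            ∏ j ∈ range s, (1 - ∏ r ∈ range s, (if x (idx n s hn j r) = a₀ then (1:ℝ) else 0))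
          = ∑ t ∈ (range s).powerset, (-1) ^ (range s \ t).card *
              ((∏ i : Fin n, W i (x i)) *
                ∏ j ∈ range s \ t, ∏ r ∈ range s, (if x (idx n s hn j r) = a₀ then (1:ℝ) else 0)) := by
        intro x _
        rw [hG x, Finset.mul_sum]
        exact sum_congr rfl fun t _ => by ring
      rw [sum_congr rfl hpoint, sum_comm]
      exact sum_congr rfl fun t _ => by rw [Finset.mul_sum]
    rw [hswap]
    have hZ : ∀ t ∈ (range s).powerset,
        (-1:ℝ) ^ (range s \ t).card *
            ∑ x ∈ Fintype.piFinset (fun _ : Fin n => A),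
              (∏ i : Fin n, W i (x i)) *
                ∏ j ∈ range s \ t, ∏ r ∈ range s, (if x (idx n s hn j r) = a₀ then (1:ℝ) else 0)
        = if t = ∅ then (-1) ^ s * wt A a₀ ^ s ^ 2 else 0 := by
      intro t ht
      have htsub : t ⊆ range s := mem_powerset.1 ht
      rw [Zval ha hm hs hsn hn (range s \ t) (sdiff_subset)]
      by_cases hte : t = ∅
      · subst hte
        simp [sdiff_empty, card_range]
      · rw [if_neg hte, if_neg, mul_zero]
        intro hcon
        have hcard : (range s \ t).card = s - t.card := by
          rw [card_sdiff_of_subset htsub, card_range]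
        have : t.card = 0 := by
          have h1 : (range s \ t).card = s := by rw [hcon, card_range]
          have h2 : t.card ≤ s := by
            have := card_le_card htsub; rwa [card_range] at this
          omega
        exact hte (card_eq_zero.1 this)
    rw [sum_congr rfl hZ, sum_ite_eq' (range s).powerset ∅
      (fun _ => (-1:ℝ) ^ s * wt A a₀ ^ s ^ 2)]
    rw [if_pos (mem_powerset.2 (empty_subset _))]
  -- combine
  have heq : ∑ x ∈ Fintype.piFinset (fun _ : Fin n => A),
      (∏ i : Fin n, W i (x i)) * MvPolynomial.eval x p
      = ∑ x ∈ Fintype.piFinset (fun _ : Fin n => A),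
          (∏ i : Fin n, W i (x i)) * FF n s hn a₀ x :=
    sum_congr rfl fun x hx => by
      rw [hrep x (fun i => Fintype.mem_piFinset.1 hx i)]
  rw [hLp, hLF] at heq
  have : ((-1:ℝ) ^ s * wt A a₀ ^ s ^ 2) ≠ 0 :=
    mul_ne_zero (pow_ne_zero _ (by norm_num)) (pow_ne_zero _ wt_ne_zero)
  exact this (by linarith)

open scoped Classical in
lemma ham_one {n : ℕ} {x y : Fin n → ℝ} (h : hammingDist x y = 1) :
    ∃ i₀ : Fin n, x i₀ ≠ y i₀ ∧ ∀ i, i ≠ i₀ → x i = y i := by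
  rw [hammingDist] at h
  obtain ⟨i₀, hi₀⟩ := card_eq_one.1 h
  refine ⟨i₀, ?_, ?_⟩
  · have : i₀ ∈ ({i | x i ≠ y i} : Finset (Fin n)) := hi₀ ▸ mem_singleton_self i₀
    simpa using this
  · intro i hi
    by_contra hne
    have : i ∈ ({i | x i ≠ y i} : Finset (Fin n)) := by simpa using hne
    rw [hi₀] at this
    exact hi (mem_singleton.1 this)

open scoped Classical in
lemma FF_val_one {n s : ℕ} (hn : 0 < n) {a₀ : ℝ} {x : Fin n → ℝ}
    (h : ∃ j < s, ∀ r < s, x (idx n s hn j r) = a₀) : FF n s hn a₀ x = 1 := by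
  rw [FF, if_pos h]

open scoped Classical in
lemma FF_val_zero {n s : ℕ} (hn : 0 < n) {a₀ : ℝ} {x : Fin n → ℝ}
    (h : ¬ ∃ j < s, ∀ r < s, x (idx n s hn j r) = a₀) : FF n s hn a₀ x = 0 := by
  rw [FF, if_neg h]

open scoped Classical in
lemma locSens_le {A : Finset ℝ} {a₀ : ℝ} (ha : a₀ ∈ A) (hm : 2 ≤ A.card) {n s : ℕ}
    (hs : 1 ≤ s) (hsn : s ^ 2 ≤ n) (hn : 0 < n) (x : Fin n → ℝ)
    (hx : x ∈ Fintype.piFinset (fun _ : Fin n => A)) :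
    locSens A (FF n s hn a₀) x ≤ (A.card - 1) * s := by
  rw [locSens]
  by_cases h : ∃ j < s, ∀ r < s, x (idx n s hn j r) = a₀
  · -- F x = 1 : all sensitive points change a coordinate of the full block j to a non-a₀ value
    obtain ⟨j, hj, hfull⟩ := h
    have hFx : FF n s hn a₀ x = 1 := FF_val_one hn ⟨j, hj, hfull⟩
    refine le_trans (Finset.card_le_card_of_injOn
      (t := ((range s).image (fun r => idx n s hn j r)) ×ˢ (A.erase a₀))
      (fun y => if h' : ∃ i₀ : Fin n, x i₀ ≠ y i₀ ∧ ∀ i, i ≠ i₀ → x i = y i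
        then (Classical.choose h', y (Classical.choose h')) else (⟨0, hn⟩, 0))
      ?_ ?_) ?_
    · intro y hy
      obtain ⟨hy1, hy2, hy3⟩ := mem_filter.1 hy
      have h' := ham_one hy2
      beta_reduce
      rw [dif_pos h']
      obtain ⟨hne, hagree⟩ := Classical.choose_spec h'
      set i₀ := Classical.choose h' with hi₀
      have hblock : ∃ r < s, idx n s hn j r = i₀ := by
        by_contra hcon
        push_neg at hcon
        have hfully : ∀ r < s, y (idx n s hn j r) = a₀ := fun r hr =>
          (hagree _ (hcon r hr)).symm.trans (hfull r hr)
        exact hy3 ((FF_val_one hn ⟨j, hj, hfully⟩).trans hFx.symm)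
      obtain ⟨r, hr, hri⟩ := hblock
      refine Finset.mem_product.2 ⟨Finset.mem_image.2 ⟨r, mem_range.2 hr, hri⟩, ?_⟩
      refine mem_erase.2 ⟨?_, Fintype.mem_piFinset.1 hy1 i₀⟩
      intro hcon
      have hcon' : y i₀ = a₀ := hcon
      exact hne (by rw [hcon', ← hfull r hr, hri])
    · intro y hy y' hy' hf
      obtain ⟨hy1, hy2, hy3⟩ := mem_filter.1 hy
      obtain ⟨hy1', hy2', hy3'⟩ := mem_filter.1 hy'
      have h1 := ham_one hy2
      have h2 := ham_one hy2'
      beta_reduce at hf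
      rw [dif_pos h1, dif_pos h2] at hf
      obtain ⟨hne1, hag1⟩ := Classical.choose_spec h1
      obtain ⟨hne2, hag2⟩ := Classical.choose_spec h2
      have hieq : Classical.choose h1 = Classical.choose h2 := (Prod.ext_iff.1 hf).1
      have hveq : y (Classical.choose h1) = y' (Classical.choose h2) := by
        have := (Prod.ext_iff.1 hf).2
        rwa [← hieq] at this ⊢
      funext i
      by_cases hii : i = Classical.choose h1
      · rw [hii, hveq, hieq]
      · rw [← hag1 i hii, hag2 i (by rwa [← hieq])]
    · rw [Finset.card_product]
      have h1 : ((range s).image (fun r => idx n s hn j r)).card ≤ s := by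
        refine le_trans (card_image_le) (by rw [card_range])
      have h2 : (A.erase a₀).card = A.card - 1 := card_erase_of_mem ha
      calc ((range s).image (fun r => idx n s hn j r)).card * (A.erase a₀).card
          ≤ s * (A.card - 1) := Nat.mul_le_mul h1 (le_of_eq h2)
        _ = (A.card - 1) * s := mul_comm _ _
  · -- F x = 0 : at most one sensitive point per block
    have hFx : FF n s hn a₀ x = 0 := FF_val_zero hn h
    refine le_trans (b := (range s).card) (Finset.card_le_card_of_injOn (t := range s)
      (fun y => if h' : ∃ j, j < s ∧ ∀ r < s, y (idx n s hn j r) = a₀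
        then Classical.choose h' else 0) ?_ ?_) ?_
    · intro y hy
      obtain ⟨hy1, hy2, hy3⟩ := mem_filter.1 hy
      have hFy : ∃ j, j < s ∧ ∀ r < s, y (idx n s hn j r) = a₀ := by
        by_contra hcon
        exact hy3 ((FF_val_zero hn hcon).trans hFx.symm)
      beta_reduce
      rw [dif_pos hFy]
      exact mem_range.2 (Classical.choose_spec hFy).1
    · intro y hy y' hy' hf
      obtain ⟨hy1, hy2, hy3⟩ := mem_filter.1 hy
      obtain ⟨hy1', hy2', hy3'⟩ := mem_filter.1 hy'
      have hFy : ∃ j, j < s ∧ ∀ r < s, y (idx n s hn j r) = a₀ := by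
        by_contra hcon; exact hy3 ((FF_val_zero hn hcon).trans hFx.symm)
      have hFy' : ∃ j, j < s ∧ ∀ r < s, y' (idx n s hn j r) = a₀ := by
        by_contra hcon; exact hy3' ((FF_val_zero hn hcon).trans hFx.symm)
      beta_reduce at hf
      rw [dif_pos hFy, dif_pos hFy'] at hf
      obtain ⟨hjs, hfull⟩ := Classical.choose_spec hFy
      obtain ⟨hjs', hfull'⟩ := Classical.choose_spec hFy'
      set j := Classical.choose hFy with hjdef
      rw [← hf] at hfull' hjs'
      obtain ⟨i₁, hne1, hag1⟩ := ham_one hy2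
      obtain ⟨i₂, hne2, hag2⟩ := ham_one hy2'
      have hkey : ∀ z : Fin n → ℝ, (∀ i : Fin n, (∀ r < s, i ≠ idx n s hn j r) → z i = x i) →
          (∀ r < s, z (idx n s hn j r) = a₀) → False → True := fun _ _ _ _ => trivial
      -- both y and y' agree with x off block j
      have hoff : ∀ (z : Fin n → ℝ) (i₀ : Fin n), x i₀ ≠ z i₀ → (∀ i, i ≠ i₀ → x i = z i) →
          (∀ r < s, z (idx n s hn j r) = a₀) → ∀ i : Fin n,
          (∀ r < s, i ≠ idx n s hn j r) → z i = x i := by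
        intro z i₀ hne hag hfz i hnotin
        by_contra hzi
        have hii₀ : i = i₀ := by
          by_contra hcon
          exact hzi (hag i hcon).symm
        subst hii₀
        -- then x is all a₀ on block j, so F x = 1, contradiction
        refine h ⟨j, hjs, fun r hr => ?_⟩
        rw [hag _ (Ne.symm (hnotin r hr) : idx n s hn j r ≠ i), hfz r hr]
      funext i
      by_cases hin : ∃ r < s, i = idx n s hn j r
      · obtain ⟨r, hr, rfl⟩ := hin
        rw [hfull r hr, hfull' r hr]
      · push_neg at hin
        rw [hoff y i₁ hne1 hag1 hfull i hin, hoff y' i₂ hne2 hag2 hfull' i hin]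
    · rw [card_range]
      exact Nat.le_mul_of_pos_left s (by omega)

open scoped Classical in
lemma locSens_ge {A : Finset ℝ} {a₀ b : ℝ} (ha : a₀ ∈ A) (hb : b ∈ A) (hab : b ≠ a₀)
    {n s : ℕ} (hs : 1 ≤ s) (hsn : s ^ 2 ≤ n) (hn : 0 < n) :
    ∃ x ∈ Fintype.piFinset (fun _ : Fin n => A),
      (A.card - 1) * s ≤ locSens A (FF n s hn a₀) x := by
  set x : Fin n → ℝ := fun i => if i.val < s then a₀ else b with hxdef
  have hxA : x ∈ Fintype.piFinset (fun _ : Fin n => A) := by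
    refine Fintype.mem_piFinset.2 fun i => ?_
    show (if i.val < s then a₀ else b) ∈ A
    by_cases hi : i.val < s
    · rw [if_pos hi]; exact ha
    · rw [if_neg hi]; exact hb
  refine ⟨x, hxA, ?_⟩
  have hs0 : 0 < s := hs
  have hidx0 : ∀ r < s, (idx n s hn 0 r).val = r := by
    intro r hr
    rw [idx_val hn hsn hs0 hr, zero_mul, zero_add]
  have hFx : FF n s hn a₀ x = 1 := by
    refine FF_val_one hn ⟨0, hs0, fun r hr => ?_⟩
    show (if (idx n s hn 0 r).val < s then a₀ else b) = a₀
    rw [if_pos (by rw [hidx0 r hr]; exact hr)]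
  -- the sensitive set
  set Y : Finset (Fin n → ℝ) :=
    ((range s) ×ˢ (A.erase a₀)).image
      (fun p => Function.update x (idx n s hn 0 p.1) p.2) with hYdef
  have hYcard : Y.card = (A.card - 1) * s := by
    rw [hYdef, Finset.card_image_of_injOn, card_product, card_range, card_erase_of_mem ha,
      mul_comm]
    intro p hp q hq hpq
    obtain ⟨hp1, hp2⟩ := Finset.mem_product.1 (Finset.mem_coe.1 hp)
    obtain ⟨hq1, hq2⟩ := Finset.mem_product.1 (Finset.mem_coe.1 hq)
    have hp1' : p.1 < s := mem_range.1 hp1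
    have hq1' : q.1 < s := mem_range.1 hq1
    by_cases hidxeq : idx n s hn 0 p.1 = idx n s hn 0 q.1
    · have := (idx_inj hn hsn hs0 hp1' hs0 hq1' hidxeq).2
      have hv : p.2 = q.2 := by
        have h1 := congrFun hpq (idx n s hn 0 p.1)
        simp only at h1
        rwa [Function.update_self, hidxeq, Function.update_self] at h1
      exact Prod.ext this hv
    · exfalso
      have h1 := congrFun hpq (idx n s hn 0 p.1)
      simp only at h1
      rw [Function.update_self, Function.update_of_ne hidxeq] at h1
      have hxa : x (idx n s hn 0 p.1) = a₀ := by
        show (if (idx n s hn 0 p.1).val < s then a₀ else b) = a₀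
        rw [if_pos (by rw [hidx0 _ hp1']; exact hp1')]
      rw [hxa] at h1
      exact (mem_erase.1 hp2).1 h1
  have hYsub : Y ⊆ (Fintype.piFinset fun _ : Fin n => A).filter
      fun y => hammingDist x y = 1 ∧ FF n s hn a₀ y ≠ FF n s hn a₀ x := by
    intro y hy
    obtain ⟨p, hp, rfl⟩ := Finset.mem_image.1 hy
    obtain ⟨hp1, hp2⟩ := Finset.mem_product.1 hp
    have hp1' : p.1 < s := mem_range.1 hp1
    have hpa : p.2 ≠ a₀ := (mem_erase.1 hp2).1
    have hpA : p.2 ∈ A := (mem_erase.1 hp2).2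
    set i₀ := idx n s hn 0 p.1 with hi₀
    have hxi₀ : x i₀ = a₀ := by
      show (if (i₀ : Fin n).val < s then a₀ else b) = a₀
      rw [if_pos (by rw [hi₀, hidx0 _ hp1']; exact hp1')]
    refine mem_filter.2 ⟨?_, ?_, ?_⟩
    · refine Fintype.mem_piFinset.2 fun i => ?_
      by_cases hii : i = i₀
      · rw [hii, Function.update_self]; exact hpA
      · rw [Function.update_of_ne hii]
        exact Fintype.mem_piFinset.1 hxA i
    · rw [hammingDist]
      rw [show ({i | x i ≠ Function.update x i₀ p.2 i} : Finset (Fin n)) = {i₀} from ?_]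
      · exact card_singleton i₀
      · ext i
        simp only [mem_filter, mem_univ, true_and, mem_singleton]
        constructor
        · intro hne
          by_contra hii
          exact hne (by rw [Function.update_of_ne hii])
        · rintro rfl
          rw [Function.update_self, hxi₀]
          exact fun hcon => hpa hcon.symm
    · rw [hFx]
      have : FF n s hn a₀ (Function.update x i₀ p.2) = 0 := by
        refine FF_val_zero hn ?_
        rintro ⟨j, hj, hfull⟩
        by_cases hj0 : j = 0
        · subst hj0
          have := hfull p.1 hp1'
          rw [← hi₀, Function.update_self] at this
          exact hpa this
        · have hne : idx n s hn j 0 ≠ i₀ := by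
            rw [hi₀]
            intro hcon
            exact hj0 (idx_inj hn hsn hj hs0 hs0 hp1' hcon).1
          have h1 := hfull 0 hs0
          rw [Function.update_of_ne hne] at h1
          have h2 : ¬ (idx n s hn j 0).val < s := by
            rw [idx_val hn hsn hj hs0, add_zero]
            intro hcon
            have hle : s ≤ j * s := Nat.le_mul_of_pos_left s (by omega)
            omega
          have h1' : (if (idx n s hn j 0).val < s then a₀ else b) = a₀ := h1
          rw [if_neg h2] at h1'
          exact hab h1'
      rw [this]
      norm_num
  rw [← hYcard]
  exact Finset.card_le_card hYsub


/-- Near-tightness of the sensitivity lower bound: for `A ⊆ ℝ` with `|A| = m ≥ 2`,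
`s ≥ 1` and `n ≥ s²`, there is a function `F : Aⁿ → {0,1}` with `deg F = (m-1)s²` and
`s(F) = (m-1)s`; in particular `s(F) = √((m-1)·deg F)`. -/
theorem sensitivity_upper_bound_tight (m s n : ℕ) (A : Finset ℝ) (hA : A.card = m)
    (hm : 2 ≤ m) (hs : 1 ≤ s) (hn : s ^ 2 ≤ n) :
    ∃ F : (Fin n → ℝ) → ℝ,
      (∀ x : Fin n → ℝ, (∀ i, x i ∈ A) → F x = 0 ∨ F x = 1) ∧
      fdeg (fun _ => A) F = (m - 1) * s ^ 2 ∧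
      sens A F = (m - 1) * s := by
  subst hA
  have hm' : 2 ≤ A.card := hm
  have hn0 : 0 < n := lt_of_lt_of_le (by positivity) hn
  obtain ⟨a₀, ha⟩ : A.Nonempty := card_pos.1 (by omega)
  obtain ⟨b, hb'⟩ : (A.erase a₀).Nonempty := card_pos.1 (by rw [card_erase_of_mem ha]; omega)
  have hbA : b ∈ A := (mem_erase.1 hb').2
  have hba : b ≠ a₀ := (mem_erase.1 hb').1
  refine ⟨FF n s hn0 a₀, ?_, ?_, ?_⟩
  · intro x hx
    by_cases h : ∃ j < s, ∀ r < s, x (idx n s hn0 j r) = a₀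
    · right; exact FF_val_one hn0 h
    · left; exact FF_val_zero hn0 h
  · have hrepP : ∀ x : Fin n → ℝ, (∀ i, x i ∈ (fun _ => A) i) →
        MvPolynomial.eval x (PP A a₀ n s hn0) = FF n s hn0 a₀ x := fun x hx => eval_PP hn0 hx
    have hlow := deg_lower ha hm' hs hn hn0 (PP A a₀ n s hn0) hrepP
    have hup := totalDegree_PP ha hn0 (s := s)
    have htd : (PP A a₀ n s hn0).totalDegree = (A.card - 1) * s ^ 2 := le_antisymm hup hlow
    apply le_antisymm
    · exact Nat.sInf_le ⟨PP A a₀ n s hn0, htd, hrepP⟩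
    · refine le_csInf ⟨_, ⟨PP A a₀ n s hn0, htd, hrepP⟩⟩ ?_
      rintro k ⟨p, hpk, hrep⟩
      exact hpk ▸ deg_lower ha hm' hs hn hn0 p hrep
  · apply le_antisymm
    · exact Finset.sup_le fun x hx => locSens_le ha hm' hs hn hn0 x hx
    · obtain ⟨x, hxA, hge⟩ := locSens_ge ha hbA hba hs hn hn0
      exact le_trans hge (Finset.le_sup hxA)
end

section
/- Let A ⊂ ℝ be a finite set with |A| = m ≥ 2, let n ≥ 1, and let f : A^n → {0,1} be a function of degree d. Then there exist two-element subsets A_1, …, A_n ⊆ A such that the restriction of f to A_1 × ⋯ × A_n has degree at least ⌈d/(m−1)⌉. -/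
open Finset MvPolynomial

section Aux

lemma grid_eq_zero : ∀ {n : ℕ} (A : Finset ℝ) (q : MvPolynomial (Fin n) ℝ),
    (∀ i, degreeOf i q < A.card) →
    (∀ v : Fin n → ℝ, (∀ i, v i ∈ A) → eval v q = 0) → q = 0 := by
  intro n
  induction n with
  | zero =>
    intro A q hdeg hval
    have := hval (fun i => i.elim0) (fun i => i.elim0)
    rw [eq_C_of_isEmpty q] at this ⊢
    rw [eval_C] at this
    rw [this]; simp
  | succ n ih =>
    intro A q hdeg hval
    have hQ : finSuccEquiv ℝ n q = 0 := by
      apply Polynomial.ext; intro j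
      rw [Polynomial.coeff_zero]
      apply ih A
      · intro i
        exact lt_of_le_of_lt (degreeOf_coeff_finSuccEquiv q i j) (hdeg i.succ)
      · intro v hv
        have hP : Polynomial.map (eval v) (finSuccEquiv ℝ n q) = 0 := by
          apply Polynomial.eq_zero_of_natDegree_lt_card_of_eval_eq_zero' _ A
          · intro y hy
            rw [← eval_eq_eval_mv_eval']
            refine hval _ ?_
            intro i
            refine Fin.cases (by simpa using hy) (fun j => by simpa using hv j) i
          · calc (Polynomial.map (eval v) (finSuccEquiv ℝ n q)).natDegree
                ≤ (finSuccEquiv ℝ n q).natDegree := Polynomial.natDegree_map_le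
              _ = degreeOf 0 q := natDegree_finSuccEquiv q
              _ < A.card := hdeg 0
        have := congrArg (fun P => Polynomial.coeff P j) hP
        simpa using this
    have : q = (finSuccEquiv ℝ n).symm 0 := by
      rw [← hQ]; simp
    simpa using this

lemma grid_exists_sum {n : ℕ} (A : Finset ℝ) (Q : MvPolynomial (Fin n ⊕ Fin n) ℝ)
    (hdeg : ∀ s, degreeOf s Q < A.card) (hQ : Q ≠ 0) :
    ∃ v : Fin n ⊕ Fin n → ℝ, (∀ s, v s ∈ A) ∧ eval v Q ≠ 0 := by
  by_contra hcon
  push_neg at hcon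
  apply hQ
  set e : Fin n ⊕ Fin n ≃ Fin (n + n) := finSumFinEquiv
  have h0 : rename e Q = 0 := by
    apply grid_eq_zero A
    · intro i
      have := degreeOf_rename_of_injective (p := Q) (f := e) e.injective (e.symm i)
      rw [e.apply_symm_apply] at this
      rw [this]
      exact hdeg _
    · intro v hv
      rw [eval_rename]
      exact hcon (v ∘ e) (fun s => hv (e s))
  exact (rename_injective e e.injective).eq_iff.mp (by simpa using h0)

noncomputable def subst1 {n : ℕ} (i : Fin n) (c : ℝ) :
    MvPolynomial (Fin n) ℝ →ₐ[ℝ] MvPolynomial (Fin n) ℝ :=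
  aeval (fun j => if j = i then C c else X j)

lemma eval_subst1 {n : ℕ} (i : Fin n) (c : ℝ) (q : MvPolynomial (Fin n) ℝ)
    (z : Fin n → ℝ) :
    eval z (subst1 i c q) = eval (Function.update z i c) q := by
  classical
  rw [subst1, aeval_def, eval_eval₂]
  have h1 : ((eval z).comp (algebraMap ℝ (MvPolynomial (Fin n) ℝ))) = (RingHom.id ℝ) := by
    ext r; simp [algebraMap_eq]
  rw [h1]
  rw [eval₂_id]
  have h2 : (fun s => eval z (if s = i then (C c : MvPolynomial (Fin n) ℝ) else X s))
      = Function.update z i c := by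
    funext j
    by_cases hj : j = i <;> simp [hj, Function.update]
  rw [h2]

lemma subst1_monomial {n : ℕ} (i : Fin n) (c : ℝ) (d : Fin n →₀ ℕ) (r : ℝ) :
    subst1 i c (monomial d r) = monomial (d.erase i) (r * c ^ d i) := by
  classical
  rw [subst1, aeval_monomial, monomial_eq]
  rw [Finsupp.prod]
  by_cases hi : i ∈ d.support
  · rw [← Finset.prod_erase_mul _ _ hi]
    have hsup : (d.erase i).support = d.support.erase i := Finsupp.support_erase
    rw [Finsupp.prod, hsup]
    have : ∀ j ∈ d.support.erase i, (if j = i then (C c : MvPolynomial (Fin n) ℝ) else X j) ^ d j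
        = X j ^ (d.erase i) j := by
      intro j hj
      have hji : j ≠ i := Finset.ne_of_mem_erase hj
      simp [hji, Finsupp.erase_ne hji]
    rw [Finset.prod_congr rfl this]
    simp only [algebraMap_eq, if_true, eq_self_iff_true]
    rw [← C_pow, C_mul]
    ring
  · have hd0 : d i = 0 := Finsupp.notMem_support_iff.mp hi
    have her : d.erase i = d := by
      ext j
      by_cases hj : j = i <;> simp [Finsupp.erase_ne, hj, Finsupp.erase_same, hd0]
    rw [her, hd0, pow_zero, mul_one, Finsupp.prod]
    have : ∀ j ∈ d.support, (if j = i then (C c : MvPolynomial (Fin n) ℝ) else X j) ^ d j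
        = X j ^ d j := by
      intro j hj
      have hji : j ≠ i := by rintro rfl; exact hi hj
      simp [hji]
    rw [Finset.prod_congr rfl this]
    simp [algebraMap_eq]

lemma subst1_sub_eq {n : ℕ} (i : Fin n) (a b : ℝ) (q : MvPolynomial (Fin n) ℝ) :
    subst1 i a q - subst1 i b q =
      ∑ e ∈ q.support, monomial (e.erase i) (coeff e q * (a ^ e i - b ^ e i)) := by
  classical
  conv_lhs => rw [q.as_sum]
  rw [map_sum, map_sum, ← Finset.sum_sub_distrib]
  apply Finset.sum_congr rfl
  intro e _
  rw [subst1_monomial, subst1_monomial, ← map_sub]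
  ring_nf

lemma totalDegree_subst1_sub {n : ℕ} (i : Fin n) (a b : ℝ) (q : MvPolynomial (Fin n) ℝ) :
    (subst1 i a q - subst1 i b q).totalDegree ≤ q.totalDegree - 1 := by
  classical
  rw [subst1_sub_eq]
  refine (totalDegree_finset_sum _ _).trans ?_
  apply Finset.sup_le
  intro e he
  by_cases h0 : e i = 0
  · simp [h0]
  · refine (totalDegree_monomial_le _ _).trans ?_
    rw [Finsupp.sum, Finsupp.support_erase]
    simp only [id_eq]
    have h1 : ∑ j ∈ e.support.erase i, (Finsupp.erase i e) j = ∑ j ∈ e.support.erase i, e j := by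
      refine Finset.sum_congr rfl (fun j hj => ?_)
      rw [Finsupp.erase_ne (Finset.ne_of_mem_erase hj)]
    rw [h1]
    have hmem : i ∈ e.support := Finsupp.mem_support_iff.mpr h0
    have h2 : e i + ∑ j ∈ e.support.erase i, e j = e.sum fun _ k => k := by
      rw [Finsupp.sum]
      exact Finset.add_sum_erase _ _ hmem
    have h3 : e.sum (fun _ k => k) ≤ q.totalDegree := le_totalDegree he
    omega

lemma diff_zero {n : ℕ} (a b : Fin n → ℝ) (S : Finset (Fin n)) :
    ∀ (q : MvPolynomial (Fin n) ℝ), q.totalDegree < S.card →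
    ∑ T ∈ S.powerset, (-1 : ℝ) ^ T.card * eval (fun j => if j ∈ T then b j else a j) q = 0 := by
  classical
  induction S using Finset.induction_on with
  | empty => intro q hq; simp at hq
  | @insert i S hiS ih =>
    intro q hq
    rw [Finset.sum_powerset_insert hiS]
    have key : ∀ T ∈ S.powerset,
        (-1 : ℝ) ^ T.card * eval (fun j => if j ∈ T then b j else a j) q
        + (-1 : ℝ) ^ (insert i T).card * eval (fun j => if j ∈ insert i T then b j else a j) q
        = (-1 : ℝ) ^ T.card *
            eval (fun j => if j ∈ T then b j else a j) (subst1 i (a i) q - subst1 i (b i) q) := by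
      intro T hT
      have hiT : i ∉ T := fun h => hiS (Finset.mem_powerset.mp hT h)
      have hc : (insert i T).card = T.card + 1 := Finset.card_insert_of_notMem hiT
      set z : Fin n → ℝ := fun j => if j ∈ T then b j else a j with hz
      have e1 : (fun j => if j ∈ T then b j else a j) = Function.update z i (a i) := by
        funext j
        by_cases hj : j = i
        · subst hj; simp [Function.update, hz, hiT]
        · simp [Function.update, hj, hz]
      have e2 : (fun j => if j ∈ insert i T then b j else a j) = Function.update z i (b i) := by
        funext j
        by_cases hj : j = i
        · subst hj; simp [Function.update, hz]
        · simp [Function.update, hj, Finset.mem_insert, hz]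
      rw [map_sub, eval_subst1, eval_subst1, ← e1, ← e2, hc]
      ring
    rw [← Finset.sum_add_distrib, Finset.sum_congr rfl key]
    have hcard : #(insert i S) = #S + 1 := Finset.card_insert_of_notMem hiS
    rw [hcard] at hq
    by_cases hdq : q.totalDegree = 0
    · have hq0 : subst1 i (a i) q - subst1 i (b i) q = 0 := by
        rw [subst1_sub_eq]
        apply Finset.sum_eq_zero
        intro e he
        have h6 := (totalDegree_eq_zero_iff _ q).mp hdq e he i
        simp [h6]
      rw [hq0]
      simp
    · refine ih (subst1 i (a i) q - subst1 i (b i) q) ?_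
      have h5 := totalDegree_subst1_sub i (a i) (b i) q
      omega

lemma diff_cancel {n : ℕ} (a b : Fin n → ℝ) (S : Finset (Fin n)) (i : Fin n) (hi : i ∈ S)
    (hab : a i = b i) (g : (Fin n → ℝ) → ℝ) :
    ∑ T ∈ S.powerset, (-1 : ℝ) ^ T.card * g (fun j => if j ∈ T then b j else a j) = 0 := by
  classical
  have hS : S = insert i (S.erase i) := (Finset.insert_erase hi).symm
  rw [hS, Finset.sum_powerset_insert (Finset.notMem_erase i S)]
  rw [← Finset.sum_add_distrib]
  apply Finset.sum_eq_zero
  intro T hT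
  have hiT : i ∉ T := fun h => (Finset.notMem_erase i S) (Finset.mem_powerset.mp hT h)
  have hfun : (fun j => if j ∈ insert i T then b j else a j)
      = (fun j => if j ∈ T then b j else a j) := by
    funext j
    by_cases hj : j = i
    · subst hj; simp [hiT, hab]
    · simp [Finset.mem_insert, hj]
  rw [hfun, Finset.card_insert_of_notMem hiT]
  ring

-- univariate remainders
noncomputable def uA (A : Finset ℝ) (k : ℕ) : Polynomial ℝ :=
  (Polynomial.X ^ k) %ₘ (∏ c ∈ A, (Polynomial.X - Polynomial.C c))

lemma vA_monic (A : Finset ℝ) : (∏ c ∈ A, (Polynomial.X - Polynomial.C c)).Monic :=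
  Polynomial.monic_prod_of_monic _ _ (fun c _ => Polynomial.monic_X_sub_C c)

lemma vA_natDegree (A : Finset ℝ) : (∏ c ∈ A, (Polynomial.X - Polynomial.C c)).natDegree = A.card := by
  rw [Polynomial.natDegree_prod _ _ (fun c _ => Polynomial.X_sub_C_ne_zero c)]
  simp

lemma uA_natDegree_lt (A : Finset ℝ) (hA : A.Nonempty) (k : ℕ) :
    (uA A k).natDegree < A.card := by
  by_cases h0 : uA A k = 0
  · rw [h0]
    simpa using Finset.card_pos.mpr hA
  · have := Polynomial.degree_modByMonic_lt (Polynomial.X ^ k) (vA_monic A)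
    rw [← vA_natDegree A]
    exact Polynomial.natDegree_lt_natDegree h0 (by
      rw [Polynomial.degree_eq_natDegree (vA_monic A).ne_zero] at this ⊢
      exact this)

lemma uA_natDegree_le (A : Finset ℝ) (hA : A.Nonempty) (k : ℕ) :
    (uA A k).natDegree ≤ k := by
  rcases lt_or_ge k A.card with h | h
  · rw [uA, (Polynomial.modByMonic_eq_self_iff (vA_monic A)).mpr]
    · simp
    · rw [Polynomial.degree_eq_natDegree (vA_monic A).ne_zero, vA_natDegree]
      calc (Polynomial.X ^ k : Polynomial ℝ).degree ≤ k := Polynomial.degree_pow_le _ _ |>.trans (by simp)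
        _ < A.card := by exact_mod_cast h
  · exact le_trans (Nat.le_of_lt (uA_natDegree_lt A hA k)) h

lemma uA_eval (A : Finset ℝ) (k : ℕ) {c : ℝ} (hc : c ∈ A) :
    (uA A k).eval c = c ^ k := by
  have h := Polynomial.modByMonic_add_div (Polynomial.X ^ k) (∏ c ∈ A, (Polynomial.X - Polynomial.C c))
  have : (uA A k).eval c + ((∏ c ∈ A, (Polynomial.X - Polynomial.C c)).eval c)
      * ((Polynomial.X ^ k) /ₘ (∏ c ∈ A, (Polynomial.X - Polynomial.C c))).eval c = c ^ k := by
    have := congrArg (Polynomial.eval c) h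
    simpa [uA] using this
  have hz : (∏ a ∈ A, (Polynomial.X - Polynomial.C a)).eval c = 0 := by
    rw [Polynomial.eval_prod]
    exact Finset.prod_eq_zero hc (by simp)
  rw [hz, zero_mul, add_zero] at this
  exact this

noncomputable def wA {n : ℕ} (A : Finset ℝ) (i : Fin n) (k : ℕ) : MvPolynomial (Fin n) ℝ :=
  Polynomial.aeval (X i) (uA A k)

lemma eval_wA {n : ℕ} (A : Finset ℝ) (i : Fin n) (k : ℕ) (x : Fin n → ℝ) :
    eval x (wA A i k) = (uA A k).eval (x i) := by
  have h1 : eval x (wA A i k) = (MvPolynomial.aeval x) (Polynomial.aeval (X i : MvPolynomial (Fin n) ℝ) (uA A k)) := by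
    rw [← MvPolynomial.coe_aeval_eq_eval]; rfl
  rw [h1, ← Polynomial.aeval_algHom_apply, aeval_X, ← Polynomial.coe_aeval_eq_eval]

lemma degreeOf_wA_ne {n : ℕ} (A : Finset ℝ) (i j : Fin n) (k : ℕ) (hij : j ≠ i) :
    degreeOf j (wA A i k) = 0 := by
  rw [wA, Polynomial.aeval_eq_sum_range]
  refine Nat.eq_zero_of_le_zero ?_
  refine (degreeOf_sum_le _ _ _).trans ?_
  apply Finset.sup_le
  intro t _
  rw [smul_eq_C_mul]
  refine (degreeOf_mul_le _ _ _).trans ?_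
  have h1 : degreeOf j (C ((uA A k).coeff t) : MvPolynomial (Fin n) ℝ) = 0 := degreeOf_C _ _
  have h2 : degreeOf j ((X i : MvPolynomial (Fin n) ℝ) ^ t) = 0 := by
    refine Nat.eq_zero_of_le_zero ?_
    refine (degreeOf_pow_le _ _ _).trans ?_
    classical
    simp [degreeOf_X, hij]
  omega

lemma degreeOf_wA_self {n : ℕ} (A : Finset ℝ) (i : Fin n) (k : ℕ) :
    degreeOf i (wA A i k) ≤ (uA A k).natDegree := by
  refine (degreeOf_le_totalDegree _ _).trans ?_
  rw [wA, Polynomial.aeval_eq_sum_range]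
  refine (totalDegree_finset_sum _ _).trans ?_
  apply Finset.sup_le
  intro t ht
  rw [smul_eq_C_mul]
  refine (totalDegree_mul _ _).trans ?_
  have : totalDegree ((X i : MvPolynomial (Fin n) ℝ) ^ t) ≤ t := by
    simpa using totalDegree_pow (X i : MvPolynomial (Fin n) ℝ) t
  have ht' : t ≤ (uA A k).natDegree := Nat.lt_succ_iff.mp (Finset.mem_range.mp ht)
  simp only [totalDegree_C]
  omega

lemma totalDegree_wA {n : ℕ} (A : Finset ℝ) (i : Fin n) (k : ℕ) :
    totalDegree (wA A i k) ≤ (uA A k).natDegree := by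
  rw [wA, Polynomial.aeval_eq_sum_range]
  refine (totalDegree_finset_sum _ _).trans ?_
  apply Finset.sup_le
  intro t ht
  rw [smul_eq_C_mul]
  refine (totalDegree_mul _ _).trans ?_
  have : totalDegree ((X i : MvPolynomial (Fin n) ℝ) ^ t) ≤ t := by
    simpa using totalDegree_pow (X i : MvPolynomial (Fin n) ℝ) t
  have ht' : t ≤ (uA A k).natDegree := Nat.lt_succ_iff.mp (Finset.mem_range.mp ht)
  simp only [totalDegree_C]
  omega

lemma reduce_exists {n : ℕ} (A : Finset ℝ) (hA : A.Nonempty) (p : MvPolynomial (Fin n) ℝ) :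
    ∃ p' : MvPolynomial (Fin n) ℝ, (∀ i, degreeOf i p' ≤ A.card - 1) ∧
      p'.totalDegree ≤ p.totalDegree ∧
      ∀ x : Fin n → ℝ, (∀ i, x i ∈ A) → eval x p' = eval x p := by
  classical
  refine ⟨∑ e ∈ p.support, C (coeff e p) * ∏ i : Fin n, wA A i (e i), ?_, ?_, ?_⟩
  · intro j
    refine (degreeOf_sum_le _ _ _).trans ?_
    apply Finset.sup_le
    intro e _
    refine (degreeOf_mul_le _ _ _).trans ?_
    rw [degreeOf_C]
    have h1 : degreeOf j (∏ i : Fin n, wA A i (e i)) ≤ ∑ i : Fin n, degreeOf j (wA A i (e i)) :=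
      degreeOf_prod_le _ _ _
    have h2 : ∑ i : Fin n, degreeOf j (wA A i (e i)) ≤ A.card - 1 := by
      rw [← Finset.sum_erase_add _ _ (Finset.mem_univ j)]
      have h3 : ∑ i ∈ Finset.univ.erase j, degreeOf j (wA A i (e i)) = 0 := by
        apply Finset.sum_eq_zero
        intro i hi
        exact degreeOf_wA_ne A i j _ (Ne.symm (Finset.ne_of_mem_erase hi))
      rw [h3, zero_add]
      have h6 := degreeOf_wA_self A j (e j)
      have h7 := uA_natDegree_lt A hA (e j)
      omega
    omega
  · refine (totalDegree_finset_sum _ _).trans ?_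
    apply Finset.sup_le
    intro e he
    refine (totalDegree_mul _ _).trans ?_
    rw [totalDegree_C]
    have h1 : totalDegree (∏ i : Fin n, wA A i (e i)) ≤ ∑ i : Fin n, (uA A (e i)).natDegree :=
      (totalDegree_finset_prod _ _).trans (Finset.sum_le_sum (fun i _ => totalDegree_wA A i (e i)))
    have h2 : ∑ i : Fin n, (uA A (e i)).natDegree ≤ ∑ i : Fin n, e i :=
      Finset.sum_le_sum (fun i _ => uA_natDegree_le A hA (e i))
    have h3 : ∑ i : Fin n, e i = e.sum fun _ k => k := by
      rw [Finsupp.sum]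
      exact (Finset.sum_subset (Finset.subset_univ _) (by
        intro i _ hi
        exact Finsupp.notMem_support_iff.mp hi)).symm
    have h4 : (e.sum fun _ k => k) ≤ p.totalDegree := le_totalDegree he
    omega
  · intro x hx
    rw [eval_sum]
    conv_rhs => rw [p.as_sum, eval_sum]
    apply Finset.sum_congr rfl
    intro e _
    rw [eval_mul, eval_C, eval_prod, eval_monomial]
    congr 1
    rw [Finsupp.prod]
    have h5 : ∀ i : Fin n, eval x (wA A i (e i)) = (x i) ^ (e i) := by
      intro i
      rw [eval_wA, uA_eval A _ (hx i)]
    rw [Finset.prod_congr rfl (fun i _ => h5 i)]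
    exact (Finset.prod_subset (Finset.subset_univ _) (by
      intro i _ hi
      rw [Finsupp.notMem_support_iff.mp hi, pow_zero])).symm

end Aux

/-- the renaming used for the `T`-th term of the difference polynomial -/
def gT {n : ℕ} (T : Finset (Fin n)) : Fin n → Fin n ⊕ Fin n :=
  fun i => if i ∈ T then Sum.inr i else Sum.inl i

lemma gT_injective {n : ℕ} (T : Finset (Fin n)) : Function.Injective (gT T) := by
  intro i j h
  unfold gT at h
  by_cases hi : i ∈ T <;> by_cases hj : j ∈ T <;> simp [hi, hj] at h <;> exact h

/-- Let `A ⊆ ℝ` with `|A| = m ≥ 2`, `n ≥ 1`, and let `f : Aⁿ → {0,1}` have degree `d`.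
Then there are two-element subsets `A₁, …, Aₙ ⊆ A` such that the restriction of `f` to
`A₁ × ⋯ × Aₙ` has degree at least `⌈d/(m-1)⌉` (i.e. `(d + m - 2)/(m-1)` in
natural-number division). -/
theorem restriction_degree (m n : ℕ) (A : Finset ℝ) (hA : A.card = m) (hm : 2 ≤ m)
    (hn : 1 ≤ n) (f : (Fin n → ℝ) → ℝ)
    (hf : ∀ x : Fin n → ℝ, (∀ i, x i ∈ A) → f x = 0 ∨ f x = 1)
    (d : ℕ) (hd : fdeg (fun _ => A) f = d) :
    ∃ Asets : Fin n → Finset ℝ,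
      (∀ i, Asets i ⊆ A ∧ (Asets i).card = 2) ∧
      (d + (m - 1) - 1) / (m - 1) ≤ fdeg Asets f := by
  classical
  subst hA
  -- two distinct elements of A for the trivial cases
  obtain ⟨a₀, ha₀, b₀, hb₀, hab₀⟩ := Finset.one_lt_card.mp (by omega : 1 < A.card)
  rcases Nat.eq_zero_or_pos d with hd0 | hdpos
  · subst hd0
    refine ⟨fun _ => {a₀, b₀}, fun i => ⟨?_, Finset.card_pair hab₀⟩, ?_⟩
    · intro x hx
      rcases Finset.mem_insert.mp hx with h | h
      · exact h ▸ ha₀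
      · exact (Finset.mem_singleton.mp h) ▸ hb₀
    · have : (0 + (A.card - 1) - 1) / (A.card - 1) = 0 := Nat.div_eq_of_lt (by omega)
      rw [this]
      exact Nat.zero_le _
  -- the degree-`d` representing polynomial
  have hAne : A.Nonempty := ⟨a₀, ha₀⟩
  set SA := {k | ∃ p : MvPolynomial (Fin n) ℝ, p.totalDegree = k ∧
    ∀ x : Fin n → ℝ, (∀ i, x i ∈ A) → MvPolynomial.eval x p = f x} with hSA
  have hdSA : sInf SA = d := hd
  have hSAne : SA.Nonempty := by
    by_contra h
    rw [Set.not_nonempty_iff_eq_empty] at h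
    rw [h, Nat.sInf_empty] at hdSA
    omega
  obtain ⟨p₀, hp₀deg, hp₀rep⟩ : d ∈ SA := hdSA ▸ Nat.sInf_mem hSAne
  obtain ⟨p, hpdegof, hpdeg, hpval⟩ := reduce_exists A hAne p₀
  have hprep : ∀ x : Fin n → ℝ, (∀ i, x i ∈ A) → eval x p = f x :=
    fun x hx => (hpval x hx).trans (hp₀rep x hx)
  have hpdeg' : p.totalDegree = d := by
    have h1 : p.totalDegree ∈ SA := ⟨p, rfl, hprep⟩
    have h2 := Nat.sInf_le h1
    rw [hdSA] at h2
    omega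
  have hpne : p ≠ 0 := by
    intro h
    rw [h, totalDegree_zero] at hpdeg'
    omega
  -- top monomial
  obtain ⟨e, he, hesum⟩ := Finset.exists_mem_eq_sup p.support
    (support_nonempty.mpr hpne) (fun s => s.sum fun _ k => k)
  have hesum' : (e.sum fun _ k => k) = d := by rw [← hpdeg']; exact hesum.symm
  set S := e.support with hSdef
  have hei : ∀ i, e i ≤ A.card - 1 := by
    intro i
    have h1 : e i ≤ degreeOf i p := by
      rw [degreeOf_eq_sup]
      exact Finset.le_sup (f := fun m => m i) he
    exact h1.trans (hpdegof i)
  have hdS : d ≤ S.card * (A.card - 1) := by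
    rw [← hesum', Finsupp.sum]
    calc ∑ i ∈ S, e i ≤ ∑ _i ∈ S, (A.card - 1) := Finset.sum_le_sum (fun i _ => hei i)
      _ = S.card * (A.card - 1) := by rw [Finset.sum_const, smul_eq_mul]
  -- the difference polynomial in 2n variables
  set Q : MvPolynomial (Fin n ⊕ Fin n) ℝ :=
    ∑ T ∈ S.powerset, C ((-1 : ℝ) ^ T.card) * rename (gT T) p with hQdef
  have hQdeg : ∀ s, degreeOf s Q < A.card := by
    intro s
    have h1 : degreeOf s Q ≤ A.card - 1 := by
      refine (degreeOf_sum_le _ _ _).trans ?_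
      apply Finset.sup_le
      intro T _
      refine (degreeOf_C_mul_le _ _ _).trans ?_
      rw [degreeOf_le_iff]
      intro μ hμ
      have hc : coeff μ (rename (gT T) p) ≠ 0 := mem_support_iff.mp hμ
      obtain ⟨u, hu, hcu⟩ := coeff_rename_ne_zero _ _ _ hc
      by_cases hs : s ∈ Set.range (gT T)
      · obtain ⟨i, rfl⟩ := hs
        rw [← hu, Finsupp.mapDomain_apply (gT_injective T)]
        have h2 : u i ≤ degreeOf i p := by
          rw [degreeOf_eq_sup]
          exact Finset.le_sup (f := fun m => m i) (mem_support_iff.mpr hcu)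
        exact h2.trans (hpdegof i)
      · rw [← hu, Finsupp.mapDomain_notin_range _ _ hs]
        exact Nat.zero_le _
    omega
  have hQne : Q ≠ 0 := by
    intro h
    have hco : coeff (Finsupp.mapDomain Sum.inl e) Q = coeff e p := by
      rw [hQdef, coeff_sum]
      have hmain : ∀ T ∈ S.powerset, T ≠ ∅ →
          coeff (Finsupp.mapDomain Sum.inl e) (C ((-1 : ℝ) ^ T.card) * rename (gT T) p) = 0 := by
        intro T hT hTne
        rw [coeff_C_mul]
        obtain ⟨i, hiT⟩ := Finset.nonempty_iff_ne_empty.mpr hTne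
        have hiS : i ∈ S := Finset.mem_powerset.mp hT hiT
        have hzero : coeff (Finsupp.mapDomain Sum.inl e) (rename (gT T) p) = 0 := by
          by_contra hc
          obtain ⟨u, hu, hcu⟩ := coeff_rename_ne_zero _ _ _ hc
          have hr : (Sum.inl i : Fin n ⊕ Fin n) ∉ Set.range (gT T) := by
            rintro ⟨j, hj⟩
            unfold gT at hj
            by_cases hjT : j ∈ T
            · simp [hjT] at hj
            · simp [hjT] at hj
              exact hjT (hj ▸ hiT)
          have h1 := congrFun (congrArg (fun g => g.toFun) hu) (Sum.inl i)
          have h2 : Finsupp.mapDomain (gT T) u (Sum.inl i) = 0 :=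
            Finsupp.mapDomain_notin_range _ _ hr
          have h3 : Finsupp.mapDomain (Sum.inl : Fin n → Fin n ⊕ Fin n) e (Sum.inl i) = e i :=
            Finsupp.mapDomain_apply Sum.inl_injective e i
          have h4 : Finsupp.mapDomain (gT T) u (Sum.inl i)
              = Finsupp.mapDomain (Sum.inl : Fin n → Fin n ⊕ Fin n) e (Sum.inl i) := by rw [hu]
          rw [h2, h3] at h4
          exact (Finsupp.mem_support_iff.mp hiS) h4.symm
        rw [hzero, mul_zero]
      rw [Finset.sum_eq_single_of_mem ∅
        (Finset.mem_powerset.mpr (Finset.empty_subset S)) hmain]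
      have hg : gT (∅ : Finset (Fin n)) = Sum.inl := by
        funext i; simp [gT]
      rw [hg, coeff_C_mul, coeff_rename_mapDomain _ Sum.inl_injective]
      simp
    rw [h, coeff_zero] at hco
    exact (mem_support_iff.mp he) hco.symm
  obtain ⟨v, hvA, hvQ⟩ := grid_exists_sum A Q hQdeg hQne
  set a : Fin n → ℝ := fun i => v (Sum.inl i) with hadef
  set b : Fin n → ℝ := fun i => v (Sum.inr i) with hbdef
  have hvcomp : ∀ T : Finset (Fin n), v ∘ gT T = fun j => if j ∈ T then b j else a j := by
    intro T
    funext j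
    by_cases hj : j ∈ T <;> simp [gT, hj, Function.comp, hadef, hbdef]
  have heval : eval v Q
      = ∑ T ∈ S.powerset, (-1 : ℝ) ^ T.card * eval (fun j => if j ∈ T then b j else a j) p := by
    rw [hQdef, eval_sum]
    apply Finset.sum_congr rfl
    intro T _
    rw [eval_mul, eval_C, eval_rename, hvcomp]
  have hne : ∑ T ∈ S.powerset, (-1 : ℝ) ^ T.card
      * eval (fun j => if j ∈ T then b j else a j) p ≠ 0 := heval ▸ hvQ
  have habS : ∀ i ∈ S, a i ≠ b i := by
    intro i hi hab
    exact hne (diff_cancel a b S i hi hab (fun z => eval z p))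
  have hexy : ∀ i : Fin n, ∃ c ∈ A, c ≠ a i :=
    fun i => Finset.exists_mem_ne (by omega) (a i)
  choose y hyA hyne using hexy
  refine ⟨fun i => if i ∈ S then {a i, b i} else {a i, y i}, ?_, ?_⟩
  · intro i
    constructor
    · intro x hx
      by_cases hi : i ∈ S <;> simp only [hi, if_true, if_false] at hx <;>
        rcases Finset.mem_insert.mp hx with h | h
      · exact h ▸ hvA (Sum.inl i)
      · exact (Finset.mem_singleton.mp h) ▸ hvA (Sum.inr i)
      · exact h ▸ hvA (Sum.inl i)
      · exact (Finset.mem_singleton.mp h) ▸ hyA i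
    · by_cases hi : i ∈ S
      · simp only [hi, if_true]
        exact Finset.card_pair (habS i hi)
      · simp only [hi, if_false]
        exact Finset.card_pair (Ne.symm (hyne i))
  · have hfd : S.card ≤ fdeg (fun i => if i ∈ S then {a i, b i} else {a i, y i}) f := by
      have hpt : ∀ T ∈ S.powerset, ∀ j : Fin n,
          (if j ∈ T then b j else a j) ∈ (if j ∈ S then ({a j, b j} : Finset ℝ) else {a j, y j}) := by
        intro T hT j
        by_cases hjT : j ∈ T
        · have hjS : j ∈ S := Finset.mem_powerset.mp hT hjT
          simp [hjT, hjS]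
        · by_cases hjS : j ∈ S <;> simp [hjT, hjS]
      have hptA : ∀ T ∈ S.powerset, ∀ j : Fin n, (if j ∈ T then b j else a j) ∈ A := by
        intro T _ j
        by_cases hjT : j ∈ T <;> simp only [hjT, if_true, if_false]
        · exact hvA (Sum.inr j)
        · exact hvA (Sum.inl j)
      rw [fdeg]
      apply le_csInf
      · exact ⟨p.totalDegree, p, rfl, fun x hx => hprep x (fun i => by
          have := hx i
          by_cases hi : i ∈ S <;> simp only [hi, if_true, if_false] at this <;>
            rcases Finset.mem_insert.mp this with h | h
          · exact h ▸ hvA (Sum.inl i)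
          · exact (Finset.mem_singleton.mp h) ▸ hvA (Sum.inr i)
          · exact h ▸ hvA (Sum.inl i)
          · exact (Finset.mem_singleton.mp h) ▸ hyA i)⟩
      · intro k hk
        obtain ⟨q, hqdeg, hqrep⟩ := hk
        by_contra hlt
        push_neg at hlt
        have hz := diff_zero a b S q (by rw [hqdeg]; exact hlt)
        have hsame : ∀ T ∈ S.powerset,
            (-1 : ℝ) ^ T.card * eval (fun j => if j ∈ T then b j else a j) q
            = (-1 : ℝ) ^ T.card * eval (fun j => if j ∈ T then b j else a j) p := by
          intro T hT
          rw [hqrep _ (hpt T hT), hprep _ (hptA T hT)]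
        rw [Finset.sum_congr rfl hsame] at hz
        exact hne hz
    refine le_trans ?_ hfd
    rw [Nat.div_le_iff_le_mul_add_pred (by omega : 0 < A.card - 1)]
    have h1 : S.card * (A.card - 1) = (A.card - 1) * S.card := mul_comm _ _
    omega
end
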